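/- arXiv:1405.4880 — 6 statements merged into one kernel-verified Lean document; each statement's English description precedes it below -/
import Mathlib

section
/- Let P be a finite poset and S a cutset of P (a set of elements meeting every maximal chain of P). Then e(P) ≤ ∑_{v ∈ S} e(P \ v). -/
/-- The number of linear extensions of a partial order `P` on a finite type `V`. -/
noncomputable def eCount (V : Type*) [Fintype V] (P : PartialOrder V) : ℕ :=
  Nat.card {f : V ≃ Fin (Fintype.card V) // ∀ a b, P.lt a b → f a < f b}

/-- The induced partial order `P \ v` on the ground set with the element `v` removed. -/
def delOrder {V : Type*} (P : PartialOrder V) (v : V) : PartialOrder {x : V // x ≠ v} where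
  le a b := P.le a b
  lt a b := P.lt a b
  lt_iff_le_not_ge a b := P.lt_iff_le_not_ge _ _
  le_refl a := P.le_refl a
  le_trans a b c := P.le_trans a b c
  le_antisymm a b h1 h2 := Subtype.ext (P.le_antisymm a b h1 h2)

/-- `S` is a cutset of `P`: it meets every maximal chain. -/
def IsCutset {V : Type*} (P : PartialOrder V) (S : Finset V) : Prop :=
  ∀ C : Set V, IsMaxChain P.le C → ∃ v ∈ S, v ∈ C

set_option linter.unusedSectionVars false
set_option maxHeartbeats 1600000

namespace CutsetAux

noncomputable section

open Classical

variable {V : Type*} [Fintype V] [DecidableEq V]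

def uppers (P : PartialOrder V) (c : V) : Finset V :=
  Finset.univ.filter (fun u => P.lt c u)

lemma mem_uppers {P : PartialOrder V} {c u : V} : u ∈ uppers P c ↔ P.lt c u := by
  simp [uppers]

def lowers (P : PartialOrder V) (c : V) : Finset V :=
  Finset.univ.filter (fun u => P.lt u c)

lemma mem_lowers {P : PartialOrder V} {c u : V} : u ∈ lowers P c ↔ P.lt u c := by
  simp [lowers]


-- partial order helper lemmas (P is a structure, not an instance)
lemma plt_le {P : PartialOrder V} {a b : V} (h : P.lt a b) : P.le a b :=
  ((P.lt_iff_le_not_ge a b).mp h).1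

lemma plt_irrefl {P : PartialOrder V} {a : V} (h : P.lt a a) : False := by
  have := (P.lt_iff_le_not_ge a a).mp h
  exact this.2 this.1

lemma plt_ne {P : PartialOrder V} {a b : V} (h : P.lt a b) : a ≠ b := by
  intro he; subst he; exact plt_irrefl h

lemma plt_of_le_ne {P : PartialOrder V} {a b : V} (h : P.le a b) (hne : a ≠ b) : P.lt a b := by
  rw [P.lt_iff_le_not_ge]
  refine ⟨h, fun h2 => hne (P.le_antisymm a b h h2)⟩

variable (P : PartialOrder V) (f : V ≃ Fin (Fintype.card V))

def nxt (c : V) : Option V :=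
  if h : ((uppers P c).image f).Nonempty then some (f.symm (((uppers P c).image f).min' h))
  else none

lemma nxt_eq_none_iff {c : V} : nxt P f c = none ↔ uppers P c = ∅ := by
  unfold nxt
  split_ifs with h
  · simp only [reduceCtorEq, false_iff]
    intro he
    rw [he] at h
    simp at h
  · simp only [true_iff]
    by_contra he
    exact h ((Finset.nonempty_iff_ne_empty.mpr he).image f)

lemma nxt_some_lt {c d : V} (h : nxt P f c = some d) : P.lt c d := by
  unfold nxt at h
  split_ifs at h with hne
  · obtain ⟨u, hu, hfu⟩ := Finset.mem_image.mp (Finset.min'_mem _ hne)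
    have : f.symm (((uppers P c).image f).min' hne) = u := by
      rw [← hfu]; exact f.symm_apply_apply u
    rw [Option.some_inj] at h
    rw [← h, this]
    exact mem_uppers.mp hu

lemma nxt_some_min {c d : V} (h : nxt P f c = some d) :
    ∀ w, P.lt c w → f d ≤ f w := by
  intro w hw
  unfold nxt at h
  split_ifs at h with hne
  · rw [Option.some_inj] at h
    have hfd : f d = ((uppers P c).image f).min' hne := by
      rw [← h]; exact f.apply_symm_apply _
    rw [hfd]
    exact Finset.min'_le _ _ (Finset.mem_image_of_mem f (mem_uppers.mpr hw))

variable [Nonempty V]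

def bot0 : V := f.symm ⟨0, Fintype.card_pos⟩

def cseq : ℕ → V
  | 0 => bot0 f
  | k+1 => (nxt P f (cseq k)).getD (cseq k)

lemma cseq_zero : cseq P f 0 = bot0 f := rfl
lemma cseq_succ (k : ℕ) : cseq P f (k+1) = (nxt P f (cseq P f k)).getD (cseq P f k) := rfl

lemma cseq_step (k : ℕ) :
    (cseq P f (k+1) = cseq P f k ∧ nxt P f (cseq P f k) = none) ∨
    nxt P f (cseq P f k) = some (cseq P f (k+1)) := by
  rw [cseq_succ]
  cases h : nxt P f (cseq P f k) with
  | none => exact Or.inl ⟨rfl, rfl⟩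
  | some d => exact Or.inr rfl

lemma pos_bot0 : (f (bot0 f) : ℕ) = 0 := by
  simp [bot0]

lemma no_lt_bot0 (hf : ∀ a b, P.lt a b → f a < f b) (w : V) : ¬ P.lt w (bot0 f) := by
  intro h
  have h3 : (f w : ℕ) < (f (bot0 f) : ℕ) := hf _ _ h
  have h2 : (f (bot0 f) : ℕ) = 0 := pos_bot0 f
  omega

-- Chunk 2 ------------------------------------------------------------------

/-- once `nxt` is `none`, the sequence is constant from then on -/
lemma cseq_stab {k : ℕ} (hk : nxt P f (cseq P f k) = none) :
    ∀ m, k ≤ m → cseq P f m = cseq P f k := by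
  intro m hm
  induction m with
  | zero =>
    have : k = 0 := by omega
    subst this; rfl
  | succ m ih =>
    rcases Nat.lt_or_ge k (m+1) with h1 | h1
    · have hkm : k ≤ m := by omega
      have hm' := ih hkm
      rw [cseq_succ, hm', hk]
      rfl
    · have : k = m + 1 := by omega
      subst this; rfl

lemma cseq_stab' {k : ℕ} (hk : cseq P f (k+1) = cseq P f k) :
    nxt P f (cseq P f k) = none := by
  rcases cseq_step P f k with ⟨_, h⟩ | h
  · exact h
  · exfalso
    have := nxt_some_lt P f h
    rw [hk] at this
    exact plt_irrefl this

/-- P.le-monotone in the index -/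
lemma cseq_mono : ∀ k m, k ≤ m → P.le (cseq P f k) (cseq P f m) := by
  intro k m hm
  induction m with
  | zero =>
    have : k = 0 := by omega
    subst this; exact P.le_refl _
  | succ m ih =>
    rcases Nat.lt_or_ge k (m+1) with h1 | h1
    · have h2 := ih (by omega)
      rcases cseq_step P f m with ⟨he, _⟩ | h
      · rw [he]; exact h2
      · exact P.le_trans _ _ _ h2 (plt_le (nxt_some_lt P f h))
    · have : k = m+1 := by omega
      subst this; exact P.le_refl _

/-- if the chain never stabilizes before `k`, then position of `cseq k` is at least `k` -/
lemma cseq_pos_ge (hf : ∀ a b, P.lt a b → f a < f b) :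
    ∀ k, (∀ m, m < k → cseq P f (m+1) ≠ cseq P f m) → k ≤ (f (cseq P f k) : ℕ) := by
  intro k
  induction k with
  | zero => intro _; omega
  | succ k ih =>
    intro h
    have h1 : k ≤ (f (cseq P f k) : ℕ) := ih (fun m hm => h m (by omega))
    have h2 : cseq P f (k+1) ≠ cseq P f k := h k (by omega)
    rcases cseq_step P f k with ⟨he, _⟩ | hs
    · exact absurd he h2
    · have := hf _ _ (nxt_some_lt P f hs)
      have h3 : (f (cseq P f k) : ℕ) < (f (cseq P f (k+1)) : ℕ) := this
      omega

/-- the chain value at time `card V` has no upper elements -/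
lemma top_no_upper (hf : ∀ a b, P.lt a b → f a < f b) (w : V) :
    ¬ P.lt (cseq P f (Fintype.card V)) w := by
  intro hw
  -- there must be a stabilization point m < card V
  by_cases hstab : ∀ m, m < Fintype.card V → cseq P f (m+1) ≠ cseq P f m
  · have := cseq_pos_ge P f hf (Fintype.card V) hstab
    have h2 : (f (cseq P f (Fintype.card V)) : ℕ) < Fintype.card V := (f _).isLt
    omega
  · push_neg at hstab
    obtain ⟨m, hm, he⟩ := hstab
    have hn := cseq_stab' P f he
    have hcon : cseq P f (Fintype.card V) = cseq P f m := cseq_stab P f hn _ (by omega)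
    have : uppers P (cseq P f m) = ∅ := (nxt_eq_none_iff P f).mp hn
    have hwm : w ∈ uppers P (cseq P f m) := mem_uppers.mpr (hcon ▸ hw)
    rw [this] at hwm
    exact absurd hwm (Finset.notMem_empty w)

/-- the range of the greedy chain is a maximal chain -/
lemma cseq_maxchain (hf : ∀ a b, P.lt a b → f a < f b) :
    IsMaxChain P.le (Set.range (cseq P f)) := by
  constructor
  · -- IsChain
    rintro x ⟨k, rfl⟩ y ⟨m, rfl⟩ hxy
    rcases Nat.le_total k m with h | h
    · exact Or.inl (cseq_mono P f k m h)
    · exact Or.inr (cseq_mono P f m k h)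
  · -- maximality
    intro t ht hsub
    by_contra hne
    -- there is z ∈ t \ range
    have : ∃ z, z ∈ t ∧ z ∉ Set.range (cseq P f) := by
      by_contra hz
      push_neg at hz
      exact hne (Set.Subset.antisymm hsub hz)
    obtain ⟨z, hzt, hznr⟩ := this
    have hzne : ∀ k, z ≠ cseq P f k := by
      intro k hk
      exact hznr ⟨k, hk.symm⟩
    -- z is comparable with every chain element
    have hcomp : ∀ k, P.lt (cseq P f k) z ∨ P.lt z (cseq P f k) := by
      intro k
      have hmem : cseq P f k ∈ t := hsub ⟨k, rfl⟩
      have := ht hmem hzt (Ne.symm (hzne k))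
      rcases this with h | h
      · exact Or.inl (plt_of_le_ne h (Ne.symm (hzne k)))
      · exact Or.inr (plt_of_le_ne h (hzne k))
    -- index set I
    have h0 : P.lt (cseq P f 0) z := by
      rcases hcomp 0 with h | h
      · exact h
      · exact absurd h (no_lt_bot0 P f hf z)
    set I : Finset ℕ := (Finset.range (Fintype.card V + 1)).filter (fun k => P.lt (cseq P f k) z) with hI
    have hI0 : 0 ∈ I := by
      simp only [hI, Finset.mem_filter, Finset.mem_range]
      exact ⟨by omega, h0⟩
    have hInonempty : I.Nonempty := ⟨0, hI0⟩
    set k0 := I.max' hInonempty with hk0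
    have hk0mem : k0 ∈ I := I.max'_mem hInonempty
    have hk0lt : P.lt (cseq P f k0) z := (Finset.mem_filter.mp hk0mem).2
    have hk0le : k0 ≤ Fintype.card V := by
      have := (Finset.mem_range.mp (Finset.mem_filter.mp hk0mem).1); omega
    rcases Nat.eq_or_lt_of_le hk0le with heq | hlt
    · -- k0 = N : top has an upper, contradiction
      rw [heq] at hk0lt
      exact top_no_upper P f hf z hk0lt
    · -- k0 < N
      have hnot : ¬ P.lt (cseq P f (k0+1)) z := by
        intro hcon
        have : k0 + 1 ∈ I := by
          simp only [hI, Finset.mem_filter, Finset.mem_range]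
          exact ⟨by omega, hcon⟩
        have := Finset.le_max' I _ this
        omega
      rcases cseq_step P f k0 with ⟨he, _⟩ | hs
      · rw [he] at hnot
        exact hnot hk0lt
      · have hzlt : P.lt z (cseq P f (k0+1)) := by
          rcases hcomp (k0+1) with h | h
          · exact absurd h hnot
          · exact h
        have h1 : (f (cseq P f (k0+1)) : ℕ) ≤ (f z : ℕ) := nxt_some_min P f hs z hk0lt
        have h2 : (f z : ℕ) < (f (cseq P f (k0+1)) : ℕ) := hf _ _ hzlt
        omega

-- Chunk 3 ------------------------------------------------------------------

variable (S : Finset V)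

lemma exists_hit (hf : ∀ a b, P.lt a b → f a < f b) (hS : IsCutset P S) :
    ∃ k, cseq P f k ∈ S := by
  obtain ⟨v, hvS, hvC⟩ := hS _ (cseq_maxchain P f hf)
  obtain ⟨k, rfl⟩ := hvC
  exact ⟨k, hvS⟩

/-- the first index at which the greedy chain meets `S` -/
def jj (h : ∃ k, cseq P f k ∈ S) : ℕ := Nat.find h

/-- the chosen element of `S` on the greedy chain -/
def vv (h : ∃ k, cseq P f k ∈ S) : V := cseq P f (jj P f S h)

lemma vv_mem (h : ∃ k, cseq P f k ∈ S) : vv P f S h ∈ S := Nat.find_spec h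

lemma jj_min (h : ∃ k, cseq P f k ∈ S) {k : ℕ} (hk : k < jj P f S h) :
    cseq P f k ∉ S := Nat.find_min h hk

/-- below `jj` the chain is strictly increasing (nxt is `some`) -/
lemma strict_below (h : ∃ k, cseq P f k ∈ S) {k : ℕ} (hk : k < jj P f S h) :
    nxt P f (cseq P f k) = some (cseq P f (k+1)) := by
  rcases cseq_step P f k with ⟨he, hn⟩ | hs
  · exfalso
    have := cseq_stab P f hn (jj P f S h) (by omega)
    have hv := vv_mem P f S h
    rw [vv] at hv
    rw [this] at hv
    exact jj_min P f S h hk hv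
  · exact hs

lemma pos_strict (hf : ∀ a b, P.lt a b → f a < f b) (h : ∃ k, cseq P f k ∈ S) :
    ∀ i k, i < k → k ≤ jj P f S h → (f (cseq P f i) : ℕ) < (f (cseq P f k) : ℕ) := by
  intro i k
  induction k with
  | zero => omega
  | succ k ih =>
    intro hik hkj
    have hstep : (f (cseq P f k) : ℕ) < (f (cseq P f (k+1)) : ℕ) := by
      have hs := strict_below P f S h (show k < jj P f S h by omega)
      exact hf _ _ (nxt_some_lt P f hs)
    rcases Nat.lt_or_ge i k with h1 | h1
    · have := ih h1 (by omega)
      omega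
    · have : i = k := by omega
      subst this
      exact hstep

lemma cseq_inj (hf : ∀ a b, P.lt a b → f a < f b) (h : ∃ k, cseq P f k ∈ S) :
    ∀ i k, i ≤ jj P f S h → k ≤ jj P f S h → cseq P f i = cseq P f k → i = k := by
  intro i k hi hk he
  by_contra hne
  rcases Nat.lt_or_ge i k with h1 | h1
  · have := pos_strict P f S hf h i k h1 hk
    rw [he] at this
    omega
  · have h2 : k < i := by omega
    have := pos_strict P f S hf h k i h2 hi
    rw [he] at this
    omega

/-- `u` is one of the moved chain elements (strictly below the marked one) -/
def mov (h : ∃ k, cseq P f k ∈ S) (u : V) : Prop :=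
  ∃ i, i < jj P f S h ∧ u = cseq P f i

/-- the new position assignment after sliding the chain -/
def T (h : ∃ k, cseq P f k ∈ S) (u : V) : Fin (Fintype.card V) :=
  if hm : mov P f S h u then f (cseq P f (Nat.find hm + 1)) else f u

lemma mov_find_eq (hf : ∀ a b, P.lt a b → f a < f b) (h : ∃ k, cseq P f k ∈ S)
    {u : V} (hm : mov P f S h u) {i : ℕ} (hi : i < jj P f S h) (he : u = cseq P f i) :
    Nat.find hm = i := by
  have hspec := Nat.find_spec hm
  obtain ⟨hlt, heq⟩ := hspec
  refine cseq_inj P f S hf h _ _ (by omega) (by omega) ?_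
  rw [← heq, he]

lemma T_mov (hf : ∀ a b, P.lt a b → f a < f b) (h : ∃ k, cseq P f k ∈ S)
    {i : ℕ} (hi : i < jj P f S h) :
    T P f S h (cseq P f i) = f (cseq P f (i+1)) := by
  have hm : mov P f S h (cseq P f i) := ⟨i, hi, rfl⟩
  rw [T, dif_pos hm, mov_find_eq P f S hf h hm hi rfl]

lemma T_not (h : ∃ k, cseq P f k ∈ S) {u : V} (hm : ¬ mov P f S h u) :
    T P f S h u = f u := by
  rw [T, dif_neg hm]

lemma vv_not_mov (hf : ∀ a b, P.lt a b → f a < f b) (h : ∃ k, cseq P f k ∈ S) :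
    ¬ mov P f S h (vv P f S h) := by
  rintro ⟨i, hi, he⟩
  have := cseq_inj P f S hf h (jj P f S h) i le_rfl (by omega) he
  omega

lemma T_ne_zero (hf : ∀ a b, P.lt a b → f a < f b) (h : ∃ k, cseq P f k ∈ S)
    {u : V} (hu : u ≠ vv P f S h) : (T P f S h u : ℕ) ≠ 0 := by
  by_cases hm : mov P f S h u
  · rw [T, dif_pos hm]
    set i := Nat.find hm with hidef
    have hspec := Nat.find_spec hm
    obtain ⟨hlt, heq⟩ := hspec
    intro hzero
    have hb : (f (cseq P f 0) : ℕ) = 0 := by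
      rw [cseq_zero]; exact pos_bot0 f
    have : f (cseq P f (i+1)) = f (cseq P f 0) := by
      apply Fin.ext
      rw [hzero, hb]
    have := f.injective this
    have := cseq_inj P f S hf h (i+1) 0 (by omega) (by omega) this
    omega
  · rw [T_not P f S h hm]
    intro hzero
    have hb : (f (cseq P f 0) : ℕ) = 0 := by
      rw [cseq_zero]; exact pos_bot0 f
    have heq : u = cseq P f 0 := by
      apply f.injective
      apply Fin.ext
      rw [hzero, hb]
    rcases Nat.eq_zero_or_pos (jj P f S h) with hj | hj
    · apply hu
      rw [vv, hj, ← heq]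
    · exact hm ⟨0, hj, heq⟩

lemma T_mono (hf : ∀ a b, P.lt a b → f a < f b) (h : ∃ k, cseq P f k ∈ S)
    {a b : V} (ha : a ≠ vv P f S h) (hb : b ≠ vv P f S h) (hab : P.lt a b) :
    (T P f S h a : ℕ) < (T P f S h b : ℕ) := by
  by_cases hma : mov P f S h a
  · obtain ⟨i, hi, he⟩ := hma.imp (fun i hi => hi)
    subst he
    rw [T_mov P f S hf h hi]
    have hs := strict_below P f S h hi
    have hmin : (f (cseq P f (i+1)) : ℕ) ≤ (f b : ℕ) := nxt_some_min P f hs b hab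
    by_cases hmb : mov P f S h b
    · obtain ⟨k, hk, heb⟩ := hmb
      subst heb
      rw [T_mov P f S hf h hk]
      -- i < k since positions increase
      have hik : i < k := by
        have hfi : (f (cseq P f i) : ℕ) < (f (cseq P f k) : ℕ) := hf _ _ hab
        by_contra hge
        rcases Nat.lt_or_ge k i with h1 | h1
        · have := pos_strict P f S hf h k i h1 (by omega)
          omega
        · have : k = i := by omega
          subst this
          omega
      exact pos_strict P f S hf h (i+1) (k+1) (by omega) (by omega)
    · rw [T_not P f S h hmb]
      -- strict: b ≠ cseq (i+1)
      rcases Nat.lt_or_ge (i+1) (jj P f S h) with h1 | h1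
      · -- if b = cseq (i+1), b would be mov
        rcases Nat.lt_or_ge ((f (cseq P f (i+1))) : ℕ) (f b : ℕ) with h2 | h2
        · exact h2
        · exfalso
          have : f (cseq P f (i+1)) = f b := by
            apply Fin.ext; omega
          have hbe : b = cseq P f (i+1) := f.injective this.symm
          exact hmb ⟨i+1, h1, hbe⟩
      · -- i+1 = jj, so if equal then b = vv
        have hij : i + 1 = jj P f S h := by omega
        rcases Nat.lt_or_ge ((f (cseq P f (i+1))) : ℕ) (f b : ℕ) with h2 | h2
        · exact h2
        · exfalso
          have : f (cseq P f (i+1)) = f b := by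
            apply Fin.ext; omega
          have hbe : b = cseq P f (i+1) := f.injective this.symm
          apply hb
          rw [hbe, vv, ← hij]
  · rw [T_not P f S h hma]
    by_cases hmb : mov P f S h b
    · obtain ⟨k, hk, heb⟩ := hmb
      subst heb
      rw [T_mov P f S hf h hk]
      have h1 : (f a : ℕ) < (f (cseq P f k) : ℕ) := hf _ _ hab
      have h2 : (f (cseq P f k) : ℕ) < (f (cseq P f (k+1)) : ℕ) :=
        pos_strict P f S hf h k (k+1) (by omega) (by omega)
      omega
    · rw [T_not P f S h hmb]
      exact hf _ _ hab

lemma T_inj (hf : ∀ a b, P.lt a b → f a < f b) (h : ∃ k, cseq P f k ∈ S)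
    {a b : V} (ha : a ≠ vv P f S h) (hb : b ≠ vv P f S h)
    (he : T P f S h a = T P f S h b) : a = b := by
  by_cases hma : mov P f S h a <;> by_cases hmb : mov P f S h b
  · obtain ⟨i, hi, hea⟩ := hma
    obtain ⟨k, hk, heb⟩ := hmb
    subst hea; subst heb
    rw [T_mov P f S hf h hi, T_mov P f S hf h hk] at he
    have := cseq_inj P f S hf h (i+1) (k+1) (by omega) (by omega) (f.injective he)
    have : i = k := by omega
    subst this; rfl
  · obtain ⟨i, hi, hea⟩ := hma
    subst hea
    rw [T_mov P f S hf h hi, T_not P f S h hmb] at he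
    have hbe : b = cseq P f (i+1) := f.injective he.symm
    exfalso
    rcases Nat.lt_or_ge (i+1) (jj P f S h) with h1 | h1
    · exact hmb ⟨i+1, h1, hbe⟩
    · have hij : i + 1 = jj P f S h := by
        have := Nat.find_spec h
        omega
      apply hb
      rw [hbe, vv, ← hij]
  · obtain ⟨k, hk, heb⟩ := hmb
    subst heb
    rw [T_not P f S h hma, T_mov P f S hf h hk] at he
    have hae : a = cseq P f (k+1) := f.injective he
    exfalso
    rcases Nat.lt_or_ge (k+1) (jj P f S h) with h1 | h1
    · exact hma ⟨k+1, h1, hae⟩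
    · have hkj : k + 1 = jj P f S h := by omega
      apply ha
      rw [hae, vv, ← hkj]
  · rw [T_not P f S h hma, T_not P f S h hmb] at he
    exact f.injective he

-- Chunk 4 : decode ----------------------------------------------------------

lemma Tle (hf : ∀ a b, P.lt a b → f a < f b) (h : ∃ k, cseq P f k ∈ S)
    {i : ℕ} (hi : i < jj P f S h) {u : V} (hu : P.lt u (cseq P f (i+1))) :
    (T P f S h u : ℕ) ≤ (f (cseq P f (i+1)) : ℕ) := by
  by_cases hm : mov P f S h u
  · obtain ⟨k, hk, rfl⟩ := hm
    rw [T_mov P f S hf h hk]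
    have hpos : (f (cseq P f k) : ℕ) < (f (cseq P f (i+1)) : ℕ) := hf _ _ hu
    have hki : k < i + 1 := by
      by_contra hge
      rcases Nat.lt_or_ge (i+1) k with h1 | h1
      · have := pos_strict P f S hf h (i+1) k h1 (by omega)
        omega
      · have : k = i + 1 := by omega
        subst this
        omega
    rcases Nat.lt_or_ge (k+1) (i+1) with h1 | h1
    · exact le_of_lt (pos_strict P f S hf h (k+1) (i+1) h1 (by omega))
    · have : k + 1 = i + 1 := by omega
      rw [this]
  · rw [T_not P f S h hm]
    exact le_of_lt (hf _ _ hu)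

lemma vv_not_lower (hf : ∀ a b, P.lt a b → f a < f b) (h : ∃ k, cseq P f k ∈ S)
    {i : ℕ} (hi : i ≤ jj P f S h) : ¬ P.lt (vv P f S h) (cseq P f i) := by
  intro hcon
  rcases Nat.eq_or_lt_of_le hi with he | hlt
  · subst he
    exact plt_irrefl (show P.lt (vv P f S h) (vv P f S h) from hcon)
  · have h1 : (f (vv P f S h) : ℕ) < (f (cseq P f i) : ℕ) := hf _ _ hcon
    have h2 : (f (cseq P f i) : ℕ) < (f (cseq P f (jj P f S h)) : ℕ) :=
      pos_strict P f S hf h i _ hlt le_rfl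
    rw [vv] at h1
    omega

/-- one decoding step: the unique maximal-position element below `c` -/
def dstep (D : V → ℕ) (c : V) : V :=
  if h : ∃! u, u ∈ lowers P c ∧ ∀ w ∈ lowers P c, D w ≤ D u then h.choose else c

lemma dstep_congr {D1 D2 : V → ℕ} {c : V} (hD : ∀ u ∈ lowers P c, D1 u = D2 u) :
    dstep P D1 c = dstep P D2 c := by
  have hpred : ∀ u, (u ∈ lowers P c ∧ ∀ w ∈ lowers P c, D1 w ≤ D1 u) ↔
      (u ∈ lowers P c ∧ ∀ w ∈ lowers P c, D2 w ≤ D2 u) := by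
    intro u
    constructor
    · rintro ⟨hu, hb⟩
      refine ⟨hu, fun w hw => ?_⟩
      rw [← hD w hw, ← hD u hu]
      exact hb w hw
    · rintro ⟨hu, hb⟩
      refine ⟨hu, fun w hw => ?_⟩
      rw [hD w hw, hD u hu]
      exact hb w hw
  by_cases h1 : ∃! u, u ∈ lowers P c ∧ ∀ w ∈ lowers P c, D1 w ≤ D1 u
  · have h2 : ∃! u, u ∈ lowers P c ∧ ∀ w ∈ lowers P c, D2 w ≤ D2 u := by
      obtain ⟨u, hu, huniq⟩ := h1
      exact ⟨u, (hpred u).mp hu, fun y hy => huniq y ((hpred y).mpr hy)⟩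
    rw [dstep, dif_pos h1, dstep, dif_pos h2]
    have s1 := h1.choose_spec
    have s2 := h2.choose_spec
    exact (s1.2 _ ((hpred _).mpr s2.1)).symm
  · have h2 : ¬ ∃! u, u ∈ lowers P c ∧ ∀ w ∈ lowers P c, D2 w ≤ D2 u := by
      intro h2
      obtain ⟨u, hu, huniq⟩ := h2
      exact h1 ⟨u, (hpred u).mpr hu, fun y hy => huniq y ((hpred y).mp hy)⟩
    rw [dstep, dif_neg h1, dstep, dif_neg h2]

lemma dstep_eq (hf : ∀ a b, P.lt a b → f a < f b) (h : ∃ k, cseq P f k ∈ S)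
    {i : ℕ} (hi : i < jj P f S h) :
    dstep P (fun u => (T P f S h u : ℕ)) (cseq P f (i+1)) = cseq P f i := by
  set D := fun u => (T P f S h u : ℕ) with hD
  have hlow : cseq P f i ∈ lowers P (cseq P f (i+1)) := by
    rw [mem_lowers]
    exact nxt_some_lt P f (strict_below P f S h hi)
  have hTi : D (cseq P f i) = (f (cseq P f (i+1)) : ℕ) := by
    rw [hD]
    simp only
    rw [T_mov P f S hf h hi]
  have hbound : ∀ w ∈ lowers P (cseq P f (i+1)), D w ≤ D (cseq P f i) := by
    intro w hw
    rw [hTi]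
    exact Tle P f S hf h hi (mem_lowers.mp hw)
  have hprop : cseq P f i ∈ lowers P (cseq P f (i+1)) ∧
      ∀ w ∈ lowers P (cseq P f (i+1)), D w ≤ D (cseq P f i) := ⟨hlow, hbound⟩
  have huniq : ∀ y, (y ∈ lowers P (cseq P f (i+1)) ∧
      ∀ w ∈ lowers P (cseq P f (i+1)), D w ≤ D y) → y = cseq P f i := by
    rintro y ⟨hy, hby⟩
    have h1 : D (cseq P f i) ≤ D y := hby _ hlow
    have h2 : D y ≤ D (cseq P f i) := hbound y hy
    have hDy : D y = (f (cseq P f (i+1)) : ℕ) := by omega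
    have hyv : y ≠ vv P f S h := by
      intro hcon
      subst hcon
      exact vv_not_lower P f S hf h (by omega) (mem_lowers.mp hy)
    have hiv : cseq P f i ≠ vv P f S h := by
      intro hcon
      have := cseq_inj P f S hf h i (jj P f S h) (by omega) le_rfl hcon
      omega
    apply T_inj P f S hf h hyv hiv
    apply Fin.ext
    show ((T P f S h y : ℕ)) = ((T P f S h (cseq P f i) : ℕ))
    rw [show ((T P f S h y : ℕ)) = D y from rfl, hDy, ← hTi]
  have hEU : ∃! u, u ∈ lowers P (cseq P f (i+1)) ∧
      ∀ w ∈ lowers P (cseq P f (i+1)), D w ≤ D u :=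
    ⟨cseq P f i, hprop, huniq⟩
  rw [dstep, dif_pos hEU]
  exact huniq _ hEU.choose_spec.1

lemma lowers_bot_empty (hf : ∀ a b, P.lt a b → f a < f b) :
    lowers P (cseq P f 0) = ∅ := by
  rw [Finset.eq_empty_iff_forall_notMem]
  intro u hu
  rw [cseq_zero] at hu
  exact no_lt_bot0 P f hf u (mem_lowers.mp hu)

lemma dstep_of_empty {D : V → ℕ} {c : V} (hc : lowers P c = ∅) : dstep P D c = c := by
  have : ¬ ∃! u, u ∈ lowers P c ∧ ∀ w ∈ lowers P c, D w ≤ D u := by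
    rintro ⟨u, ⟨hu, _⟩, _⟩
    rw [hc] at hu
    exact absurd hu (Finset.notMem_empty u)
  rw [dstep, dif_neg this]

/-- the decoded (reversed) chain sequence -/
def dwn (D : V → ℕ) (v : V) : ℕ → V
  | 0 => v
  | m+1 => dstep P D (dwn D v m)

lemma dwn_spec (hf : ∀ a b, P.lt a b → f a < f b) (h : ∃ k, cseq P f k ∈ S) :
    ∀ m, m ≤ jj P f S h →
      dwn P (fun u => (T P f S h u : ℕ)) (vv P f S h) m = cseq P f (jj P f S h - m) := by
  intro m
  induction m with
  | zero =>
    intro _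
    show vv P f S h = _
    rw [vv, Nat.sub_zero]
  | succ m ih =>
    intro hm
    have h1 := ih (by omega)
    show dstep P _ _ = _
    rw [h1]
    have h2 : jj P f S h - m = (jj P f S h - (m+1)) + 1 := by omega
    rw [h2]
    rw [dstep_eq P f S hf h (show jj P f S h - (m+1) < jj P f S h by omega)]

lemma dwn_ge (hf : ∀ a b, P.lt a b → f a < f b) (h : ∃ k, cseq P f k ∈ S) :
    ∀ m, jj P f S h ≤ m →
      dwn P (fun u => (T P f S h u : ℕ)) (vv P f S h) m = cseq P f 0 := by
  intro m
  induction m with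
  | zero =>
    intro hm
    have hj0 : jj P f S h = 0 := by omega
    have hs := dwn_spec P f S hf h 0 (by omega)
    rw [hs, hj0]
  | succ m ih =>
    intro hm
    rcases Nat.lt_or_ge m (jj P f S h) with h1 | h1
    · have : jj P f S h = m + 1 := by omega
      have h2 := dwn_spec P f S hf h (m+1) (by omega)
      rw [h2]
      congr 1
      omega
    · have h2 := ih h1
      show dstep P _ _ = _
      rw [h2, dstep_of_empty P (lowers_bot_empty P f hf)]

-- Chunk 5 : main injectivity ------------------------------------------------

lemma main_inj (f1 f2 : V ≃ Fin (Fintype.card V))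
    (hf1 : ∀ a b, P.lt a b → f1 a < f1 b) (hf2 : ∀ a b, P.lt a b → f2 a < f2 b)
    (h1 : ∃ k, cseq P f1 k ∈ S) (h2 : ∃ k, cseq P f2 k ∈ S)
    (hv : vv P f1 S h1 = vv P f2 S h2)
    (hT : ∀ u, u ≠ vv P f1 S h1 → (T P f1 S h1 u : ℕ) = (T P f2 S h2 u : ℕ)) :
    f1 = f2 := by
  set D1 := fun u => (T P f1 S h1 u : ℕ) with hD1
  set D2 := fun u => (T P f2 S h2 u : ℕ) with hD2
  set v := vv P f1 S h1 with hvdef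
  set j1 := jj P f1 S h1 with hj1def
  set j2 := jj P f2 S h2 with hj2def
  -- v is never in the lowers of a chain element
  have hvnl1 : ∀ i, i ≤ j1 → v ∉ lowers P (cseq P f1 i) := by
    intro i hi hcon
    exact vv_not_lower P f1 S hf1 h1 hi (mem_lowers.mp hcon)
  -- the decoded chains agree
  have hdwn : ∀ m, dwn P D1 v m = dwn P D2 (vv P f2 S h2) m := by
    intro m
    induction m with
    | zero => exact hv
    | succ m ih =>
      show dstep P D1 (dwn P D1 v m) = dstep P D2 (dwn P D2 (vv P f2 S h2) m)
      rw [← ih]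
      apply dstep_congr
      intro u hu
      apply hT
      intro hcon
      subst hcon
      -- v ∈ lowers of dwn-chain element : impossible
      rcases Nat.le_total m j1 with hm | hm
      · rw [dwn_spec P f1 S hf1 h1 m hm] at hu
        exact hvnl1 _ (by omega) hu
      · rw [dwn_ge P f1 S hf1 h1 m hm] at hu
        rw [lowers_bot_empty P f1 hf1] at hu
        exact absurd hu (Finset.notMem_empty _)
  -- the chain lengths agree
  have hlow_ne : ∀ (f : V ≃ Fin (Fintype.card V)) (hf : ∀ a b, P.lt a b → f a < f b)
      (h : ∃ k, cseq P f k ∈ S) (i : ℕ), 0 < i → i ≤ jj P f S h →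
      (lowers P (cseq P f i)).Nonempty := by
    intro f hf h i hi0 hij
    refine ⟨cseq P f (i-1), ?_⟩
    rw [mem_lowers]
    have hs := strict_below P f S h (show i - 1 < jj P f S h by omega)
    have := nxt_some_lt P f hs
    have he : i - 1 + 1 = i := by omega
    rw [he] at this
    exact this
  have hjj : j1 = j2 := by
    by_contra hne
    rcases Nat.lt_or_ge j1 j2 with hlt | hge
    · have e1 : dwn P D1 v j1 = cseq P f1 0 := dwn_ge P f1 S hf1 h1 j1 le_rfl
      have e2 : dwn P D2 (vv P f2 S h2) j1 = cseq P f2 (j2 - j1) :=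
        dwn_spec P f2 S hf2 h2 j1 (by omega)
      have := hdwn j1
      rw [e1, e2] at this
      have hne2 : (lowers P (cseq P f2 (j2 - j1))).Nonempty :=
        hlow_ne f2 hf2 h2 _ (by omega) (by omega)
      rw [← this, lowers_bot_empty P f1 hf1] at hne2
      exact absurd hne2 (by simp)
    · have hlt : j2 < j1 := by omega
      have e1 : dwn P D2 (vv P f2 S h2) j2 = cseq P f2 0 := dwn_ge P f2 S hf2 h2 j2 le_rfl
      have e2 : dwn P D1 v j2 = cseq P f1 (j1 - j2) :=
        dwn_spec P f1 S hf1 h1 j2 (by omega)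
      have := hdwn j2
      rw [e1, e2] at this
      have hne2 : (lowers P (cseq P f1 (j1 - j2))).Nonempty :=
        hlow_ne f1 hf1 h1 _ (by omega) (by omega)
      rw [this, lowers_bot_empty P f2 hf2] at hne2
      exact absurd hne2 (by simp)
  -- the chains agree pointwise
  have hchain : ∀ i, i ≤ j1 → cseq P f1 i = cseq P f2 i := by
    intro i hi
    have e1 : dwn P D1 v (j1 - i) = cseq P f1 i := by
      rw [dwn_spec P f1 S hf1 h1 (j1 - i) (by omega)]
      congr 1
      omega
    have e2 : dwn P D2 (vv P f2 S h2) (j1 - i) = cseq P f2 i := by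
      rw [dwn_spec P f2 S hf2 h2 (j1 - i) (by omega)]
      congr 1
      omega
    rw [← e1, ← e2]
    exact hdwn _
  -- conclude : equal as equivs
  apply Equiv.ext
  intro u
  by_cases hc : ∃ i, i ≤ j1 ∧ u = cseq P f1 i
  · obtain ⟨i, hi, rfl⟩ := hc
    rcases Nat.eq_zero_or_pos i with hi0 | hip
    · subst hi0
      apply Fin.ext
      have b1 : (f1 (cseq P f1 0) : ℕ) = 0 := by rw [cseq_zero]; exact pos_bot0 f1
      have b2 : (f2 (cseq P f1 0) : ℕ) = 0 := by
        rw [hchain 0 (by omega), cseq_zero]; exact pos_bot0 f2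
      rw [b1, b2]
    · -- i ≥ 1 : position is T of previous chain element
      have hprev : i - 1 < j1 := by omega
      have he : i - 1 + 1 = i := by omega
      have t1 : T P f1 S h1 (cseq P f1 (i-1)) = f1 (cseq P f1 i) := by
        rw [T_mov P f1 S hf1 h1 hprev, he]
      have t2 : T P f2 S h2 (cseq P f2 (i-1)) = f2 (cseq P f2 i) := by
        rw [T_mov P f2 S hf2 h2 (by omega : i - 1 < jj P f2 S h2), he]
      have hne : cseq P f1 (i-1) ≠ v := by
        intro hcon
        rw [hvdef, vv] at hcon
        have := cseq_inj P f1 S hf1 h1 (i-1) (jj P f1 S h1) (by omega) le_rfl hcon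
        omega
      have hTu := hT _ hne
      apply Fin.ext
      calc (f1 (cseq P f1 i) : ℕ) = (T P f1 S h1 (cseq P f1 (i-1)) : ℕ) := by rw [t1]
        _ = (T P f2 S h2 (cseq P f1 (i-1)) : ℕ) := hTu
        _ = (T P f2 S h2 (cseq P f2 (i-1)) : ℕ) := by rw [hchain (i-1) (by omega)]
        _ = (f2 (cseq P f2 i) : ℕ) := by rw [t2]
        _ = (f2 (cseq P f1 i) : ℕ) := by rw [← hchain i hi]
  · -- u is not on the chain
    have hm1 : ¬ mov P f1 S h1 u := by
      rintro ⟨i, hi, he⟩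
      exact hc ⟨i, by omega, he⟩
    have hm2 : ¬ mov P f2 S h2 u := by
      rintro ⟨i, hi, he⟩
      refine hc ⟨i, by omega, ?_⟩
      rw [hchain i (by omega)]
      exact he
    have hne : u ≠ v := by
      intro hcon
      exact hc ⟨j1, le_rfl, by rw [hcon, hvdef, vv, hj1def]⟩
    have hTu := hT _ hne
    rw [T_not P f1 S h1 hm1, T_not P f2 S h2 hm2] at hTu
    exact Fin.ext hTu


-- Chunk 6 : the injection and counting --------------------------------------

lemma card_ne (v : V) : Fintype.card {x : V // x ≠ v} = Fintype.card V - 1 := by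
  simp [Fintype.card_subtype_compl]

def Gmap (hf : ∀ a b, P.lt a b → f a < f b) (h : ∃ k, cseq P f k ∈ S) :
    {x : V // x ≠ vv P f S h} → Fin (Fintype.card V - 1) := fun u =>
  ⟨(T P f S h u.1 : ℕ) - 1, by
    have h1 := (T P f S h u.1).isLt
    have h2 := T_ne_zero P f S hf h u.2
    omega⟩

lemma Gmap_inj (hf : ∀ a b, P.lt a b → f a < f b) (h : ∃ k, cseq P f k ∈ S) :
    Function.Injective (Gmap P f S hf h) := by
  intro a b he
  apply Subtype.ext
  apply T_inj P f S hf h a.2 b.2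
  apply Fin.ext
  have hval : (T P f S h a.1 : ℕ) - 1 = (T P f S h b.1 : ℕ) - 1 := congrArg Fin.val he
  have h2 := T_ne_zero P f S hf h a.2
  have h3 := T_ne_zero P f S hf h b.2
  omega

def Gequiv (hf : ∀ a b, P.lt a b → f a < f b) (h : ∃ k, cseq P f k ∈ S) :
    {x : V // x ≠ vv P f S h} ≃ Fin (Fintype.card {x : V // x ≠ vv P f S h}) :=
  (Equiv.ofBijective (Gmap P f S hf h)
    ((Fintype.bijective_iff_injective_and_card _).mpr
      ⟨Gmap_inj P f S hf h, by rw [card_ne]; simp⟩)).trans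
    (finCongr (card_ne (vv P f S h)).symm)

lemma Gequiv_val (hf : ∀ a b, P.lt a b → f a < f b) (h : ∃ k, cseq P f k ∈ S)
    (u : {x : V // x ≠ vv P f S h}) :
    (Gequiv P f S hf h u : ℕ) = (T P f S h u.1 : ℕ) - 1 := by
  simp [Gequiv, Gmap]

lemma Gequiv_val' (hf : ∀ a b, P.lt a b → f a < f b) (h : ∃ k, cseq P f k ∈ S)
    (w : V) (hw : w ≠ vv P f S h) :
    (Gequiv P f S hf h ⟨w, hw⟩ : ℕ) = (T P f S h w : ℕ) - 1 := by
  simp [Gequiv, Gmap]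

lemma Gmono (hf : ∀ a b, P.lt a b → f a < f b) (h : ∃ k, cseq P f k ∈ S)
    (a b : {x : V // x ≠ vv P f S h}) (hab : P.lt a.1 b.1) :
    Gequiv P f S hf h a < Gequiv P f S hf h b := by
  rw [Fin.lt_def, Gequiv_val, Gequiv_val]
  have h1 := T_mono P f S hf h a.2 b.2 hab
  have h2 := T_ne_zero P f S hf h a.2
  have h3 := T_ne_zero P f S hf h b.2
  omega

theorem count_le [Nonempty V] (hS : IsCutset P S) :
    eCount V P ≤ ∑ v ∈ S, eCount {x : V // x ≠ v} (delOrder P v) := by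
  classical
  set Ext := {f : V ≃ Fin (Fintype.card V) // ∀ a b, P.lt a b → f a < f b} with hExt
  let Ext' : {v // v ∈ S} → Type _ := fun v =>
    {g : {x : V // x ≠ v.1} ≃ Fin (Fintype.card {x : V // x ≠ v.1}) //
      ∀ a b, (delOrder P v.1).lt a b → g a < g b}
  have hex : ∀ x : Ext, ∃ k, cseq P x.1 k ∈ S := fun x => exists_hit P x.1 S x.2 hS
  let Φ : Ext → Σ v : {v // v ∈ S}, Ext' v := fun x =>
    ⟨⟨vv P x.1 S (hex x), vv_mem P x.1 S (hex x)⟩,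
     ⟨Gequiv P x.1 S x.2 (hex x), fun a b hab => Gmono P x.1 S x.2 (hex x) a b hab⟩⟩
  have hinj : Function.Injective Φ := by
    intro x y hxy
    have hv : vv P x.1 S (hex x) = vv P y.1 S (hex y) := by
      have := congrArg (fun z : (Σ v : {v // v ∈ S}, Ext' v) => z.1.1) hxy
      exact this
    have hTeq : ∀ u, u ≠ vv P x.1 S (hex x) →
        (T P x.1 S (hex x) u : ℕ) = (T P y.1 S (hex y) u : ℕ) := by
      intro u hu
      have hu' : u ≠ vv P y.1 S (hex y) := by rw [← hv]; exact hu
      have hW := congrArg (fun z : (Σ v : {v // v ∈ S}, Ext' v) =>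
        (if hw : u = z.1.1 then 0 else ((z.2.1 ⟨u, hw⟩ : Fin _) : ℕ) + 1)) hxy
      rw [dif_neg hu, dif_neg hu'] at hW
      have gx := Gequiv_val' P x.1 S x.2 (hex x) u hu
      have gy := Gequiv_val' P y.1 S y.2 (hex y) u hu' 
      have h2 := T_ne_zero P x.1 S x.2 (hex x) hu
      have h3 := T_ne_zero P y.1 S y.2 (hex y) hu'
      rw [show ((Φ x).2.1 ⟨u, _⟩ : ℕ) = (Gequiv P x.1 S x.2 (hex x) ⟨u, hu⟩ : ℕ) from rfl,
        show ((Φ y).2.1 ⟨u, _⟩ : ℕ) = (Gequiv P y.1 S y.2 (hex y) ⟨u, hu'⟩ : ℕ) from rfl] at hW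
      rw [gx, gy] at hW
      omega
    have := main_inj P S x.1 y.1 x.2 y.2 (hex x) (hex y) hv hTeq
    exact Subtype.ext this
  haveI : ∀ v : {v // v ∈ S}, Fintype (Ext' v) := fun v => Fintype.ofFinite _
  haveI : Fintype Ext := Fintype.ofFinite _
  have hle : Nat.card Ext ≤ Nat.card (Σ v : {v // v ∈ S}, Ext' v) :=
    Nat.card_le_card_of_injective Φ hinj
  have hc2 : Nat.card (Σ v : {v // v ∈ S}, Ext' v)
      = ∑ v ∈ S, eCount {x : V // x ≠ v} (delOrder P v) := by
    rw [Nat.card_eq_fintype_card, Fintype.card_sigma]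
    have : ∀ v : {v // v ∈ S}, Fintype.card (Ext' v)
        = eCount {x : V // x ≠ v.1} (delOrder P v.1) := by
      intro v
      rw [eCount, Nat.card_eq_fintype_card]
    rw [Finset.sum_congr rfl (fun v _ => this v)]
    exact Finset.sum_coe_sort S (fun v => eCount {x : V // x ≠ v} (delOrder P v))
  calc eCount V P = Nat.card Ext := rfl
    _ ≤ Nat.card (Σ v : {v // v ∈ S}, Ext' v) := hle
    _ = ∑ v ∈ S, eCount {x : V // x ≠ v} (delOrder P v) := hc2

end
end CutsetAux

theorem stmt_9 {V : Type*} [Fintype V] [DecidableEq V] (P : PartialOrder V)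
    (S : Finset V) (hS : IsCutset P S) :
    eCount V P ≤ ∑ v ∈ S, eCount {x : V // x ≠ v} (delOrder P v) := by
  rcases isEmpty_or_nonempty V with hV | hV
  · exfalso
    have hmax : IsMaxChain P.le (∅ : Set V) := by
      constructor
      · intro x hx
        exact absurd hx (by simp)
      · intro t ht hsub
        ext x
        exact (IsEmpty.false x).elim
    obtain ⟨v, hvS, hv⟩ := hS ∅ hmax
    exact absurd hv (by simp)
  · exact CutsetAux.count_le P S hS
end

section
/- Let P be a finite poset and I a subset of its ground set that is an antichain or a cutset. Then e(P) = ∑_{v ∈ I} e(P \ v) if and only if I is simultaneously an antichain and a cutset of P. -/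
open Classical

theorem Finset.exists_minimal_old {α : Type*} [Preorder α] (s : Finset α) (h : s.Nonempty) :
    ∃ m ∈ s, ∀ x ∈ s, ¬ x < m := by
  obtain ⟨m, hm, hmin⟩ := s.exists_minimal h
  exact ⟨m, hm, fun x hx hlt => hlt.not_ge (hmin hx hlt.le)⟩

theorem Finset.exists_maximal_old {α : Type*} [Preorder α] (s : Finset α) (h : s.Nonempty) :
    ∃ m ∈ s, ∀ x ∈ s, ¬ m < x := by
  obtain ⟨m, hm, hmax⟩ := s.exists_maximal h
  exact ⟨m, hm, fun x hx hlt => hlt.not_ge (hmax hx hlt.le)⟩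

section Aux
variable {V : Type*} [Fintype V] [DecidableEq V] (P : PartialOrder V)

/-- linear extension lists of the induced poset on `S`. -/
def Ok (S : Finset V) (l : List V) : Prop :=
  l.Nodup ∧ l.toFinset = S ∧ l.Pairwise fun a b => ¬ P.lt b a

theorem Ok.length {S : Finset V} {l : List V} (h : Ok P S l) : l.length = S.card := by
  rw [← h.2.1, List.toFinset_card_of_nodup h.1]

instance okFinite (S : Finset V) : Finite {l : List V // Ok P S l} := by
  have : Function.Injective (fun l : {l : List V // Ok P S l} => (fun i : Fin S.card => l.val[i.val]?)) := by
    intro l m h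
    ext1
    apply List.ext_getElem?
    intro n
    by_cases hn : n < S.card
    · exact congrFun h ⟨n, hn⟩
    · rw [List.getElem?_eq_none_iff.2, List.getElem?_eq_none_iff.2] <;>
        simp [m.2.length, l.2.length, le_of_not_gt hn]
  exact Finite.of_injective _ this

noncomputable def NN (S : Finset V) : ℕ := Nat.card {l : List V // Ok P S l}

theorem NN_empty : NN P (∅ : Finset V) = 1 := by
  have : Unique {l : List V // Ok P (∅ : Finset V) l} := by
    refine ⟨⟨⟨[], by simp [Ok]⟩⟩, ?_⟩
    rintro ⟨l, h⟩
    exact Subtype.ext ((List.toFinset_eq_empty_iff _).1 h.2.1)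
  rw [NN, Nat.card_unique]

end Aux
section Aux2
variable {V : Type*} [Fintype V] [DecidableEq V] (P : PartialOrder V)

theorem NN_pos (S : Finset V) : 0 < NN P S := by
  classical
  suffices h : Nonempty {l : List V // Ok P S l} by exact Nat.card_pos
  induction S using Finset.strongInduction with
  | _ S ih =>
    rcases eq_or_ne S ∅ with rfl | hne
    · exact ⟨⟨[], by simp [Ok]⟩⟩
    · -- pick a minimal element
      letI : PartialOrder V := P
      obtain ⟨m, hmS, hmin⟩ := Finset.exists_minimal_old S (Finset.nonempty_iff_ne_empty.2 hne)
      obtain ⟨⟨t, ht⟩⟩ := ih (S.erase m) (Finset.erase_ssubset hmS)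
      refine ⟨⟨m :: t, ?_, ?_, ?_⟩⟩
      · refine List.nodup_cons.2 ⟨fun hmem => ?_, ht.1⟩
        have := ht.2.1 ▸ List.mem_toFinset.2 hmem
        exact (Finset.mem_erase.1 this).1 rfl
      · rw [List.toFinset_cons, ht.2.1, Finset.insert_erase hmS]
      · refine List.pairwise_cons.2 ⟨?_, ht.2.2⟩
        intro b hb hlt
        have hbS : b ∈ S := Finset.mem_of_mem_erase (ht.2.1 ▸ List.mem_toFinset.2 hb)
        exact hmin b hbS hlt

-- minimal elements of S (w.r.t. P)
noncomputable def mins (S : Finset V) : Finset V :=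
  S.filter fun m => ∀ z ∈ S, ¬ P.lt z m

theorem mem_mins {S : Finset V} {m : V} :
    m ∈ mins P S ↔ m ∈ S ∧ ∀ z ∈ S, ¬ P.lt z m := by
  simp [mins]

noncomputable def lows (S : Finset V) (y : V) : Finset V := S.filter fun z => P.lt z y

theorem mem_lows {S : Finset V} {y z : V} : z ∈ lows P S y ↔ z ∈ S ∧ P.lt z y := by
  simp [lows]

noncomputable def newmins (S : Finset V) (v : V) : Finset V :=
  (S.erase v).filter fun y => lows P S y = {v}

theorem mem_newmins {S : Finset V} {v y : V} :
    y ∈ newmins P S v ↔ y ∈ S ∧ y ≠ v ∧ lows P S y = {v} := by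
  simp only [newmins, Finset.mem_filter, Finset.mem_erase]
  tauto

theorem exists_min_le {S : Finset V} {x : V} (hx : x ∈ S) :
    ∃ m ∈ mins P S, P.le m x := by
  letI : PartialOrder V := P
  obtain ⟨m, hm, hmin⟩ := Finset.exists_minimal_old (S.filter fun z => P.le z x)
    ⟨x, Finset.mem_filter.2 ⟨hx, le_refl x⟩⟩
  rw [Finset.mem_filter] at hm
  refine ⟨m, mem_mins P |>.2 ⟨hm.1, ?_⟩, hm.2⟩
  intro z hz hlt
  exact hmin z (Finset.mem_filter.2 ⟨hz, le_trans (le_of_lt hlt) hm.2⟩) hlt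

theorem mins_nonempty {S : Finset V} (hS : S.Nonempty) : (mins P S).Nonempty := by
  obtain ⟨x, hx⟩ := hS
  obtain ⟨m, hm, -⟩ := exists_min_le P hx
  exact ⟨m, hm⟩

theorem newmins_eq_empty_of_not_mins {S : Finset V} {v : V} (hv : v ∈ S)
    (h : v ∉ mins P S) : newmins P S v = ∅ := by
  rw [Finset.eq_empty_iff_forall_notMem]
  intro y hy
  rw [mem_newmins] at hy
  rw [mem_mins] at h
  push_neg at h
  obtain ⟨z, hzS, hzv⟩ := h hv
  have hvy : P.lt v y := (mem_lows P).1 (hy.2.2 ▸ Finset.mem_singleton_self v) |>.2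
  letI : PartialOrder V := P
  have : z ∈ lows P S y := (mem_lows P).2 ⟨hzS, lt_trans hzv hvy⟩
  rw [hy.2.2, Finset.mem_singleton] at this
  subst this
  exact lt_irrefl _ hzv

theorem mins_erase {S : Finset V} {v : V} (hv : v ∈ S) :
    mins P (S.erase v) = ((mins P S).erase v) ∪ newmins P S v := by
  ext y
  simp only [mem_mins, Finset.mem_erase, Finset.mem_union, mem_newmins]
  constructor
  · rintro ⟨⟨hyv, hyS⟩, hmin⟩
    have hsub : lows P S y ⊆ {v} := by
      intro z hz
      rw [mem_lows] at hz
      rw [Finset.mem_singleton]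
      by_contra hzv
      exact hmin z ⟨hzv, hz.1⟩ hz.2
    rcases Finset.subset_singleton_iff.1 hsub with h0 | h1
    · left
      refine ⟨hyv, hyS, ?_⟩
      intro z hz hlt
      have : z ∈ lows P S y := (mem_lows P).2 ⟨hz, hlt⟩
      simp [h0] at this
    · right; exact ⟨hyS, hyv, h1⟩
  · rintro (⟨hyv, hyS, hmin⟩ | ⟨hyS, hyv, hlow⟩)
    · exact ⟨⟨hyv, hyS⟩, fun z hz => hmin z hz.2⟩
    · refine ⟨⟨hyv, hyS⟩, ?_⟩
      intro z hz hlt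
      have : z ∈ lows P S y := (mem_lows P).2 ⟨hz.2, hlt⟩
      rw [hlow, Finset.mem_singleton] at this
      exact hz.1 this

theorem disj_mins_newmins {S : Finset V} {v : V} :
    Disjoint ((mins P S).erase v) (newmins P S v) := by
  rw [Finset.disjoint_left]
  intro y hy hy'
  rw [Finset.mem_erase, mem_mins] at hy
  rw [mem_newmins] at hy'
  have hvy : P.lt v y := (mem_lows P).1 (hy'.2.2 ▸ Finset.mem_singleton_self v) |>.2
  have hvS : v ∈ S := ((mem_lows P).1 (hy'.2.2 ▸ Finset.mem_singleton_self v)).1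
  exact hy.2.2 v hvS hvy

end Aux2

section Aux3
variable {V : Type*} [Fintype V] [DecidableEq V] (P : PartialOrder V)

theorem natcard_sigma {ι : Type*} [Fintype ι] (f : ι → Type*) [∀ i, Finite (f i)] :
    Nat.card ((i : ι) × f i) = ∑ i, Nat.card (f i) := by
  letI := fun i => Fintype.ofFinite (f i)
  simp [Nat.card_eq_fintype_card]

theorem NN_rec {S : Finset V} (hS : S.Nonempty) :
    NN P S = ∑ m ∈ mins P S, NN P (S.erase m) := by
  classical
  have okmap : ∀ p : ((m : {m // m ∈ mins P S}) × {l : List V // Ok P (S.erase m.val) l}),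
      Ok P S (p.1.val :: p.2.val) := by
    rintro ⟨⟨m, hm⟩, ⟨t, ht⟩⟩
    rw [mem_mins] at hm
    refine ⟨?_, ?_, ?_⟩
    · refine List.nodup_cons.2 ⟨fun hmem => ?_, ht.1⟩
      have := ht.2.1 ▸ List.mem_toFinset.2 hmem
      exact (Finset.mem_erase.1 this).1 rfl
    · rw [List.toFinset_cons, ht.2.1, Finset.insert_erase hm.1]
    · refine List.pairwise_cons.2 ⟨?_, ht.2.2⟩
      intro b hb hlt
      have hbS : b ∈ S := Finset.mem_of_mem_erase (ht.2.1 ▸ List.mem_toFinset.2 hb)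
      exact hm.2 b hbS hlt
  have key : Nat.card ((m : {m // m ∈ mins P S}) × {l : List V // Ok P (S.erase m.val) l})
      = Nat.card {l : List V // Ok P S l} := by
    apply Nat.card_eq_of_bijective (fun p => ⟨p.1.val :: p.2.val, okmap p⟩)
    constructor
    · rintro ⟨⟨m, hm⟩, ⟨t, ht⟩⟩ ⟨⟨m', hm'⟩, ⟨t', ht'⟩⟩ h
      simp only [Subtype.mk.injEq, List.cons.injEq] at h
      obtain ⟨h1, h2⟩ := h
      subst h1; subst h2
      rfl
    · rintro ⟨l, hl⟩
      match l, hl with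
      | [], hl => 
        exfalso
        obtain ⟨x, hx⟩ := hS
        rw [← hl.2.1] at hx
        simp at hx
      | a :: t, hl =>
        have haS : a ∈ S := hl.2.1 ▸ (List.mem_toFinset.2 (List.mem_cons_self))
        have hmins : a ∈ mins P S := by
          rw [mem_mins]
          refine ⟨haS, ?_⟩
          intro z hz hlt
          have : z ∈ a :: t := List.mem_toFinset.1 (hl.2.1 ▸ hz)
          rw [List.mem_cons] at this
          rcases this with rfl | hz'
          · exact absurd hlt (by letI : PartialOrder V := P; exact lt_irrefl z)
          · exact (List.pairwise_cons.1 hl.2.2).1 z hz' hlt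
        have hanot : a ∉ t := (List.nodup_cons.1 hl.1).1
        have htOk : Ok P (S.erase a) t := by
          refine ⟨(List.nodup_cons.1 hl.1).2, ?_, (List.pairwise_cons.1 hl.2.2).2⟩
          rw [← hl.2.1, List.toFinset_cons, Finset.erase_insert (by simpa using hanot)]
        exact ⟨⟨⟨a, hmins⟩, ⟨t, htOk⟩⟩, rfl⟩
  rw [NN, ← key, natcard_sigma, ← Finset.sum_coe_sort (mins P S) (fun m => NN P (S.erase m))]
  rfl

end Aux3
section Aux4
variable {V : Type*} [Fintype V] [DecidableEq V] (P : PartialOrder V)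

def IsChainF (C : Finset V) : Prop := ∀ a ∈ C, ∀ b ∈ C, a ≠ b → P.le a b ∨ P.le b a

def MaxChainIn (S C : Finset V) : Prop :=
  C ⊆ S ∧ IsChainF P C ∧ ∀ C', C' ⊆ S → IsChainF P C' → C ⊆ C' → C' = C

def CutIn (S I : Finset V) : Prop := ∀ C, MaxChainIn P S C → ∃ v ∈ I, v ∈ C

variable {P}

theorem IsChainF.subset {C D : Finset V} (h : IsChainF P C) (hsub : D ⊆ C) : IsChainF P D :=
  fun a ha b hb hab => h a (hsub ha) b (hsub hb) hab

theorem exists_maxChainIn {S C₀ : Finset V} (h0 : C₀ ⊆ S) (hc0 : IsChainF P C₀) :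
    ∃ C, MaxChainIn P S C ∧ C₀ ⊆ C := by
  classical
  set F : Finset (Finset V) := Finset.univ.filter (fun C => C₀ ⊆ C ∧ C ⊆ S ∧ IsChainF P C) with hF
  have hne : F.Nonempty := ⟨C₀, by simp [hF, h0, hc0]⟩
  obtain ⟨C, hC, hmax⟩ := Finset.exists_maximal_old F hne
  simp only [hF, Finset.mem_filter, Finset.mem_univ, true_and] at hC
  refine ⟨C, ⟨hC.2.1, hC.2.2, ?_⟩, hC.1⟩
  intro C' hC'S hC'chain hsub
  by_contra hne'
  exact hmax C' (by simp [hF, Finset.mem_filter, hC'S, hC'chain, hC.1.trans hsub])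
    (lt_of_le_of_ne hsub fun h => hne' h.symm)

theorem MaxChainIn.nonempty {S C : Finset V} (h : MaxChainIn P S C) (hS : S.Nonempty) :
    C.Nonempty := by
  rcases Finset.eq_empty_or_nonempty C with rfl | hC
  · obtain ⟨x, hx⟩ := hS
    have := h.2.2 {x} (Finset.singleton_subset_iff.2 hx)
      (fun a ha b hb hab => absurd (by
        rw [Finset.mem_singleton] at ha hb; rw [ha, hb] at hab; exact hab) (not_ne_iff.2 rfl))
      (Finset.empty_subset _)
    exact absurd this (Finset.singleton_ne_empty x)
  · exact hC

theorem MaxChainIn.exists_bot {S C : Finset V} (h : MaxChainIn P S C) (hC : C.Nonempty) :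
    ∃ c₀ ∈ C, (∀ c ∈ C, P.le c₀ c) ∧ c₀ ∈ mins P S := by
  letI : PartialOrder V := P
  obtain ⟨c₀, hc₀, hcmin⟩ := Finset.exists_minimal_old C hC
  have hleast : ∀ c ∈ C, P.le c₀ c := by
    intro c hc
    rcases eq_or_ne c c₀ with rfl | hne
    · exact le_refl c
    · rcases h.2.1 c₀ hc₀ c hc (Ne.symm hne) with h1 | h1
      · exact h1
      · exact absurd (lt_of_le_of_ne h1 hne) (hcmin c hc)
  refine ⟨c₀, hc₀, hleast, (mem_mins P).2 ⟨h.1 hc₀, ?_⟩⟩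
  intro z hz hlt
  have hznotC : z ∉ C := by
    intro hzC
    exact absurd (lt_of_lt_of_le hlt (hleast z hzC)) (lt_irrefl z)
  have hchain : IsChainF P (insert z C) := by
    intro a ha b hb hab
    rw [Finset.mem_insert] at ha hb
    rcases ha with rfl | ha
    · rcases hb with rfl | hb
      · exact absurd rfl hab
      · exact Or.inl (le_trans (le_of_lt hlt) (hleast b hb))
    · rcases hb with rfl | hb
      · exact Or.inr (le_trans (le_of_lt hlt) (hleast a ha))
      · exact h.2.1 a ha b hb hab
  have := h.2.2 (insert z C) (Finset.insert_subset hz h.1) hchain (Finset.subset_insert _ _)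
  exact hznotC (this ▸ Finset.mem_insert_self z C)

theorem MaxChainIn.anti {S C : Finset V} (h : MaxChainIn P S C) {m : V} (hm : m ∉ C) :
    MaxChainIn P (S.erase m) C := by
  refine ⟨fun x hx => Finset.mem_erase.2 ⟨fun he => hm (he ▸ hx), h.1 hx⟩, h.2.1, ?_⟩
  intro C' hC'S hc hsub
  exact h.2.2 C' (hC'S.trans (Finset.erase_subset _ _)) hc hsub

theorem MaxChainIn.lift {S C : Finset V} {m : V} (hm : m ∈ mins P S)
    (h : MaxChainIn P (S.erase m) C) :
    ∃ D, MaxChainIn P S D ∧ C ⊆ D ∧ D ⊆ insert m C := by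
  have hmS : m ∈ S := ((mem_mins P).1 hm).1
  have hmC : m ∉ C := fun hc => (Finset.mem_erase.1 (h.1 hc)).1 rfl
  by_cases hcomp : ∀ x ∈ C, P.le m x ∨ P.le x m
  · refine ⟨insert m C, ⟨Finset.insert_subset hmS (h.1.trans (Finset.erase_subset _ _)), ?_, ?_⟩,
      Finset.subset_insert _ _, subset_rfl⟩
    · intro a ha b hb hab
      rw [Finset.mem_insert] at ha hb
      rcases ha with rfl | ha
      · rcases hb with rfl | hb
        · exact absurd rfl hab
        · exact hcomp b hb
      · rcases hb with rfl | hb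
        · exact (hcomp a ha).symm.imp id id
        · exact h.2.1 a ha b hb hab
    · intro C'' hC''S hc hsub
      have hCsub : C ⊆ C''.erase m := by
        intro x hx
        exact Finset.mem_erase.2 ⟨fun he => hmC (he ▸ hx), hsub (Finset.mem_insert_of_mem hx)⟩
      have herase : C''.erase m = C := h.2.2 (C''.erase m)
        (fun x hx => Finset.mem_erase.2 ⟨(Finset.mem_erase.1 hx).1, hC''S (Finset.mem_of_mem_erase hx)⟩)
        (hc.subset (Finset.erase_subset _ _)) hCsub
      apply Finset.Subset.antisymm
      · intro x hx
        rcases eq_or_ne x m with rfl | hne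
        · exact Finset.mem_insert_self _ _
        · exact Finset.mem_insert_of_mem (herase ▸ Finset.mem_erase.2 ⟨hne, hx⟩)
      · exact hsub
  · push_neg at hcomp
    obtain ⟨x₀, hx₀C, hx₀⟩ := hcomp
    refine ⟨C, ⟨h.1.trans (Finset.erase_subset _ _), h.2.1, ?_⟩, subset_rfl,
      Finset.subset_insert _ _⟩
    intro C'' hC''S hc hsub
    have hmC'' : m ∉ C'' := by
      intro hmem
      have hxm : x₀ ≠ m := fun he => (Finset.mem_erase.1 (h.1 hx₀C)).1 he
      rcases hc m hmem x₀ (hsub hx₀C) (Ne.symm hxm) with h1 | h1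
      · exact hx₀.1 h1
      · exact hx₀.2 h1
    exact h.2.2 C'' (fun y hy => Finset.mem_erase.2 ⟨fun he => hmC'' (he ▸ hy), hC''S hy⟩) hc hsub

theorem cutIn_erase_of_not_mem {S I : Finset V} {m : V} (hcut : CutIn P S I)
    (hm : m ∈ mins P S) (hmI : m ∉ I) (hI : I ⊆ S) : CutIn P (S.erase m) I := by
  intro C hC
  obtain ⟨D, hD, hCD, hDC⟩ := hC.lift hm
  obtain ⟨a, haI, haD⟩ := hcut D hD
  refine ⟨a, haI, ?_⟩
  rcases Finset.mem_insert.1 (hDC haD) with rfl | h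
  · exact absurd haI hmI
  · exact h

theorem cutIn_erase_of_mem {S I : Finset V} {m : V} (hcut : CutIn P S I)
    (hm : m ∈ mins P S) (hmI : m ∈ I) (hSm : (S.erase m).Nonempty) :
    CutIn P (S.erase m) ((I.erase m) ∪ newmins P S m) := by
  letI : PartialOrder V := P
  intro C hC
  obtain ⟨c₀, hc₀C, hleast, hc₀min⟩ := hC.exists_bot (hC.nonempty hSm)
  obtain ⟨D, hD, hCD, hDC⟩ := hC.lift hm
  obtain ⟨a, haI, haD⟩ := hcut D hD
  rcases eq_or_ne a m with rfl | hne
  · -- the chain met I only possibly at m; show c₀ ∈ newmins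
    have hc₀S : c₀ ∈ S := Finset.mem_of_mem_erase (hC.1 hc₀C)
    have hc₀m : c₀ ≠ a := (Finset.mem_erase.1 (hC.1 hc₀C)).1
    have hmc₀ : P.lt a c₀ := by
      have hcomp := hD.2.1 a haD c₀ (hCD hc₀C) (Ne.symm hc₀m)
      rcases hcomp with h1 | h1
      · exact lt_of_le_of_ne h1 (Ne.symm hc₀m)
      · exfalso
        rcases eq_or_lt_of_le h1 with he | hl
        · exact hc₀m he
        · exact ((mem_mins P).1 hm).2 c₀ hc₀S hl
    have hlow : lows P S c₀ = {a} := by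
      apply Finset.Subset.antisymm
      · intro z hz
        rw [mem_lows] at hz
        rw [Finset.mem_singleton]
        by_contra hzm
        have hzSm : z ∈ S.erase a := Finset.mem_erase.2 ⟨hzm, hz.1⟩
        have hznotC : z ∉ C := by
          intro hzC
          exact absurd (lt_of_lt_of_le hz.2 (hleast z hzC)) (lt_irrefl z)
        have hchain : IsChainF P (insert z C) := by
          intro x hx y hy hxy
          rw [Finset.mem_insert] at hx hy
          rcases hx with rfl | hx
          · rcases hy with rfl | hy
            · exact absurd rfl hxy
            · exact Or.inl (le_trans (le_of_lt hz.2) (hleast y hy))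
          · rcases hy with rfl | hy
            · exact Or.inr (le_trans (le_of_lt hz.2) (hleast x hx))
            · exact hC.2.1 x hx y hy hxy
        have := hC.2.2 (insert z C) (Finset.insert_subset hzSm hC.1) hchain
          (Finset.subset_insert _ _)
        exact hznotC (this ▸ Finset.mem_insert_self z C)
      · intro z hz
        rw [Finset.mem_singleton] at hz
        subst hz
        exact (mem_lows P).2 ⟨((mem_mins P).1 hm).1, hmc₀⟩
    refine ⟨c₀, Finset.mem_union_right _ ((mem_newmins P).2 ⟨hc₀S, hc₀m, hlow⟩), hc₀C⟩
  · refine ⟨a, Finset.mem_union_left _ (Finset.mem_erase.2 ⟨hne, haI⟩), ?_⟩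
    rcases Finset.mem_insert.1 (hDC haD) with rfl | h
    · exact absurd rfl hne
    · exact h

theorem maxChainIn_erase_bot {S C : Finset V} {m : V} (h : MaxChainIn P S C)
    (hmins : mins P S = {m}) (hmC : m ∈ C) : MaxChainIn P (S.erase m) (C.erase m) := by
  refine ⟨fun x hx => Finset.mem_erase.2 ⟨(Finset.mem_erase.1 hx).1, h.1 (Finset.mem_of_mem_erase hx)⟩,
    h.2.1.subset (Finset.erase_subset _ _), ?_⟩
  intro C'' hC''S hc hsub
  letI : PartialOrder V := P
  have hmle : ∀ x ∈ S, P.le m x := by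
    intro x hx
    obtain ⟨m', hm', hle⟩ := exists_min_le P hx
    rw [hmins, Finset.mem_singleton] at hm'
    exact hm' ▸ hle
  have hmC'' : m ∉ C'' := fun hmem => (Finset.mem_erase.1 (hC''S hmem)).1 rfl
  have hchain : IsChainF P (insert m C'') := by
    intro x hx y hy hxy
    rw [Finset.mem_insert] at hx hy
    rcases hx with rfl | hx
    · rcases hy with rfl | hy
      · exact absurd rfl hxy
      · exact Or.inl (hmle y (Finset.mem_of_mem_erase (hC''S hy)))
    · rcases hy with rfl | hy
      · exact Or.inr (hmle x (Finset.mem_of_mem_erase (hC''S hx)))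
      · exact hc x hx y hy hxy
  have hCsub : C ⊆ insert m C'' := by
    intro x hx
    rcases eq_or_ne x m with rfl | hne
    · exact Finset.mem_insert_self _ _
    · exact Finset.mem_insert_of_mem (hsub (Finset.mem_erase.2 ⟨hne, hx⟩))
  have hmS : m ∈ S := ((mem_mins P).1 (hmins ▸ Finset.mem_singleton_self m)).1
  have heq : insert m C'' = C := h.2.2 (insert m C'')
    (Finset.insert_subset hmS (fun x hx => Finset.mem_of_mem_erase (hC''S hx)))
    hchain hCsub
  apply Finset.Subset.antisymm
  · intro x hx
    exact Finset.mem_erase.2 ⟨fun he => hmC'' (he ▸ hx), heq ▸ Finset.mem_insert_of_mem hx⟩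
  · exact hsub

end Aux4
section Aux5
variable {V : Type*} [Fintype V] [DecidableEq V] {P : PartialOrder V}

theorem newmins_lt {S : Finset V} {m y : V} (hy : y ∈ newmins P S m) : P.lt m y := by
  rw [mem_newmins] at hy
  exact ((mem_lows P).1 (hy.2.2 ▸ Finset.mem_singleton_self m)).2

theorem newmins_lows {S : Finset V} {m y : V} (hy : y ∈ newmins P S m) :
    ∀ z ∈ S, P.lt z y → z = m := by
  intro z hz hlt
  rw [mem_newmins] at hy
  have : z ∈ lows P S y := (mem_lows P).2 ⟨hz, hlt⟩
  rw [hy.2.2, Finset.mem_singleton] at this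
  exact this

theorem antichain_lt {I : Finset V} (h : IsAntichain P.le (↑I : Set V)) {a b : V}
    (ha : a ∈ I) (hb : b ∈ I) (hlt : P.lt a b) : False := by
  letI : PartialOrder V := P
  exact h (Finset.mem_coe.2 ha) (Finset.mem_coe.2 hb) (ne_of_lt hlt) (le_of_lt hlt)

theorem antichain_J {S I : Finset V} (h : IsAntichain P.le (↑I : Set V)) {m : V}
    (hm : m ∈ I) (hIS : I ⊆ S) :
    IsAntichain P.le (↑(I.erase m ∪ newmins P S m) : Set V) := by
  letI : PartialOrder V := P
  intro a ha b hb hne hle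
  rw [Finset.mem_coe, Finset.mem_union] at ha hb
  have hlt : P.lt a b := lt_of_le_of_ne hle hne
  rcases ha with ha | ha
  · rcases hb with hb | hb
    · exact antichain_lt h (Finset.mem_of_mem_erase ha) (Finset.mem_of_mem_erase hb) hlt
    · exact (Finset.mem_erase.1 ha).1 (newmins_lows hb a (hIS (Finset.mem_of_mem_erase ha)) hlt)
  · rcases hb with hb | hb
    · exact antichain_lt h hm (Finset.mem_of_mem_erase hb)
        (lt_trans (newmins_lt ha) hlt)
    · have : a = m := newmins_lows hb a ((mem_newmins P).1 ha |>.1) hlt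
      exact ((mem_newmins P).1 ha).2.1 this

theorem disj_of_antichain {S I : Finset V} (h : IsAntichain P.le (↑I : Set V)) {m : V}
    (hm : m ∈ I) : (I.erase m) ∩ newmins P S m = ∅ := by
  rw [Finset.eq_empty_iff_forall_notMem]
  intro y hy
  rw [Finset.mem_inter] at hy
  exact antichain_lt h hm (Finset.mem_of_mem_erase hy.1) (newmins_lt hy.2)

theorem sum_erase_ite {M : Type*} [AddCommMonoid M] (s : Finset V) (a : V) (f : V → M) :
    ∑ m ∈ s.erase a, f m = ∑ m ∈ s, if m = a then 0 else f m := by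
  have h0 : (fun m => if m = a then 0 else f m) a = 0 := by simp
  rw [← Finset.sum_erase s h0]
  exact Finset.sum_congr rfl fun m hm => (if_neg (Finset.mem_erase.1 hm).1).symm

theorem sum_erase_swap (s t : Finset V) (f : V → V → ℕ) :
    ∑ v ∈ t, ∑ m ∈ s.erase v, f v m = ∑ m ∈ s, ∑ v ∈ t.erase m, f v m := by
  have h1 : ∑ v ∈ t, ∑ m ∈ s.erase v, f v m
      = ∑ v ∈ t, ∑ m ∈ s, if m = v then 0 else f v m :=
    Finset.sum_congr rfl fun v _ => sum_erase_ite s v (f v)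
  have h2 : ∑ m ∈ s, ∑ v ∈ t.erase m, f v m
      = ∑ m ∈ s, ∑ v ∈ t, if v = m then 0 else f v m :=
    Finset.sum_congr rfl fun m _ => sum_erase_ite t m (fun v => f v m)
  rw [h1, h2, Finset.sum_comm]
  apply Finset.sum_congr rfl
  intro m _
  apply Finset.sum_congr rfl
  intro v _
  simp only [eq_comm]

end Aux5
section Aux6
variable {V : Type*} [Fintype V] [DecidableEq V] {P : PartialOrder V}

theorem mins_singleton (a : V) : mins P {a} = {a} := by
  letI : PartialOrder V := P
  ext m
  rw [mem_mins]
  constructor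
  · rintro ⟨h, -⟩; exact h
  · rintro h
    refine ⟨h, ?_⟩
    intro z hz hlt
    rw [Finset.mem_singleton] at h hz
    subst h; subst hz
    exact lt_irrefl _ hlt

theorem NN_singleton (a : V) : NN P {a} = 1 := by
  rw [NN_rec P (Finset.singleton_nonempty a), mins_singleton,
    Finset.sum_singleton, Finset.erase_singleton, NN_empty]

theorem maxChainIn_empty : MaxChainIn P ∅ ∅ :=
  ⟨subset_rfl, fun a ha => absurd ha (Finset.notMem_empty a),
    fun C' hC' _ _ => Finset.subset_empty.1 hC'⟩

theorem maxChainIn_singleton (a : V) : MaxChainIn P {a} {a} := by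
  refine ⟨subset_rfl, ?_, ?_⟩
  · intro x hx y hy hxy
    rw [Finset.mem_singleton] at hx hy
    exact absurd (hx.trans hy.symm) hxy
  · intro C' hsub _ hsup
    exact Finset.Subset.antisymm hsub hsup

theorem expansion {S I : Finset V} (hIS : I ⊆ S) (h2 : 2 ≤ S.card) :
    ∑ v ∈ I, NN P (S.erase v)
      = ∑ m ∈ mins P S, ((∑ v ∈ I.erase m, NN P ((S.erase m).erase v)) +
          (if m ∈ I then ∑ y ∈ newmins P S m, NN P ((S.erase m).erase y) else 0)) := by
  classical
  have hstep : ∀ v ∈ I, NN P (S.erase v)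
      = (∑ m ∈ (mins P S).erase v, NN P ((S.erase v).erase m)) +
        (∑ y ∈ newmins P S v, NN P ((S.erase v).erase y)) := by
    intro v hv
    have hvS : v ∈ S := hIS hv
    have hne : (S.erase v).Nonempty := by
      rw [← Finset.card_pos, Finset.card_erase_of_mem hvS]
      omega
    rw [NN_rec P hne, mins_erase P hvS, Finset.sum_union (disj_mins_newmins P)]
  rw [Finset.sum_congr rfl hstep, Finset.sum_add_distrib]
  have hA : ∑ v ∈ I, ∑ m ∈ (mins P S).erase v, NN P ((S.erase v).erase m)
      = ∑ m ∈ mins P S, ∑ v ∈ I.erase m, NN P ((S.erase m).erase v) := by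
    rw [sum_erase_swap]
    apply Finset.sum_congr rfl
    intro m _
    apply Finset.sum_congr rfl
    intro v _
    rw [Finset.erase_right_comm]
  have hB : ∑ v ∈ I, ∑ y ∈ newmins P S v, NN P ((S.erase v).erase y)
      = ∑ m ∈ mins P S, (if m ∈ I then ∑ y ∈ newmins P S m, NN P ((S.erase m).erase y) else 0) := by
    rw [← Finset.sum_filter]
    have e1 : I.filter (· ∈ mins P S) = (mins P S).filter (· ∈ I) := by
      ext x
      simp only [Finset.mem_filter]
      tauto
    rw [← e1]
    refine (Finset.sum_filter_of_ne ?_).symm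
    intro v hv hne
    by_contra hvm
    rw [newmins_eq_empty_of_not_mins P (hIS hv) hvm, Finset.sum_empty] at hne
    exact hne rfl
  rw [hA, hB, ← Finset.sum_add_distrib]

end Aux6
section Main
variable {V : Type*} [Fintype V] [DecidableEq V]

theorem main_induction (P : PartialOrder V) : ∀ S I : Finset V, I ⊆ S →
    ((IsAntichain P.le (↑I : Set V) → (∑ v ∈ I, NN P (S.erase v)) ≤ NN P S)
    ∧ (IsAntichain P.le (↑I : Set V) → (∑ v ∈ I, NN P (S.erase v)) = NN P S → CutIn P S I)
    ∧ (CutIn P S I → NN P S ≤ ∑ v ∈ I, NN P (S.erase v))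
    ∧ (CutIn P S I → (∑ v ∈ I, NN P (S.erase v)) = NN P S → IsAntichain P.le (↑I : Set V))) := by
  intro S
  induction S using Finset.strongInduction with
  | _ S ih =>
  intro I hIS
  rcases Nat.lt_or_ge S.card 2 with hlt2 | h2
  · -- small cases
    by_cases hS0 : S = ∅
    · subst hS0
      rw [Finset.subset_empty] at hIS
      subst hIS
      refine ⟨?_, ?_, ?_, ?_⟩
      · intro _
        rw [Finset.sum_empty]
        exact Nat.zero_le _
      · intro _ h
        rw [Finset.sum_empty, NN_empty] at h
        simp at h
      · intro hcut
        obtain ⟨v, hv, -⟩ := hcut ∅ maxChainIn_empty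
        exact absurd hv (Finset.notMem_empty v)
      · intro hcut _
        obtain ⟨v, hv, -⟩ := hcut ∅ maxChainIn_empty
        exact absurd hv (Finset.notMem_empty v)
    · have h1 : S.card = 1 := by
        have := Finset.card_pos.2 (Finset.nonempty_iff_ne_empty.2 hS0)
        omega
      obtain ⟨a, rfl⟩ := Finset.card_eq_one.1 h1
      rcases Finset.subset_singleton_iff.1 hIS with rfl | rfl
      · refine ⟨?_, ?_, ?_, ?_⟩
        · intro _
          rw [Finset.sum_empty]
          exact Nat.zero_le _
        · intro _ h
          rw [Finset.sum_empty, NN_singleton] at h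
          simp at h
        · intro hcut
          obtain ⟨v, hv, -⟩ := hcut {a} (maxChainIn_singleton a)
          exact absurd hv (Finset.notMem_empty v)
        · intro hcut _
          obtain ⟨v, hv, -⟩ := hcut {a} (maxChainIn_singleton a)
          exact absurd hv (Finset.notMem_empty v)
      · have hval : ∑ v ∈ ({a} : Finset V), NN P (({a} : Finset V).erase v) = NN P ({a} : Finset V) := by
          rw [Finset.sum_singleton, Finset.erase_singleton, NN_empty, NN_singleton]
        refine ⟨fun _ => le_of_eq hval, fun _ _ => ?_, fun _ => le_of_eq hval.symm, fun _ _ => ?_⟩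
        · intro C hC
          obtain ⟨c, hc⟩ := hC.nonempty ⟨a, Finset.mem_singleton_self a⟩
          exact ⟨c, hC.1 hc, hc⟩
        · rw [Finset.coe_singleton]
          exact Set.subsingleton_singleton.isAntichain _
  · -- main case
    have hSne : S.Nonempty := Finset.card_pos.1 (by omega)
    have hrec : NN P S = ∑ m ∈ mins P S, NN P (S.erase m) := NN_rec P hSne
    have hexp := expansion (P := P) hIS h2
    have hJS1 : ∀ m, m ∉ I → I ⊆ S.erase m := by
      intro m hmI x hx
      exact Finset.mem_erase.2 ⟨fun he => hmI (he ▸ hx), hIS hx⟩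
    have hJS2 : ∀ m ∈ I, (I.erase m ∪ newmins P S m) ⊆ S.erase m := by
      intro m _ x hx
      rcases Finset.mem_union.1 hx with hx | hx
      · exact Finset.mem_erase.2 ⟨(Finset.mem_erase.1 hx).1, hIS (Finset.mem_of_mem_erase hx)⟩
      · exact Finset.filter_subset _ _ hx
    have hssub : ∀ m ∈ mins P S, S.erase m ⊂ S := fun m hm =>
      Finset.erase_ssubset (((mem_mins P).1 hm).1)
    have hpart2 : IsAntichain P.le (↑I : Set V) →
        ((∑ v ∈ I, NN P (S.erase v)) ≤ NN P S ∧
          ((∑ v ∈ I, NN P (S.erase v)) = NN P S → CutIn P S I)) := by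
      intro hanti
      have hGeq : ∀ m ∈ mins P S,
          ((∑ v ∈ I.erase m, NN P ((S.erase m).erase v)) +
            (if m ∈ I then ∑ y ∈ newmins P S m, NN P ((S.erase m).erase y) else 0))
          = (if m ∈ I then ∑ w ∈ I.erase m ∪ newmins P S m, NN P ((S.erase m).erase w)
             else ∑ w ∈ I, NN P ((S.erase m).erase w)) := by
        intro m _
        by_cases hmI : m ∈ I
        · rw [if_pos hmI, if_pos hmI, Finset.sum_union
            (Finset.disjoint_left.2 (fun {x} hx hx' => (Finset.eq_empty_iff_forall_notMem.1
              (disj_of_antichain hanti hmI) x) (Finset.mem_inter.2 ⟨hx, hx'⟩)))]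
        · rw [if_neg hmI, if_neg hmI, add_zero, Finset.erase_eq_of_notMem hmI]
      have hUle : ∀ m ∈ mins P S,
          (if m ∈ I then ∑ w ∈ I.erase m ∪ newmins P S m, NN P ((S.erase m).erase w)
             else ∑ w ∈ I, NN P ((S.erase m).erase w)) ≤ NN P (S.erase m) := by
        intro m hm
        by_cases hmI : m ∈ I
        · rw [if_pos hmI]
          exact (ih (S.erase m) (hssub m hm) _ (hJS2 m hmI)).1 (antichain_J hanti hmI hIS)
        · rw [if_neg hmI]
          exact (ih (S.erase m) (hssub m hm) I (hJS1 m hmI)).1 hanti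
      have hTform : (∑ v ∈ I, NN P (S.erase v)) = ∑ m ∈ mins P S,
          (if m ∈ I then ∑ w ∈ I.erase m ∪ newmins P S m, NN P ((S.erase m).erase w)
             else ∑ w ∈ I, NN P ((S.erase m).erase w)) := by
        rw [hexp]
        exact Finset.sum_congr rfl hGeq
      constructor
      · calc ∑ v ∈ I, NN P (S.erase v) = _ := hTform
          _ ≤ ∑ m ∈ mins P S, NN P (S.erase m) := Finset.sum_le_sum hUle
          _ = NN P S := hrec.symm
      · intro heq
        have hsums : (∑ m ∈ mins P S,
            (if m ∈ I then ∑ w ∈ I.erase m ∪ newmins P S m, NN P ((S.erase m).erase w)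
               else ∑ w ∈ I, NN P ((S.erase m).erase w)))
            = ∑ m ∈ mins P S, NN P (S.erase m) := by
          rw [← hTform, heq, hrec]
        have hpt := (Finset.sum_eq_sum_iff_of_le hUle).1 hsums
        have hcutJ1 : ∀ m ∈ mins P S, m ∉ I → CutIn P (S.erase m) I := by
          intro m hm hmI
          refine (ih (S.erase m) (hssub m hm) I (hJS1 m hmI)).2.1 hanti ?_
          have := hpt m hm
          rwa [if_neg hmI] at this
        have hcutJ2 : ∀ m ∈ mins P S, m ∈ I →
            CutIn P (S.erase m) (I.erase m ∪ newmins P S m) := by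
          intro m hm hmI
          refine (ih (S.erase m) (hssub m hm) _ (hJS2 m hmI)).2.1 (antichain_J hanti hmI hIS) ?_
          have := hpt m hm
          rwa [if_pos hmI] at this
        intro C hC
        by_contra hnot
        push_neg at hnot
        obtain ⟨c₀, hc₀C, hleast, hc₀min⟩ := hC.exists_bot (hC.nonempty hSne)
        by_cases hcase : ∃ m ∈ mins P S, m ∉ C ∧ m ∉ I
        · obtain ⟨m, hm, hmC, hmI⟩ := hcase
          obtain ⟨v, hvI, hvC⟩ := hcutJ1 m hm hmI C (hC.anti hmC)
          exact hnot v hvI hvC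
        · by_cases hcase2 : ∃ m ∈ mins P S, m ∈ I
          · obtain ⟨m, hm, hmI⟩ := hcase2
            have hmC : m ∉ C := hnot m hmI
            obtain ⟨w, hwJ, hwC⟩ := hcutJ2 m hm hmI C (hC.anti hmC)
            rcases Finset.mem_union.1 hwJ with hw | hw
            · exact hnot w (Finset.mem_of_mem_erase hw) hwC
            · have hmw : P.lt m w := newmins_lt hw
              rcases eq_or_ne w c₀ with rfl | hne
              · exact ((mem_mins P).1 hc₀min).2 m (((mem_mins P).1 hm).1) hmw
              · have hltw : P.lt c₀ w := by
                  letI : PartialOrder V := P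
                  exact lt_of_le_of_ne (hleast w hwC) (Ne.symm hne)
                have hc₀m : c₀ = m := newmins_lows hw c₀ (((mem_mins P).1 hc₀min).1) hltw
                exact hmC (hc₀m ▸ hc₀C)
          · push_neg at hcase hcase2
            have hminsC : ∀ m ∈ mins P S, m ∈ C := by
              intro m hm
              by_contra hmC
              exact (hcase2 m hm) (hcase m hm hmC)
            have hminseq : mins P S = {c₀} := by
              apply Finset.Subset.antisymm
              · intro m hm
                rw [Finset.mem_singleton]
                by_contra hne
                have hlt : P.lt c₀ m := by
                  letI : PartialOrder V := P
                  exact lt_of_le_of_ne (hleast m (hminsC m hm)) (Ne.symm hne)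
                exact ((mem_mins P).1 hm).2 c₀ (((mem_mins P).1 hc₀min).1) hlt
              · intro x hx
                rw [Finset.mem_singleton] at hx
                exact hx ▸ hc₀min
            have hc₀I : c₀ ∉ I := hcase2 c₀ hc₀min
            obtain ⟨v, hvI, hvC⟩ := hcutJ1 c₀ hc₀min hc₀I (C.erase c₀)
              (maxChainIn_erase_bot hC hminseq hc₀C)
            exact hnot v hvI (Finset.mem_of_mem_erase hvC)
    have hpart4 : CutIn P S I →
        (NN P S ≤ (∑ v ∈ I, NN P (S.erase v)) ∧
          ((∑ v ∈ I, NN P (S.erase v)) = NN P S → IsAntichain P.le (↑I : Set V))) := by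
      intro hcut
      have hcutJ1 : ∀ m ∈ mins P S, m ∉ I → CutIn P (S.erase m) I := fun m hm hmI =>
        cutIn_erase_of_not_mem hcut hm hmI hIS
      have hcutJ2 : ∀ m ∈ mins P S, m ∈ I →
          CutIn P (S.erase m) (I.erase m ∪ newmins P S m) := by
        intro m hm hmI
        refine cutIn_erase_of_mem hcut hm hmI ?_
        rw [← Finset.card_pos, Finset.card_erase_of_mem (((mem_mins P).1 hm).1)]
        omega
      have hU : ∀ m ∈ mins P S, NN P (S.erase m) ≤
          (if m ∈ I then ∑ w ∈ I.erase m ∪ newmins P S m, NN P ((S.erase m).erase w)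
             else ∑ w ∈ I, NN P ((S.erase m).erase w)) := by
        intro m hm
        by_cases hmI : m ∈ I
        · rw [if_pos hmI]
          exact (ih (S.erase m) (hssub m hm) _ (hJS2 m hmI)).2.2.1 (hcutJ2 m hm hmI)
        · rw [if_neg hmI]
          exact (ih (S.erase m) (hssub m hm) I (hJS1 m hmI)).2.2.1 (hcutJ1 m hm hmI)
      have hUG : ∀ m ∈ mins P S,
          (if m ∈ I then ∑ w ∈ I.erase m ∪ newmins P S m, NN P ((S.erase m).erase w)
             else ∑ w ∈ I, NN P ((S.erase m).erase w)) ≤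
          ((∑ v ∈ I.erase m, NN P ((S.erase m).erase v)) +
            (if m ∈ I then ∑ y ∈ newmins P S m, NN P ((S.erase m).erase y) else 0)) := by
        intro m _
        by_cases hmI : m ∈ I
        · rw [if_pos hmI, if_pos hmI]
          calc ∑ w ∈ I.erase m ∪ newmins P S m, NN P ((S.erase m).erase w)
              ≤ (∑ w ∈ I.erase m ∪ newmins P S m, NN P ((S.erase m).erase w)) +
                ∑ w ∈ (I.erase m) ∩ newmins P S m, NN P ((S.erase m).erase w) :=
                Nat.le_add_right _ _
            _ = _ := Finset.sum_union_inter
        · rw [if_neg hmI, if_neg hmI, add_zero, Finset.erase_eq_of_notMem hmI]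
      constructor
      · calc NN P S = ∑ m ∈ mins P S, NN P (S.erase m) := hrec
          _ ≤ _ := Finset.sum_le_sum hU
          _ ≤ _ := Finset.sum_le_sum hUG
          _ = ∑ v ∈ I, NN P (S.erase v) := hexp.symm
      · intro heq
        have hGsum : (∑ m ∈ mins P S,
            ((∑ v ∈ I.erase m, NN P ((S.erase m).erase v)) +
              (if m ∈ I then ∑ y ∈ newmins P S m, NN P ((S.erase m).erase y) else 0)))
            = ∑ m ∈ mins P S, NN P (S.erase m) := by
          rw [← hexp, heq, hrec]
        have hA1 : (∑ m ∈ mins P S, NN P (S.erase m)) = ∑ m ∈ mins P S,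
            (if m ∈ I then ∑ w ∈ I.erase m ∪ newmins P S m, NN P ((S.erase m).erase w)
               else ∑ w ∈ I, NN P ((S.erase m).erase w)) :=
          le_antisymm (Finset.sum_le_sum hU)
            (le_trans (Finset.sum_le_sum hUG) (le_of_eq hGsum))
        have heqpt := (Finset.sum_eq_sum_iff_of_le hU).1 hA1
        have hA2 : (∑ m ∈ mins P S,
            (if m ∈ I then ∑ w ∈ I.erase m ∪ newmins P S m, NN P ((S.erase m).erase w)
               else ∑ w ∈ I, NN P ((S.erase m).erase w)))
            = ∑ m ∈ mins P S,
            ((∑ v ∈ I.erase m, NN P ((S.erase m).erase v)) +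
              (if m ∈ I then ∑ y ∈ newmins P S m, NN P ((S.erase m).erase y) else 0)) :=
          le_antisymm (Finset.sum_le_sum hUG) (le_of_eq (hGsum.trans hA1))
        have heqpt2 := (Finset.sum_eq_sum_iff_of_le hUG).1 hA2
        have hanti1 : ∀ m ∈ mins P S, m ∉ I → IsAntichain P.le (↑I : Set V) := by
          intro m hm hmI
          refine (ih (S.erase m) (hssub m hm) I (hJS1 m hmI)).2.2.2 (hcutJ1 m hm hmI) ?_
          have := heqpt m hm
          rw [if_neg hmI] at this
          exact this.symm
        have hanti2 : ∀ m ∈ mins P S, m ∈ I →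
            IsAntichain P.le (↑(I.erase m ∪ newmins P S m) : Set V) := by
          intro m hm hmI
          refine (ih (S.erase m) (hssub m hm) _ (hJS2 m hmI)).2.2.2 (hcutJ2 m hm hmI) ?_
          have := heqpt m hm
          rw [if_pos hmI] at this
          exact this.symm
        have hdisj : ∀ m ∈ mins P S, m ∈ I → (I.erase m) ∩ newmins P S m = ∅ := by
          intro m hm hmI
          have h2' := heqpt2 m hm
          rw [if_pos hmI, if_pos hmI] at h2'
          have h3' := Finset.sum_union_inter (s₁ := I.erase m) (s₂ := newmins P S m)
            (f := fun w => NN P ((S.erase m).erase w))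
          have hz : ∑ w ∈ (I.erase m) ∩ newmins P S m, NN P ((S.erase m).erase w) = 0 := by
            omega
          rw [Finset.eq_empty_iff_forall_notMem]
          intro x hx
          exact (NN_pos P _).ne' (Finset.sum_eq_zero_iff.1 hz x hx)
        intro a ha b hb hne hle
        have haI : a ∈ I := ha
        have hbI : b ∈ I := hb
        have hlt : P.lt a b := by
          letI : PartialOrder V := P
          exact lt_of_le_of_ne hle hne
        by_cases hab : ∃ m ∈ mins P S, m ≠ a ∧ m ≠ b
        · obtain ⟨m, hm, hma, hmb⟩ := hab
          by_cases hmI : m ∈ I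
          · exact antichain_lt (hanti2 m hm hmI)
              (Finset.mem_union_left _ (Finset.mem_erase.2 ⟨Ne.symm hma, haI⟩))
              (Finset.mem_union_left _ (Finset.mem_erase.2 ⟨Ne.symm hmb, hbI⟩)) hlt
          · exact antichain_lt (hanti1 m hm hmI) haI hbI hlt
        · push_neg at hab
          have hbmin : b ∉ mins P S := fun hb' => ((mem_mins P).1 hb').2 a (hIS haI) hlt
          have hminseq : ∀ m ∈ mins P S, m = a := by
            intro m hm
            by_contra hma
            exact hbmin ((hab m hm hma) ▸ hm)
          have haMin : a ∈ mins P S := by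
            obtain ⟨m, hm⟩ := mins_nonempty P hSne
            exact (hminseq m hm) ▸ hm
          have hale : ∀ x ∈ S, P.le a x := by
            intro x hx
            obtain ⟨m, hm, hle'⟩ := exists_min_le P hx
            exact (hminseq m hm) ▸ hle'
          letI : PartialOrder V := P
          obtain ⟨y, hyT, hymin⟩ := Finset.exists_minimal_old
            (S.filter fun x => P.lt a x ∧ P.le x b)
            ⟨b, Finset.mem_filter.2 ⟨hIS hbI, hlt, le_refl b⟩⟩
          rw [Finset.mem_filter] at hyT
          have hylow : lows P S y = {a} := by
            apply Finset.Subset.antisymm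
            · intro z hz
              rw [mem_lows] at hz
              rw [Finset.mem_singleton]
              by_contra hza
              have hzlt : P.lt a z := lt_of_le_of_ne (hale z hz.1) (Ne.symm hza)
              have hzb : P.le z b := le_trans (le_of_lt hz.2) hyT.2.2
              exact hymin z (Finset.mem_filter.2 ⟨hz.1, hzlt, hzb⟩) hz.2
            · intro z hz
              rw [Finset.mem_singleton] at hz
              subst hz
              exact (mem_lows P).2 ⟨hIS haI, hyT.2.1⟩
          have hyne : y ≠ a := ne_of_gt hyT.2.1
          have hymem : y ∈ newmins P S a := (mem_newmins P).2 ⟨hyT.1, hyne, hylow⟩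
          rcases eq_or_ne y b with heq | hyb
          · have hyI : y ∈ I := by rw [heq]; exact hbI
            have hmem : y ∈ (I.erase a) ∩ newmins P S a :=
              Finset.mem_inter.2 ⟨Finset.mem_erase.2 ⟨hyne, hyI⟩, hymem⟩
            rw [hdisj a haMin haI] at hmem
            exact absurd hmem (Finset.notMem_empty _)
          · have hylt : P.lt y b := lt_of_le_of_ne hyT.2.2 hyb
            exact antichain_lt (hanti2 a haMin haI)
              (Finset.mem_union_right _ hymem)
              (Finset.mem_union_left _ (Finset.mem_erase.2 ⟨Ne.symm hne, hbI⟩)) hylt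
    exact ⟨fun h => (hpart2 h).1, fun h heq => (hpart2 h).2 heq,
      fun hc => (hpart4 hc).1, fun hc heq => (hpart4 hc).2 heq⟩

end Main
section Bridge
variable {W : Type*} [Fintype W] [DecidableEq W]

theorem eCount_eq_NN (Q : PartialOrder W) : eCount W Q = NN Q Finset.univ := by
  classical
  have hok : ∀ f : {f : W ≃ Fin (Fintype.card W) // ∀ a b, Q.lt a b → f a < f b},
      Ok Q Finset.univ (List.ofFn (f.val.symm)) := by
    rintro ⟨f, hf⟩
    refine ⟨List.nodup_ofFn.2 f.symm.injective, ?_, ?_⟩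
    · apply Finset.eq_univ_iff_forall.2
      intro x
      rw [List.mem_toFinset, List.mem_ofFn]
      exact ⟨f x, f.symm_apply_apply x⟩
    · rw [List.pairwise_ofFn]
      intro i j hij hlt
      have := hf _ _ hlt
      simp only [Equiv.apply_symm_apply] at this
      exact absurd hij (not_lt.2 (le_of_lt this))
  rw [eCount, NN]
  apply Nat.card_eq_of_bijective (fun f => ⟨List.ofFn (f.val.symm), hok f⟩)
  constructor
  · intro f g h
    have h2 := List.ofFn_injective (congrArg Subtype.val h)
    have h3 : f.val.symm = g.val.symm := Equiv.coe_fn_injective h2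
    apply Subtype.ext
    rw [← Equiv.symm_symm f.val, h3, Equiv.symm_symm]
  · rintro ⟨l, hl⟩
    have hmem : ∀ x, x ∈ l := fun x =>
      List.mem_toFinset.1 (by rw [hl.2.1]; exact Finset.mem_univ x)
    have hlen : l.length = Fintype.card W := by
      rw [hl.length, Finset.card_univ]
    let e0 := List.Nodup.getEquivOfForallMemList l hl.1 hmem
    let f : W ≃ Fin (Fintype.card W) := e0.symm.trans (finCongr hlen)
    have hsymm : ∀ i : Fin (Fintype.card W),
        f.symm i = l.get (Fin.cast hlen.symm i) := fun i => rfl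
    have hpw := List.pairwise_iff_get.1 hl.2.2
    have hmono : ∀ a b, Q.lt a b → f a < f b := by
      intro a b hlt
      by_contra hnot
      rcases lt_or_eq_of_le (not_lt.1 hnot) with h1 | h1
      · have ha : l.get (Fin.cast hlen.symm (f a)) = a := by
          rw [← hsymm]; exact f.symm_apply_apply a
        have hb : l.get (Fin.cast hlen.symm (f b)) = b := by
          rw [← hsymm]; exact f.symm_apply_apply b
        have hij : (Fin.cast hlen.symm (f b)) < (Fin.cast hlen.symm (f a)) := h1
        have := hpw _ _ hij
        rw [ha, hb] at this
        exact this hlt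
      · have hba : b = a := f.injective h1
        subst hba
        letI : PartialOrder W := Q
        exact lt_irrefl _ hlt
    refine ⟨⟨f, hmono⟩, Subtype.ext ?_⟩
    apply List.ext_get
    · rw [List.length_ofFn, hlen]
    · intro n h1 h2
      rw [List.get_ofFn]
      rfl
end Bridge

section Bridge2
variable {V : Type*} [Fintype V] [DecidableEq V]

theorem NN_del (P : PartialOrder V) (v : V) :
    NN (delOrder P v) (Finset.univ : Finset {x : V // x ≠ v}) = NN P (Finset.univ.erase v) := by
  classical
  have hok : ∀ l : {l : List {x : V // x ≠ v} // Ok (delOrder P v) Finset.univ l},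
      Ok P (Finset.univ.erase v) (l.val.map Subtype.val) := by
    rintro ⟨l, hl⟩
    refine ⟨hl.1.map Subtype.val_injective, ?_, ?_⟩
    · ext x
      rw [List.mem_toFinset, List.mem_map, Finset.mem_erase]
      constructor
      · rintro ⟨y, hy, rfl⟩
        exact ⟨y.prop, Finset.mem_univ _⟩
      · rintro ⟨hx, -⟩
        refine ⟨⟨x, hx⟩, ?_, rfl⟩
        exact List.mem_toFinset.1 (by rw [hl.2.1]; exact Finset.mem_univ _)
    · rw [List.pairwise_map]
      exact hl.2.2
  apply Nat.card_eq_of_bijective (fun l => ⟨l.val.map Subtype.val, hok l⟩)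
  constructor
  · intro l m h
    exact Subtype.ext (List.map_injective_iff.2 Subtype.val_injective (congrArg Subtype.val h))
  · rintro ⟨l, hl⟩
    have hmem : ∀ x ∈ l, x ≠ v := fun x hx =>
      (Finset.mem_erase.1 (by rw [← hl.2.1]; exact List.mem_toFinset.2 hx)).1
    have hOk' : Ok (delOrder P v) Finset.univ (l.pmap Subtype.mk hmem) := by
      refine ⟨List.Nodup.pmap (fun a _ b _ he => congrArg Subtype.val he) hl.1, ?_, ?_⟩
      · apply Finset.eq_univ_iff_forall.2
        rintro ⟨x, hx⟩
        rw [List.mem_toFinset, List.mem_pmap]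
        refine ⟨x, ?_, rfl⟩
        exact List.mem_toFinset.1 (by rw [hl.2.1]; exact Finset.mem_erase.2 ⟨hx, Finset.mem_univ _⟩)
      · rw [List.pairwise_pmap]
        exact hl.2.2.imp fun h _ _ => h
    refine ⟨⟨l.pmap Subtype.mk hmem, hOk'⟩, Subtype.ext ?_⟩
    simp [List.map_pmap]

theorem isCutset_iff_cutIn (P : PartialOrder V) (I : Finset V) :
    IsCutset P I ↔ CutIn P Finset.univ I := by
  constructor
  · intro h C hC
    apply h ↑C
    constructor
    · intro x hx y hy hne
      exact hC.2.1 x hx y hy hne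
    · intro t ht hsub
      have htfin : t.Finite := Set.toFinite t
      have hsub' : C ⊆ htfin.toFinset := by
        intro x hx
        rw [Set.Finite.mem_toFinset]
        exact hsub hx
      have hchain : IsChainF P htfin.toFinset := by
        intro a ha b hb hab
        rw [Set.Finite.mem_toFinset] at ha hb
        exact ht ha hb hab
      have := hC.2.2 htfin.toFinset (Finset.subset_univ _) hchain hsub'
      rw [← Set.Finite.coe_toFinset htfin, this]
  · intro h C hC
    have hfin : C.Finite := Set.toFinite C
    have hmax : MaxChainIn P Finset.univ hfin.toFinset := by
      refine ⟨Finset.subset_univ _, ?_, ?_⟩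
      · intro a ha b hb hab
        rw [Set.Finite.mem_toFinset] at ha hb
        exact hC.1 ha hb hab
      · intro D _ hDchain hsub
        have hDchain' : IsChain P.le (↑D : Set V) := by
          intro a ha b hb hab
          exact hDchain a ha b hb hab
        have hCD : C ⊆ ↑D := by
          intro x hx
          exact hsub (Set.Finite.mem_toFinset hfin |>.2 hx)
        have := hC.2 hDchain' hCD
        apply Finset.coe_injective
        rw [← this, Set.Finite.coe_toFinset]
    obtain ⟨w, hwI, hwC⟩ := h hfin.toFinset hmax
    exact ⟨w, hwI, (Set.Finite.mem_toFinset hfin).1 hwC⟩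

end Bridge2
theorem stmt_10 {V : Type*} [Fintype V] [DecidableEq V] (P : PartialOrder V)
    (I : Finset V) (hI : IsAntichain P.le ↑I ∨ IsCutset P I) :
    eCount V P = ∑ v ∈ I, eCount {x : V // x ≠ v} (delOrder P v) ↔
      IsAntichain P.le ↑I ∧ IsCutset P I := by
  classical
  have hb1 : eCount V P = NN P Finset.univ := eCount_eq_NN P
  have hb2 : ∀ v, eCount {x : V // x ≠ v} (delOrder P v) = NN P (Finset.univ.erase v) :=
    fun v => (eCount_eq_NN (delOrder P v)).trans (NN_del P v)
  have hmain := main_induction P Finset.univ I (Finset.subset_univ I)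
  constructor
  · intro heq
    rw [hb1, Finset.sum_congr rfl (fun v _ => hb2 v)] at heq
    rcases hI with hanti | hcut'
    · refine ⟨hanti, ?_⟩
      rw [isCutset_iff_cutIn]
      exact hmain.2.1 hanti heq.symm
    · exact ⟨hmain.2.2.2 ((isCutset_iff_cutIn P I).1 hcut') heq.symm, hcut'⟩
  · rintro ⟨hanti, hcut'⟩
    rw [hb1, Finset.sum_congr rfl (fun v _ => hb2 v)]
    exact le_antisymm (hmain.2.2.1 ((isCutset_iff_cutIn P I).1 hcut')) (hmain.1 hanti)
end

section
/- Let G = (V,E) be a connected comparability graph. Among all acyclic orientations of E, the ones maximizing the number of linear extensions of the induced poset are exactly the transitive orientations of G (those orientations whose induced poset has comparability graph equal to G). -/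
/-- An orientation of a simple graph `G`: a choice of direction for each edge. -/
structure GraphOrientation {V : Type*} (G : SimpleGraph V) where
  dir : V → V → Prop
  dir_adj : ∀ u v, dir u v → G.Adj u v
  adj_dir : ∀ u v, G.Adj u v → dir u v ∨ dir v u
  asymm : ∀ u v, dir u v → ¬ dir v u

/-- An orientation is acyclic if there is no directed cycle. -/
def GraphOrientation.Acyclic {V : Type*} {G : SimpleGraph V} (O : GraphOrientation G) : Prop :=
  ∀ v, ¬ Relation.TransGen O.dir v v

/-- Linear extensions of the poset induced (by reachability) by an orientation:
bijective labelings of the vertices by `Fin (card V)` compatible with directed paths. -/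
def GraphOrientation.LinExt {V : Type*} [Fintype V] {G : SimpleGraph V} (O : GraphOrientation G) :
    Type _ :=
  {f : V ≃ Fin (Fintype.card V) // ∀ u v, Relation.TransGen O.dir u v → f u < f v}

/-- The number of linear extensions of the poset induced by an orientation. -/
noncomputable def GraphOrientation.numLinExt {V : Type*} [Fintype V] {G : SimpleGraph V}
    (O : GraphOrientation G) : ℕ :=
  Nat.card O.LinExt


/-- `O` is a transitive orientation of `G`: the comparability graph of the poset induced
by `O` (via reachability) is exactly `G`. -/
def GraphOrientation.IsTransitive {V : Type*} {G : SimpleGraph V}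
    (O : GraphOrientation G) : Prop :=
  ∀ u v, (Relation.TransGen O.dir u v ∨ Relation.TransGen O.dir v u) ↔ G.Adj u v

namespace Stmt11Aux
open Finset
attribute [local instance] Classical.propDecidable

set_option linter.unusedSectionVars false

variable {V : Type*} [Fintype V]

def cmp (r : V → V → Prop) : V → V → Prop := fun u v => r u v ∨ r v u

def OP (r : V → V → Prop) (N : ℕ) : Type _ :=
  {f : V → ℕ // (∀ v, f v ≤ N) ∧ ∀ u v, r u v → f u ≤ f v}

def CH (r : V → V → Prop) (N : ℕ) : Type _ :=
  {g : V → ℕ // ∀ s : Finset V, (↑s : Set V).Pairwise (cmp r) → (∑ v ∈ s, g v) ≤ N}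

section rel
variable (r : V → V → Prop)

noncomputable def Mx (f : V → ℕ) (v : V) : ℕ := (univ.filter fun u => r u v).sup f

def cht (v : V) (s : Finset V) : Prop :=
  (↑s : Set V).Pairwise (cmp r) ∧ v ∈ s ∧ ∀ u ∈ s, u ≠ v → r u v

noncomputable def Psi (g : V → ℕ) (v : V) : ℕ :=
  (univ.filter (cht r v)).sup (fun s => ∑ u ∈ s, g u)

noncomputable def Phi (f : V → ℕ) (v : V) : ℕ := f v - Mx r f v

variable (hr : Transitive r) (hi : Irreflexive r)

theorem le_psi {g : V → ℕ} {v : V} {s : Finset V} (h : cht r v s) :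
    ∑ x ∈ s, g x ≤ Psi r g v :=
  Finset.le_sup (f := fun s => ∑ u ∈ s, g u) (by simp [h])



include hr hi in
theorem chain_top : ∀ s : Finset V, (↑s : Set V).Pairwise (cmp r) → s.Nonempty →
    ∃ u ∈ s, ∀ w ∈ s, w ≠ u → r w u := by
  intro s
  induction s using Finset.induction_on with
  | empty => intro _ h; exact absurd h (by simp)
  | @insert a s ha ih =>
    intro hp _
    rcases s.eq_empty_or_nonempty with rfl | hs
    · exact ⟨a, by simp, by simp⟩
    · obtain ⟨u, hu, htop⟩ := ih (hp.mono (by simp [Finset.subset_insert])) hs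
      have hau : a ≠ u := fun h => ha (h ▸ hu)
      have hc : cmp r a u := hp (by simp) (by simp [hu]) hau
      cases hc with
      | inl h =>
        refine ⟨u, by simp [hu], ?_⟩
        intro w hw hwu
        rcases Finset.mem_insert.1 hw with rfl | hw'
        · exact h
        · exact htop w hw' hwu
      | inr h =>
        refine ⟨a, by simp, ?_⟩
        intro w hw hwa
        rcases Finset.mem_insert.1 hw with rfl | hw'
        · exact absurd rfl hwa
        · rcases eq_or_ne w u with rfl | hwu
          · exact h
          · exact hr (htop w hw' hwu) h

theorem cht_singleton (v : V) : cht r v {v} := by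
  refine ⟨by simp [Set.Pairwise], by simp, by simp⟩

include hr hi in
theorem cht_insert {v w : V} {s : Finset V} (h : cht r w s) (hwv : r w v) :
    v ∉ s ∧ cht r v (insert v s) := by
  obtain ⟨hp, hw, htop⟩ := h
  have hvw : v ≠ w := by rintro rfl; exact hi v hwv
  have hvs : v ∉ s := by
    intro hv
    exact hi v (hr (htop v hv hvw) hwv)
  have harg : ∀ u ∈ s, u ≠ v → r u v := by
    intro u hu huv
    rcases eq_or_ne u w with rfl | huw
    · exact hwv
    · exact hr (htop u hu huw) hwv
  refine ⟨hvs, ?_, by simp, ?_⟩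
  · rw [Finset.coe_insert]
    refine Set.pairwise_insert.2 ⟨hp, ?_⟩
    intro u hu huv
    exact ⟨Or.inr (harg u hu (Ne.symm huv)), Or.inl (harg u hu (Ne.symm huv))⟩
  · intro u hu huv
    rcases Finset.mem_insert.1 hu with rfl | hu'
    · exact absurd rfl huv
    · exact harg u hu' huv

theorem psi_le {g : V → ℕ} {N : ℕ}
    (hg : ∀ s : Finset V, (↑s : Set V).Pairwise (cmp r) → (∑ v ∈ s, g v) ≤ N) (v : V) :
    Psi r g v ≤ N := by
  refine Finset.sup_le fun s hs => ?_
  exact hg s (Finset.mem_filter.1 hs).2.1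

include hr hi in
theorem psi_mono {g : V → ℕ} {u v : V} (huv : r u v) : Psi r g u ≤ Psi r g v := by
  refine Finset.sup_le fun s hs => ?_
  have hc := (Finset.mem_filter.1 hs).2
  obtain ⟨hvs, hc'⟩ := cht_insert r hr hi hc huv
  calc ∑ x ∈ s, g x ≤ ∑ x ∈ insert v s, g x := by
        rw [Finset.sum_insert hvs]; exact Nat.le_add_left _ _
    _ ≤ Psi r g v := le_psi r hc' 

include hr hi in
theorem psi_eq (g : V → ℕ) (v : V) : Psi r g v = g v + Mx r (Psi r g) v := by
  apply le_antisymm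
  · refine Finset.sup_le fun s hs => ?_
    obtain ⟨hp, hv, htop⟩ := (Finset.mem_filter.1 hs).2
    have hsum : ∑ x ∈ s, g x = g v + ∑ x ∈ s.erase v, g x := by
      rw [Finset.add_sum_erase _ _ hv]
    rw [hsum]
    rcases (s.erase v).eq_empty_or_nonempty with he | hne
    · rw [he]; simp
    · obtain ⟨u, hu, hutop⟩ := chain_top r hr hi (s.erase v)
        (hp.mono (by simp [Finset.erase_subset])) hne
      have huv : u ≠ v := (Finset.mem_erase.1 hu).1
      have hus : u ∈ s := (Finset.mem_erase.1 hu).2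
      have hruv : r u v := htop u hus huv
      have h1 : ∑ x ∈ s.erase v, g x ≤ Psi r g u := by
        refine Finset.le_sup (f := fun s => ∑ x ∈ s, g x) ?_
        simp only [Finset.mem_filter, Finset.mem_univ, true_and]
        exact ⟨hp.mono (by simp [Finset.erase_subset]), hu, hutop⟩
      have h2 : Psi r g u ≤ Mx r (Psi r g) v :=
        Finset.le_sup (by simp [hruv])
      omega
  · rcases (univ.filter fun u => r u v).eq_empty_or_nonempty with he | hne
    · rw [Mx, he]
      simp only [Finset.sup_empty, bot_eq_zero, Nat.add_zero]
      calc g v = ∑ x ∈ ({v} : Finset V), g x := by simp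
        _ ≤ Psi r g v := le_psi r (cht_singleton r v)
    · obtain ⟨u₀, hu₀, hMx⟩ := Finset.exists_mem_eq_sup _ hne (Psi r g)
      have hru₀ : r u₀ v := (Finset.mem_filter.1 hu₀).2
      have hne' : (univ.filter (cht r u₀)).Nonempty :=
        ⟨{u₀}, by simp [cht_singleton]⟩
      obtain ⟨s₀, hs₀, hPsi⟩ := Finset.exists_mem_eq_sup _ hne' (fun s => ∑ x ∈ s, g x)
      have hc₀ := (Finset.mem_filter.1 hs₀).2
      obtain ⟨hvs₀, hc₀'⟩ := cht_insert r hr hi hc₀ hru₀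
      have hins : g v + ∑ x ∈ s₀, g x = ∑ x ∈ insert v s₀, g x := (Finset.sum_insert hvs₀).symm
      have hPsi' : Psi r g u₀ = ∑ x ∈ s₀, g x := hPsi
      calc g v + Mx r (Psi r g) v
          = g v + Psi r g u₀ := by rw [Mx, hMx]
        _ = g v + ∑ x ∈ s₀, g x := by rw [hPsi']
        _ = ∑ x ∈ insert v s₀, g x := hins
        _ ≤ Psi r g v := le_psi r hc₀' 

theorem Mx_le {f : V → ℕ} (hf : ∀ u v, r u v → f u ≤ f v) (v : V) : Mx r f v ≤ f v := by
  refine Finset.sup_le fun u hu => hf u v (Finset.mem_filter.1 hu).2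

include hr hi in
theorem phi_chain_sum {f : V → ℕ} (hf : ∀ u v, r u v → f u ≤ f v) :
    ∀ s : Finset V, (↑s : Set V).Pairwise (cmp r) →
      ∀ u ∈ s, (∀ w ∈ s, w ≠ u → r w u) → ∑ x ∈ s, Phi r f x ≤ f u := by
  intro s
  induction s using Finset.strongInduction with
  | _ s ih =>
    intro hp u hu htop
    have hsum : ∑ x ∈ s, Phi r f x = Phi r f u + ∑ x ∈ s.erase u, Phi r f x :=
      (Finset.add_sum_erase _ _ hu).symm
    rcases (s.erase u).eq_empty_or_nonempty with he | hne
    · rw [hsum, he]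
      simp only [Finset.sum_empty, Nat.add_zero]
      exact Nat.sub_le _ _
    · obtain ⟨u', hu', htop'⟩ := chain_top r hr hi (s.erase u)
        (hp.mono (by simp [Finset.erase_subset])) hne
      have h1 : ∑ x ∈ s.erase u, Phi r f x ≤ f u' :=
        ih (s.erase u) (Finset.erase_ssubset hu)
          (hp.mono (by simp [Finset.erase_subset])) u' hu' htop'
      have hru' : r u' u := htop u' (Finset.mem_erase.1 hu').2 (Finset.mem_erase.1 hu').1
      have h2 : f u' ≤ Mx r f u := Finset.le_sup (by simp [hru'])
      have h3 : Mx r f u ≤ f u := Mx_le r hf u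
      have h4 : Phi r f u = f u - Mx r f u := rfl
      omega

include hr hi in
theorem phi_mem {f : V → ℕ} {N : ℕ} (hb : ∀ v, f v ≤ N) (hf : ∀ u v, r u v → f u ≤ f v) :
    ∀ s : Finset V, (↑s : Set V).Pairwise (cmp r) → (∑ v ∈ s, Phi r f v) ≤ N := by
  intro s hp
  rcases s.eq_empty_or_nonempty with rfl | hne
  · simp
  · obtain ⟨u, hu, htop⟩ := chain_top r hr hi s hp hne
    exact le_trans (phi_chain_sum r hr hi hf s hp u hu htop) (hb u)

include hr hi in
theorem phi_psi (g : V → ℕ) (v : V) : Phi r (Psi r g) v = g v := by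
  rw [Phi, psi_eq r hr hi g v, Nat.add_sub_cancel]

include hr hi in
theorem psi_phi {f : V → ℕ} (hf : ∀ u v, r u v → f u ≤ f v) : Psi r (Phi r f) = f := by
  letI : IsTrans V r := ⟨hr⟩
  letI : IsIrrefl V r := ⟨hi⟩
  have wf : WellFounded r := Finite.wellFounded_of_trans_of_irrefl r
  funext v
  refine wf.induction (C := fun v => Psi r (Phi r f) v = f v) v (fun x ihx => ?_)
  show Psi r (Phi r f) x = f x
  have hM : Mx r (Psi r (Phi r f)) x = Mx r f x := by
    refine Finset.sup_congr rfl fun u hu => ihx u (Finset.mem_filter.1 hu).2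
  rw [psi_eq r hr hi (Phi r f) x, hM]
  have h3 : Mx r f x ≤ f x := Mx_le r hf x
  have h4 : Phi r f x = f x - Mx r f x := rfl
  omega

include hr hi in
theorem card_OP_eq_card_CH (N : ℕ) : Nat.card (OP r N) = Nat.card (CH r N) := by
  refine Nat.card_congr ?_
  refine
    { toFun := fun f => ⟨Phi r f.1, phi_mem r hr hi f.2.1 f.2.2⟩
      invFun := fun g => ⟨Psi r g.1, fun v => psi_le r g.2 v, fun u v huv => psi_mono r hr hi huv⟩
      left_inv := fun f => Subtype.ext (psi_phi r hr hi f.2.2)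
      right_inv := fun g => Subtype.ext (funext fun v => phi_psi r hr hi g.1 v) }


include hr hi in
theorem exists_topo : ∃ ℓ : V ≃ Fin (Fintype.card V), ∀ u v, r u v → ℓ u < ℓ v := by
  letI P : PartialOrder V :=
  { le := fun a b => a = b ∨ r a b
    le_refl := fun a => Or.inl rfl
    le_trans := by
      rintro a b c (rfl | h) (rfl | h')
      · exact Or.inl rfl
      · exact Or.inr h'
      · exact Or.inr h
      · exact Or.inr (hr h h')
    le_antisymm := by
      rintro a b (rfl | h) (h' | h')
      · rfl
      · rfl
      · exact h'.symm
      · exact absurd (hr h h') (hi a) }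
  letI : Fintype (LinearExtension V) := ‹Fintype V›
  have hc : Fintype.card (LinearExtension V) = Fintype.card V := rfl
  let iso := monoEquivOfFin (LinearExtension V) hc
  let e : V ≃ LinearExtension V := Equiv.refl V
  refine ⟨e.trans iso.symm.toEquiv, ?_⟩
  intro u v huv
  have hne : (toLinearExtension u : LinearExtension V) ≠ toLinearExtension v := by
    intro hh
    have : u = v := hh
    exact hi u (this ▸ huv)
  have hle : (toLinearExtension u : LinearExtension V) ≤ toLinearExtension v :=
    toLinearExtension.monotone (Or.inr huv)
  exact iso.symm.strictMono (lt_of_le_of_ne hle hne)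


end rel

noncomputable def LinCount (r : V → V → Prop) : ℕ :=
  Nat.card {f : V ≃ Fin (Fintype.card V) // ∀ u v, r u v → f u < f v}

instance (r : V → V → Prop) (N : ℕ) : Finite (OP r N) := by
  refine Finite.of_injective (β := V → Fin (N + 1))
    (fun f => fun v => ⟨f.1 v, Nat.lt_succ_of_le (f.2.1 v)⟩) ?_
  intro f g h
  apply Subtype.ext; funext v
  exact congrArg Fin.val (congrFun h v)

theorem lower_bound (r : V → V → Prop) (N : ℕ) :
    LinCount r * (N + 1).choose (Fintype.card V) ≤ Nat.card (OP r N) := by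
  classical
  set n := Fintype.card V with hn
  set Lin := {f : V ≃ Fin n // ∀ u v, r u v → f u < f v} with hLin
  set Sub := {s : Finset (Fin (N + 1)) // s.card = n} with hSub
  have key : ∀ p : Lin × Sub, ∃ f : OP r N,
      ∀ v, f.1 v = (p.2.1.orderEmbOfFin p.2.2 (p.1.1 v) : Fin (N + 1)).val := by
    rintro ⟨⟨ℓ, hℓ⟩, ⟨s, hs⟩⟩
    refine ⟨⟨fun v => (s.orderEmbOfFin hs (ℓ v) : Fin (N + 1)).val, ?_, ?_⟩, fun v => rfl⟩
    · intro v; exact Nat.lt_succ_iff.1 (s.orderEmbOfFin hs (ℓ v)).isLt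
    · intro u v huv
      exact le_of_lt ((s.orderEmbOfFin hs).strictMono (hℓ u v huv))
  choose F hF using key
  have hFinj : Function.Injective F := by
    rintro ⟨⟨ℓ, hℓ⟩, ⟨s, hs⟩⟩ ⟨⟨ℓ', hℓ'⟩, ⟨s', hs'⟩⟩ h
    have hvals : ∀ v, (s.orderEmbOfFin hs (ℓ v) : Fin (N + 1)) =
        (s'.orderEmbOfFin hs' (ℓ' v) : Fin (N + 1)) := by
      intro v
      apply Fin.val_injective
      rw [← hF ⟨⟨ℓ, hℓ⟩, ⟨s, hs⟩⟩ v, ← hF ⟨⟨ℓ', hℓ'⟩, ⟨s', hs'⟩⟩ v, h]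
    have himg : ∀ (t : Finset (Fin (N+1))) (ht : t.card = n) (m : V ≃ Fin n),
        t = univ.image (fun v => t.orderEmbOfFin ht (m v)) := by
      intro t ht m
      apply Finset.ext
      intro x
      simp only [Finset.mem_image, Finset.mem_univ, true_and]
      constructor
      · intro hx
        have : x ∈ Set.range (t.orderEmbOfFin ht) := by
          rw [Finset.range_orderEmbOfFin]; exact hx
        obtain ⟨i, hi⟩ := this
        exact ⟨m.symm i, by simp [hi]⟩
      · rintro ⟨v, rfl⟩
        exact Finset.orderEmbOfFin_mem _ _ _
    have hss : s = s' := by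
      rw [himg s hs ℓ, himg s' hs' ℓ']
      apply Finset.image_congr
      intro v _
      exact hvals v
    subst hss
    have hll : ℓ = ℓ' := by
      apply Equiv.ext
      intro v
      have := hvals v
      exact (s.orderEmbOfFin hs).injective this
    subst hll
    simp
  have h1 : LinCount r = Nat.card Lin := rfl
  have h2 : Nat.card Sub = (N + 1).choose n := by
    rw [hSub, Nat.card_eq_fintype_card, Fintype.card_finset_len, Fintype.card_fin]
  calc LinCount r * (N + 1).choose n
      = Nat.card Lin * Nat.card Sub := by rw [h1, h2]
    _ = Nat.card (Lin × Sub) := (Nat.card_prod _ _).symm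
    _ ≤ Nat.card (OP r N) := Nat.card_le_card_of_injective F hFinj

theorem upper_bound (r : V → V → Prop) (hr : Transitive r) (hi : Irreflexive r) (N : ℕ) :
    Nat.card (OP r N) ≤ LinCount r * (N + Fintype.card V).choose (Fintype.card V) := by
  classical
  set n := Fintype.card V with hn
  obtain ⟨ℓ₀, hℓ₀⟩ := exists_topo r hr hi
  have hsort : ∀ f : OP r N, ∃ ℓ : V ≃ Fin n, (∀ u v, r u v → ℓ u < ℓ v) ∧
      (∀ u v, ℓ u < ℓ v → f.1 u ≤ f.1 v) := by
    rintro ⟨f, hfb, hfm⟩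
    let key : V → ℕ ×ₗ Fin n := fun v => toLex (f v, ℓ₀ v)
    have hinj : Function.Injective key := by
      intro u v h
      have h2 : ℓ₀ u = ℓ₀ v := congrArg (fun p => (ofLex p).2) h
      exact ℓ₀.injective h2
    letI L : LinearOrder V := LinearOrder.lift' key hinj
    have hlt : ∀ u v : V, key u < key v → u < v := by
      intro u v h
      refine lt_iff_le_not_ge.2 ⟨le_of_lt h, fun hc => ?_⟩
      exact absurd (lt_of_lt_of_le h hc) (lt_irrefl _)
    have hcard : Fintype.card V = n := hn.symm
    let iso := monoEquivOfFin V hcard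
    have hkey : ∀ u v : V, f u < f v ∨ (f u = f v ∧ ℓ₀ u < ℓ₀ v) → key u < key v := by
      intro u v h
      exact Prod.Lex.lt_iff.2 h
    refine ⟨iso.symm.toEquiv, ?_, ?_⟩
    · intro u v huv
      refine iso.symm.strictMono (hlt u v (hkey u v ?_))
      rcases lt_or_eq_of_le (hfm u v huv) with h | h
      · exact Or.inl h
      · exact Or.inr ⟨h, hℓ₀ u v huv⟩
    · intro u v hl
      by_contra hc
      push_neg at hc
      have : key v < key u := hkey v u (Or.inl hc)
      exact absurd (iso.symm.strictMono (hlt v u this)) (fun hh => absurd hl (by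
        exact not_lt_of_gt hh))
  choose sortF hsort1 hsort2 using hsort
  have key2 : ∀ f : OP r N, ∃ p : ({m : V ≃ Fin n // ∀ u v, r u v → m u < m v} ×
      {s : Finset (Fin (N + n)) // s.card = n}),
      p.1.1 = sortF f ∧ ∀ i : Fin n,
        (p.2.1.orderEmbOfFin p.2.2 i : Fin (N + n)).val = f.1 ((sortF f).symm i) + i := by
    intro f
    set ℓ := sortF f with hℓ
    have hwb : ∀ i : Fin n, f.1 (ℓ.symm i) + i < N + n :=
      fun i => Nat.add_lt_add_of_le_of_lt (f.2.1 _) i.isLt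
    let w : Fin n → Fin (N + n) := fun i => ⟨f.1 (ℓ.symm i) + i, hwb i⟩
    have hwmono : StrictMono w := by
      intro i j hij
      have h1 : ℓ (ℓ.symm i) < ℓ (ℓ.symm j) := by simpa using hij
      have h2 : f.1 (ℓ.symm i) ≤ f.1 (ℓ.symm j) := hsort2 f _ _ h1
      exact Fin.mk_lt_mk.2 (lt_of_le_of_lt (Nat.add_le_add_right h2 i)
        (Nat.add_lt_add_left hij _))
    let t : Finset (Fin (N + n)) := univ.image w
    have ht : t.card = n := by
      rw [Finset.card_image_of_injective _ hwmono.injective, card_univ, Fintype.card_fin]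
    have hw : w = t.orderEmbOfFin ht :=
      Finset.orderEmbOfFin_unique ht (fun x => Finset.mem_image_of_mem _ (mem_univ x)) hwmono
    refine ⟨⟨⟨ℓ, hsort1 f⟩, ⟨t, ht⟩⟩, rfl, fun i => ?_⟩
    rw [← hw]
  choose F hF1 hF2 using key2
  have hFinj : Function.Injective F := by
    intro f g h
    have hℓ : sortF f = sortF g := by rw [← hF1 f, ← hF1 g, h]
    apply Subtype.ext; funext v
    have h1 := hF2 f (sortF f v)
    have h2 := hF2 g (sortF g v)
    rw [h] at h1
    rw [← hℓ] at h2
    have := h1.symm.trans h2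
    simpa using this
  have h2 : Nat.card {s : Finset (Fin (N + n)) // s.card = n} = (N + n).choose n := by
    rw [Nat.card_eq_fintype_card, Fintype.card_finset_len, Fintype.card_fin]
  calc Nat.card (OP r N) ≤ Nat.card ({m : V ≃ Fin n // ∀ u v, r u v → m u < m v} ×
        {s : Finset (Fin (N + n)) // s.card = n}) := Nat.card_le_card_of_injective F hFinj
    _ = LinCount r * (N + n).choose n := by rw [Nat.card_prod, h2]; rfl

theorem CH_pt_le {r : V → V → Prop} {N : ℕ} (g : CH r N) (v : V) : g.1 v ≤ N := by
  have := g.2 {v} (by simp [Set.Pairwise])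
  simpa using this

instance (r : V → V → Prop) (N : ℕ) : Finite (CH r N) := by
  refine Finite.of_injective (β := V → Fin (N + 1))
    (fun g => fun v => ⟨g.1 v, Nat.lt_succ_of_le (CH_pt_le g v)⟩) ?_
  intro f g h
  apply Subtype.ext; funext v
  exact congrArg Fin.val (congrFun h v)

theorem card_CH_le (r₁ r₂ : V → V → Prop)
    (hsub : ∀ u v, u ≠ v → cmp r₂ u v → cmp r₁ u v) (N : ℕ) :
    Nat.card (CH r₁ N) ≤ Nat.card (CH r₂ N) := by
  refine Nat.card_le_card_of_injective
    (fun g => ⟨g.1, fun s hs => g.2 s fun x hx y hy hxy => hsub x y hxy (hs hx hy hxy)⟩) ?_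
  intro f g h
  have h' := congrArg Subtype.val h
  exact Subtype.ext h' 

noncomputable def ghf (a b : V) (N M : ℕ) (h : V → Fin (M + 1)) (v : V) : ℕ :=
  if v = a ∨ v = b then N / 2 + 1 + (h v).val else (h v).val

theorem card_CH_add (r₁ r₂ : V → V → Prop) (hi₁ : Irreflexive r₁)
    (hsub : ∀ u v, u ≠ v → cmp r₂ u v → cmp r₁ u v)
    (a b : V) (hab : r₁ a b) (hncmp : ¬ cmp r₂ a b) (N m : ℕ) (hm : 0 < m)
    (hN : N / 2 + (Fintype.card V + 1) * m ≤ N) :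
    Nat.card (CH r₁ N) + m ^ Fintype.card V ≤ Nat.card (CH r₂ N) := by
  classical
  set n := Fintype.card V with hn
  have hne : a ≠ b := fun h => hi₁ a (h ▸ hab)
  obtain ⟨M, rfl⟩ : ∃ M, m = M + 1 := ⟨m - 1, by omega⟩
  -- the perturbed functions
  have hgh_mem : ∀ h, ∀ s : Finset V, (↑s : Set V).Pairwise (cmp r₂) →
      (∑ v ∈ s, ghf a b N M h v) ≤ N := by
    intro h s hs
    have hnab : ¬ (a ∈ s ∧ b ∈ s) := by
      rintro ⟨ha, hb⟩
      exact hncmp (hs ha hb hne)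
    have hbig : ∀ t : Finset V, (∀ v ∈ t, v ≠ a ∧ v ≠ b) → ∑ v ∈ t, ghf a b N M h v ≤ n * M := by
      intro t ht
      calc ∑ v ∈ t, ghf a b N M h v ≤ ∑ _v ∈ t, M := by
            refine Finset.sum_le_sum fun v hv => ?_
            have := ht v hv
            simp only [ghf, if_neg (by tauto : ¬(v = a ∨ v = b))]
            exact Nat.lt_succ_iff.1 (h v).isLt
        _ = t.card * M := by rw [Finset.sum_const, smul_eq_mul]
        _ ≤ n * M := Nat.mul_le_mul_right M (by rw [hn]; exact Finset.card_le_univ t)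
    have hprod : n * M + (M + 1) ≤ (n + 1) * (M + 1) := by ring_nf; omega
    by_cases ha : a ∈ s
    · have hb : b ∉ s := fun hb => hnab ⟨ha, hb⟩
      have hsplit : ∑ v ∈ s, ghf a b N M h v = ghf a b N M h a + ∑ v ∈ s.erase a, ghf a b N M h v :=
        (Finset.add_sum_erase _ _ ha).symm
      have h1 : ∑ v ∈ s.erase a, ghf a b N M h v ≤ n * M := by
        refine hbig _ fun v hv => ⟨(Finset.mem_erase.1 hv).1, fun hvb => ?_⟩
        exact hb (hvb ▸ (Finset.mem_erase.1 hv).2)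
      have h2 : ghf a b N M h a = N / 2 + 1 + (h a).val := by simp [ghf]
      have h3 : (h a).val ≤ M := Nat.lt_succ_iff.1 (h a).isLt
      have : (n+1) * (M+1) ≤ N - N/2 := by omega
      omega
    · by_cases hb : b ∈ s
      · have hsplit : ∑ v ∈ s, ghf a b N M h v = ghf a b N M h b + ∑ v ∈ s.erase b, ghf a b N M h v :=
          (Finset.add_sum_erase _ _ hb).symm
        have h1 : ∑ v ∈ s.erase b, ghf a b N M h v ≤ n * M := by
          refine hbig _ fun v hv => ⟨fun hva => ?_, (Finset.mem_erase.1 hv).1⟩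
          exact ha (hva ▸ (Finset.mem_erase.1 hv).2)
        have h2 : ghf a b N M h b = N / 2 + 1 + (h b).val := by simp [ghf]
        have h3 : (h b).val ≤ M := Nat.lt_succ_iff.1 (h b).isLt
        have : (n+1) * (M+1) ≤ N - N/2 := by omega
        omega
      · have h1 : ∑ v ∈ s, ghf a b N M h v ≤ n * M := by
          refine hbig _ fun v hv => ⟨fun hva => ha (hva ▸ hv), fun hvb => hb (hvb ▸ hv)⟩
        have : (n+1) * (M+1) ≤ N := by omega
        omega
  -- the combined injection
  let F : CH r₁ N ⊕ (V → Fin (M + 1)) → CH r₂ N := fun x =>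
    match x with
    | Sum.inl g => ⟨g.1, fun s hs => g.2 s fun x hx y hy hxy => hsub x y hxy (hs hx hy hxy)⟩
    | Sum.inr h => ⟨ghf a b N M h, hgh_mem h⟩
  have hval : ∀ g : CH r₁ N, g.1 a + g.1 b ≤ N := by
    intro g
    have hpair : (↑({a, b} : Finset V) : Set V).Pairwise (cmp r₁) := by
      intro x hx y hy hxy
      simp only [Finset.coe_insert, Finset.coe_singleton, Set.mem_insert_iff,
        Set.mem_singleton_iff] at hx hy
      rcases hx with rfl | rfl <;> rcases hy with rfl | rfl
      · exact absurd rfl hxy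
      · exact Or.inl hab
      · exact Or.inr hab
      · exact absurd rfl hxy
    have := g.2 {a, b} hpair
    rwa [Finset.sum_pair hne] at this
  have hFinj : Function.Injective F := by
    rintro (g | h) (g' | h') hFeq
    · have h' := congrArg Subtype.val hFeq
      exact congrArg Sum.inl (Subtype.ext h')
    · exfalso
      have hv : g.1 = ghf a b N M h' := congrArg Subtype.val hFeq
      have h1 := hval g
      have h2a : g.1 a = N / 2 + 1 + (h' a).val := by rw [hv]; simp [ghf]
      have h2b : g.1 b = N / 2 + 1 + (h' b).val := by rw [hv]; simp [ghf]
      omega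
    · exfalso
      have hv : ghf a b N M h = g'.1 := congrArg Subtype.val hFeq
      have h1 := hval g'
      have h2a : g'.1 a = N / 2 + 1 + (h a).val := by rw [← hv]; simp [ghf]
      have h2b : g'.1 b = N / 2 + 1 + (h b).val := by rw [← hv]; simp [ghf]
      omega
    · refine congrArg Sum.inr ?_
      have hv : ghf a b N M h = ghf a b N M h' := congrArg Subtype.val hFeq
      funext v
      apply Fin.val_injective
      have := congrFun hv v
      by_cases hvab : v = a ∨ v = b
      · simp only [ghf, if_pos hvab] at this; omega
      · simpa [ghf, if_neg hvab] using this
  have hcard := Nat.card_le_card_of_injective F hFinj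
  rwa [Nat.card_sum, Nat.card_eq_fintype_card (α := V → Fin (M + 1)), Fintype.card_fun,
    Fintype.card_fin] at hcard

theorem pow_succ_le (b d : ℕ) : ∀ k : ℕ, (b + d) ^ (k+1) ≤ b ^ (k+1) + (k+1) * d * (b + d) ^ k
  | 0 => by simpa using by omega
  | (k+1) => by
    have ih := pow_succ_le b d k
    have h1 : (b + d) ^ (k+2) = (b + d) ^ (k+1) * (b + d) := pow_succ _ _
    have h2 : b ^ (k+1) ≤ (b + d) ^ (k+1) := Nat.pow_le_pow_left (Nat.le_add_right _ _) _
    calc (b + d) ^ (k+2) = (b + d) ^ (k+1) * (b + d) := h1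
      _ ≤ (b ^ (k+1) + (k+1) * d * (b + d) ^ k) * (b + d) :=
          Nat.mul_le_mul_right _ ih
      _ = b ^ (k+1) * b + b ^ (k+1) * d + (k+1) * d * ((b + d) ^ k * (b + d)) := by ring
      _ = b ^ (k+2) + b ^ (k+1) * d + (k+1) * d * (b + d) ^ (k+1) := by
          rw [← pow_succ, ← pow_succ]
      _ ≤ b ^ (k+2) + (b + d) ^ (k+1) * d + (k+1) * d * (b + d) ^ (k+1) := by
          exact Nat.add_le_add_right (Nat.add_le_add_left (Nat.mul_le_mul_right _ h2) _) _
      _ = b ^ (k+2) + (k+2) * d * (b + d) ^ (k+1) := by ring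

theorem pow_gap (X Y k : ℕ) (hXY : X ≤ Y) :
    Y ^ (k+1) ≤ X ^ (k+1) + (k+1) * (Y - X) * Y ^ k := by
  obtain ⟨d, rfl⟩ : ∃ d, Y = X + d := ⟨Y - X, by omega⟩
  have := pow_succ_le X d k
  have hd : X + d - X = d := by omega
  rw [hd]
  exact this

theorem descF_low (k N : ℕ) :
    (N + 2 - (k+1)) ^ (k+1) ≤ (k+1).factorial * ((N+1).choose (k+1)) := by
  have h1 := Nat.pow_sub_le_descFactorial (N+1) (k+1)
  rw [Nat.descFactorial_eq_factorial_mul_choose] at h1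
  have he : N + 1 + 1 - (k+1) = N + 2 - (k+1) := by omega
  rwa [he] at h1

theorem descF_high (k N : ℕ) (h3 : 3*(k+1) ≤ N) :
    (k+1).factorial * ((N+(k+1)).choose (k+1)) ≤
      (N + 2 - (k+1)) ^ (k+1) + (k+1) * (2*k) * (2^k * (N + 2 - (k+1)) ^ k) := by
  set X := N + 2 - (k+1) with hX
  set Y := N + (k+1) with hY
  have hXY : X ≤ Y := by omega
  have h1 : (k+1).factorial * ((N+(k+1)).choose (k+1)) = Y.descFactorial (k+1) :=
    (Nat.descFactorial_eq_factorial_mul_choose _ _).symm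
  have h2 : Y.descFactorial (k+1) ≤ Y ^ (k+1) := Nat.descFactorial_le_pow _ _
  have h3' : Y ^ (k+1) ≤ X ^ (k+1) + (k+1) * (Y - X) * Y ^ k := pow_gap X Y k hXY
  have h4 : Y - X = 2*k := by omega
  have h5 : Y ≤ 2 * X := by omega
  have h6 : Y ^ k ≤ 2^k * X ^ k := by
    calc Y ^ k ≤ (2*X) ^ k := Nat.pow_le_pow_left h5 k
      _ = 2^k * X^k := mul_pow _ _ _
  calc (k+1).factorial * ((N+(k+1)).choose (k+1)) = Y.descFactorial (k+1) := h1
    _ ≤ Y ^ (k+1) := h2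
    _ ≤ X ^ (k+1) + (k+1) * (Y - X) * Y ^ k := h3'
    _ ≤ X ^ (k+1) + (k+1) * (2*k) * (2^k * X ^ k) := by
        rw [h4]
        exact Nat.add_le_add_left (Nat.mul_le_mul_left _ h6) _

theorem num_main (e₁ e₂ n : ℕ)
    (h : ∀ N, e₁ * (N+1).choose n ≤ e₂ * (N+n).choose n) : e₁ ≤ e₂ := by
  rcases Nat.eq_zero_or_pos n with rfl | hn
  · simpa using h 0
  obtain ⟨k, rfl⟩ : ∃ k, n = k + 1 := ⟨n-1, by omega⟩
  by_contra hcon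
  push_neg at hcon
  set K := (k+1) * (2*k) * 2^k + 1 with hK
  set N := (e₂+1) * K + 3*(k+1) with hNdef
  have hN3 : 3*(k+1) ≤ N := by
    rw [hNdef]; omega
  set X := N + 2 - (k+1) with hX
  have hXpos : 0 < X := by omega
  have hmul := Nat.mul_le_mul_left ((k+1).factorial) (h N)
  have hlhs : e₁ * X ^ (k+1) ≤ (k+1).factorial * (e₁ * (N+1).choose (k+1)) := by
    rw [Nat.mul_left_comm]
    exact Nat.mul_le_mul_left e₁ (descF_low k N)
  have hrhs : (k+1).factorial * (e₂ * (N+(k+1)).choose (k+1)) ≤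
      e₂ * (X ^ (k+1) + (k+1) * (2*k) * (2^k * X ^ k)) := by
    rw [Nat.mul_left_comm]
    exact Nat.mul_le_mul_left e₂ (descF_high k N hN3)
  have hchain : e₁ * X ^ (k+1) ≤ e₂ * X ^ (k+1) + e₂ * ((k+1) * (2*k) * (2^k * X ^ k)) := by
    calc e₁ * X ^ (k+1) ≤ (k+1).factorial * (e₁ * (N+1).choose (k+1)) := hlhs
      _ ≤ (k+1).factorial * (e₂ * (N+(k+1)).choose (k+1)) := hmul
      _ ≤ e₂ * (X ^ (k+1) + (k+1) * (2*k) * (2^k * X ^ k)) := hrhs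
      _ = e₂ * X ^ (k+1) + e₂ * ((k+1) * (2*k) * (2^k * X ^ k)) := by ring
  have hsucc : (e₂+1) * X ^ (k+1) ≤ e₁ * X ^ (k+1) :=
    Nat.mul_le_mul_right _ hcon
  have hcancel : X ^ (k+1) ≤ e₂ * ((k+1) * (2*k) * (2^k * X ^ k)) := by
    have : (e₂+1) * X ^ (k+1) = e₂ * X ^ (k+1) + X ^ (k+1) := by ring
    omega
  have hXk : X ^ (k+1) = X * X ^ k := by rw [pow_succ]; ring
  have hfin : X * X ^ k ≤ (e₂ * ((k+1) * (2*k) * 2^k)) * X ^ k := by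
    rw [← hXk]
    calc X ^ (k+1) ≤ e₂ * ((k+1) * (2*k) * (2^k * X ^ k)) := hcancel
      _ = (e₂ * ((k+1) * (2*k) * 2^k)) * X ^ k := by ring
  have hXle : X ≤ e₂ * ((k+1) * (2*k) * 2^k) :=
    Nat.le_of_mul_le_mul_right hfin (pow_pos hXpos k)
  have hKbig : e₂ * ((k+1) * (2*k) * 2^k) < X := by
    have h1 : (k+1) * (2*k) * 2^k < K := by rw [hK]; omega
    have h2 : e₂ * ((k+1) * (2*k) * 2^k) ≤ e₂ * K := Nat.mul_le_mul_left _ (le_of_lt h1)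
    have h3 : e₂ * K < (e₂ + 1) * K := by
      have hKpos : 0 < K := by rw [hK]; omega
      calc e₂ * K < e₂ * K + K := by omega
        _ = (e₂+1) * K := by ring
    have h4 : (e₂+1) * K ≤ X := by
      rw [hX, hNdef]
      omega
    omega
  omega

theorem num_main_lt (e₁ e₂ n : ℕ) (hn : 0 < n)
    (h : ∀ N m, 0 < m → N / 2 + (n+1) * m ≤ N →
      e₁ * (N+1).choose n + m ^ n ≤ e₂ * (N+n).choose n) : e₁ < e₂ := by
  obtain ⟨k, rfl⟩ : ∃ k, n = k + 1 := ⟨n-1, by omega⟩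
  by_contra hcon
  push_neg at hcon   -- e₂ ≤ e₁
  set K := (k+1) * (2*k) * 2^k + 1 with hK
  set D := (5*(k+2)) ^ k with hD
  set m := e₁ * K * D + 1 with hm
  have hmpos : 0 < m := by omega
  set N := 4 * ((k+2) * m) with hNdef
  have htm : 0 < (k+2) * m := by positivity
  have hNdiv : N / 2 + ((k+1)+1) * m ≤ N := by
    have h1 : N / 2 = 2 * ((k+2) * m) := by omega
    have h2 : ((k+1)+1) * m = (k+2) * m := by ring
    omega
  have hN3 : 3*(k+1) ≤ N := by
    have : 3 * (k+1) ≤ 4 * ((k+2) * 1) := by omega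
    have h2 : 4 * ((k+2) * 1) ≤ N := by
      rw [hNdef]
      exact Nat.mul_le_mul_left _ (Nat.mul_le_mul_left _ hmpos)
    omega
  set X := N + 2 - (k+1) with hX
  have hXpos : 0 < X := by omega
  have hspec := h N m hmpos hNdiv
  have hmul := Nat.mul_le_mul_left ((k+1).factorial) hspec
  have hfacpos : 0 < (k+1).factorial := Nat.factorial_pos _
  -- lower bound for LHS
  have hlhs : e₁ * X ^ (k+1) + m ^ (k+1) ≤
      (k+1).factorial * (e₁ * (N+1).choose (k+1) + m ^ (k+1)) := by
    rw [Nat.mul_add]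
    have h1 : e₁ * X ^ (k+1) ≤ (k+1).factorial * (e₁ * (N+1).choose (k+1)) := by
      rw [Nat.mul_left_comm]
      exact Nat.mul_le_mul_left e₁ (descF_low k N)
    have h2 : m ^ (k+1) ≤ (k+1).factorial * m ^ (k+1) :=
      Nat.le_mul_of_pos_left _ hfacpos
    omega
  have hrhs : (k+1).factorial * (e₂ * (N+(k+1)).choose (k+1)) ≤
      e₁ * X ^ (k+1) + e₁ * ((k+1) * (2*k) * (2^k * X ^ k)) := by
    calc (k+1).factorial * (e₂ * (N+(k+1)).choose (k+1))
        ≤ (k+1).factorial * (e₁ * (N+(k+1)).choose (k+1)) := by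
          exact Nat.mul_le_mul_left _ (Nat.mul_le_mul_right _ hcon)
      _ = e₁ * ((k+1).factorial * (N+(k+1)).choose (k+1)) := by ring
      _ ≤ e₁ * ((X ^ (k+1) + (k+1) * (2*k) * (2^k * X ^ k))) :=
          Nat.mul_le_mul_left e₁ (descF_high k N hN3)
      _ = e₁ * X ^ (k+1) + e₁ * ((k+1) * (2*k) * (2^k * X ^ k)) := by ring
  have hcancel : m ^ (k+1) ≤ e₁ * ((k+1) * (2*k) * (2^k * X ^ k)) := by
    have h5 := le_trans hlhs (le_trans hmul hrhs)
    exact Nat.le_of_add_le_add_left h5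
  -- bound X by m
  have hXm : X ≤ 5 * (k+2) * m := by
    have : N + 2 ≤ 5 * (k+2) * m := by
      rw [hNdef]
      have h2m : 2 * 1 ≤ (k+2) * m := Nat.mul_le_mul (by omega) hmpos
      have : 4 * ((k+2)*m) + 2 ≤ 4 * ((k+2)*m) + (k+2)*m := by omega
      calc 4 * ((k+2)*m) + 2 ≤ 4 * ((k+2)*m) + (k+2)*m := this
        _ = 5 * (k+2) * m := by ring
    omega
  have hXk : X ^ k ≤ D * m ^ k := by
    calc X ^ k ≤ (5*(k+2)*m) ^ k := Nat.pow_le_pow_left hXm k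
      _ = (5*(k+2))^k * m ^ k := by rw [mul_pow]
      _ = D * m ^ k := by rw [hD]
  have hfin : m * m ^ k ≤ (e₁ * K * D) * m ^ k := by
    calc m * m ^ k = m ^ (k+1) := by rw [pow_succ]; ring
      _ ≤ e₁ * ((k+1) * (2*k) * (2^k * X ^ k)) := hcancel
      _ = (e₁ * ((k+1) * (2*k) * 2^k)) * X ^ k := by ring
      _ ≤ (e₁ * K) * X ^ k := by
          refine Nat.mul_le_mul_right _ (Nat.mul_le_mul_left _ ?_)
          rw [hK]; omega
      _ ≤ (e₁ * K) * (D * m ^ k) := Nat.mul_le_mul_left _ hXk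
      _ = (e₁ * K * D) * m ^ k := by ring
  have hmle : m ≤ e₁ * K * D :=
    Nat.le_of_mul_le_mul_right hfin (pow_pos hmpos k)
  omega


theorem main_le (r₁ r₂ : V → V → Prop) (h₁t : Transitive r₁) (h₁i : Irreflexive r₁)
    (h₂t : Transitive r₂) (h₂i : Irreflexive r₂)
    (hsub : ∀ u v, u ≠ v → cmp r₂ u v → cmp r₁ u v) :
    LinCount r₁ ≤ LinCount r₂ := by
  refine num_main _ _ (Fintype.card V) fun N => ?_
  calc LinCount r₁ * (N+1).choose (Fintype.card V)
      ≤ Nat.card (OP r₁ N) := lower_bound r₁ N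
    _ = Nat.card (CH r₁ N) := card_OP_eq_card_CH r₁ h₁t h₁i N
    _ ≤ Nat.card (CH r₂ N) := card_CH_le r₁ r₂ hsub N
    _ = Nat.card (OP r₂ N) := (card_OP_eq_card_CH r₂ h₂t h₂i N).symm
    _ ≤ LinCount r₂ * (N + Fintype.card V).choose (Fintype.card V) :=
        upper_bound r₂ h₂t h₂i N

theorem main_lt (r₁ r₂ : V → V → Prop) (h₁t : Transitive r₁) (h₁i : Irreflexive r₁)
    (h₂t : Transitive r₂) (h₂i : Irreflexive r₂)
    (hsub : ∀ u v, u ≠ v → cmp r₂ u v → cmp r₁ u v)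
    (a b : V) (hab : r₁ a b) (hncmp : ¬ cmp r₂ a b) :
    LinCount r₁ < LinCount r₂ := by
  have hn : 0 < Fintype.card V := Fintype.card_pos_iff.2 ⟨a⟩
  refine num_main_lt _ _ (Fintype.card V) hn fun N m hm hN => ?_
  calc LinCount r₁ * (N+1).choose (Fintype.card V) + m ^ (Fintype.card V)
      ≤ Nat.card (OP r₁ N) + m ^ (Fintype.card V) :=
        Nat.add_le_add_right (lower_bound r₁ N) _
    _ = Nat.card (CH r₁ N) + m ^ (Fintype.card V) := by
        rw [card_OP_eq_card_CH r₁ h₁t h₁i N]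
    _ ≤ Nat.card (CH r₂ N) := card_CH_add r₁ r₂ h₁i hsub a b hab hncmp N m hm hN
    _ = Nat.card (OP r₂ N) := (card_OP_eq_card_CH r₂ h₂t h₂i N).symm
    _ ≤ LinCount r₂ * (N + Fintype.card V).choose (Fintype.card V) :=
        upper_bound r₂ h₂t h₂i N

end Stmt11Aux

theorem stmt_11 {V : Type*} [Fintype V] (G : SimpleGraph V) (hconn : G.Connected)
    (hcomp : ∃ P : PartialOrder V, ∀ u v, G.Adj u v ↔ u ≠ v ∧ (P.le u v ∨ P.le v u))
    (O : GraphOrientation G) (hO : O.Acyclic) :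
    (∀ O' : GraphOrientation G, O'.Acyclic → O'.numLinExt ≤ O.numLinExt) ↔
      O.IsTransitive := by
  classical
  -- notation
  have hRtrans : ∀ O' : GraphOrientation G, Transitive (Relation.TransGen O'.dir) :=
    fun O' _ _ _ h h' => h.trans h'
  have hRirrefl : ∀ O' : GraphOrientation G, O'.Acyclic →
      Irreflexive (Relation.TransGen O'.dir) := fun O' h v => h v
  have hcount : ∀ O' : GraphOrientation G,
      O'.numLinExt = Stmt11Aux.LinCount (Relation.TransGen O'.dir) := fun O' => rfl
  -- adjacency gives comparability for any orientation
  have hadj_cmp : ∀ (O' : GraphOrientation G) u v, G.Adj u v →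
      Stmt11Aux.cmp (Relation.TransGen O'.dir) u v := by
    intro O' u v h
    rcases O'.adj_dir u v h with h' | h'
    · exact Or.inl (Relation.TransGen.single h')
    · exact Or.inr (Relation.TransGen.single h')
  constructor
  · -- maximality implies transitivity
    intro hmax
    obtain ⟨P, hP⟩ := hcomp
    letI := P
    -- the transitive orientation induced by P
    set T : GraphOrientation G :=
      { dir := fun u v => G.Adj u v ∧ u ≤ v
        dir_adj := fun u v h => h.1
        adj_dir := by
          intro u v h
          rcases (hP u v).1 h with ⟨hne, hle | hle⟩
          · exact Or.inl ⟨h, hle⟩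
          · exact Or.inr ⟨h.symm, hle⟩
        asymm := by
          intro u v h h'
          exact G.ne_of_adj h.1 (le_antisymm h.2 h'.2) } with hT
    have hTlt : ∀ u v, Relation.TransGen T.dir u v → u < v := by
      intro u v h
      induction h with
      | single h => exact lt_of_le_of_ne h.2 (G.ne_of_adj h.1)
      | tail h' hstep ih => exact lt_trans ih (lt_of_le_of_ne hstep.2 (G.ne_of_adj hstep.1))
    have hTadj : ∀ u v,
        (Relation.TransGen T.dir u v ∨ Relation.TransGen T.dir v u) ↔ G.Adj u v := by
      intro u v
      constructor
      · rintro (h | h)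
        · exact (hP u v).2 ⟨ne_of_lt (hTlt u v h), Or.inl (le_of_lt (hTlt u v h))⟩
        · exact ((hP v u).2 ⟨ne_of_lt (hTlt v u h), Or.inl (le_of_lt (hTlt v u h))⟩).symm
      · intro h
        exact hadj_cmp T u v h
    have hTacyc : T.Acyclic := fun v h => lt_irrefl v (hTlt v v h)
    -- suppose O not transitive
    by_contra hnt
    have hbad : ∃ a b, Relation.TransGen O.dir a b ∧ ¬ G.Adj a b := by
      unfold GraphOrientation.IsTransitive at hnt
      push_neg at hnt
      obtain ⟨u, v, huv⟩ := hnt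
      rcases huv with ⟨hcmp', hnadj⟩ | ⟨⟨h1, h2⟩, hadj⟩
      · rcases hcmp' with h | h
        · exact ⟨u, v, h, hnadj⟩
        · exact ⟨v, u, h, fun hh => hnadj hh.symm⟩
      · rcases hadj_cmp O u v hadj with h | h
        · exact absurd h h1
        · exact absurd h h2
    obtain ⟨a, b, hRab, hnadj⟩ := hbad
    have hlt : Stmt11Aux.LinCount (Relation.TransGen O.dir) <
        Stmt11Aux.LinCount (Relation.TransGen T.dir) := by
      refine Stmt11Aux.main_lt _ _ (hRtrans O) (hRirrefl O hO) (hRtrans T)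
        (hRirrefl T hTacyc) ?_ a b hRab ?_
      · intro u v hne hc
        exact hadj_cmp O u v ((hTadj u v).1 hc)
      · intro hc
        exact hnadj ((hTadj a b).1 hc)
    have := hmax T hTacyc
    rw [hcount T, hcount O] at this
    exact absurd (lt_of_le_of_lt this hlt) (lt_irrefl _)
  · -- transitivity implies maximality
    intro htr O' hO'
    rw [hcount O', hcount O]
    refine Stmt11Aux.main_le _ _ (hRtrans O') (hRirrefl O' hO') (hRtrans O)
      (hRirrefl O hO) ?_
    intro u v hne hc
    exact hadj_cmp O' u v ((htr u v).1 hc)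
end

section
/- Let P and Q be partial orders on the same finite ground set such that the comparability graph of Q is a subgraph of the comparability graph of P. Then e(Q) ≥ e(P); moreover, if the containment of graphs is proper then e(Q) > e(P). -/
attribute [local instance] Classical.propDecidable

section Aux

variable {V : Type*} [Fintype V]

/-- A finset is a chain for the partial order `P`. -/
def isChainF (P : PartialOrder V) (C : Finset V) : Prop :=
  ∀ x ∈ C, ∀ y ∈ C, x ≠ y → (P.le x y ∨ P.le y x)

/-- Weakly `P`-monotone functions into `Fin (t+1)`. -/
def MonoT (P : PartialOrder V) (t : ℕ) : Type _ :=
  {f : V → Fin (t+1) // ∀ a b : V, P.lt a b → f a ≤ f b}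

/-- Functions whose sums along `P`-chains are at most `t`. -/
def ChainT (P : PartialOrder V) (t : ℕ) : Type _ :=
  {g : V → Fin (t+1) // ∀ C : Finset V, isChainF P C → (∑ x ∈ C, ((g x : ℕ))) ≤ t}

/-- Linear extensions. -/
def LinExtT (P : PartialOrder V) : Type _ :=
  {f : V ≃ Fin (Fintype.card V) // ∀ a b : V, P.lt a b → f a < f b}

instance (P : PartialOrder V) (t : ℕ) : Finite (MonoT P t) := by
  unfold MonoT; infer_instance

instance (P : PartialOrder V) (t : ℕ) : Finite (ChainT P t) := by
  unfold ChainT; infer_instance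

instance (P : PartialOrder V) : Finite (LinExtT P) := by
  unfold LinExtT; infer_instance

theorem chain_exists_max (P : PartialOrder V) {C : Finset V} (hC : isChainF P C)
    (hne : C.Nonempty) : ∃ m ∈ C, ∀ x ∈ C, x ≠ m → P.lt x m := by
  letI := P
  obtain ⟨m, hm, hmax⟩ := C.exists_maximal hne
  refine ⟨m, hm, fun x hx hxm => ?_⟩
  rcases hC x hx m hm hxm with h | h
  · exact lt_of_le_of_ne h hxm
  · exact absurd (lt_of_le_of_ne h hxm.symm) (not_lt_of_ge (hmax hx h))

/-- Sum of the "transfer" function along a chain with maximum `m` is at most `f m`. -/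
theorem sum_sub_le (P : PartialOrder V) (t : ℕ) (f : V → Fin (t+1))
    (hf : ∀ a b : V, P.lt a b → f a ≤ f b) (C : Finset V) :
    isChainF P C → ∀ m ∈ C, (∀ x ∈ C, x ≠ m → P.lt x m) →
      (∑ x ∈ C, ((f x : ℕ) - (Finset.univ.filter (fun u => P.lt u x)).sup
        (fun u => (f u : ℕ)))) ≤ (f m : ℕ) := by
  letI := P
  induction C using Finset.strongInduction with
  | _ C ih =>
    intro hC m hm hmax
    rw [← Finset.add_sum_erase _ _ hm]
    have hSle : ∀ x : V, (Finset.univ.filter (fun u => P.lt u x)).sup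
        (fun u => (f u : ℕ)) ≤ (f x : ℕ) := by
      intro x
      refine Finset.sup_le fun u hu => ?_
      exact hf u x (Finset.mem_filter.mp hu).2
    by_cases hE : (C.erase m).Nonempty
    · have hCe : isChainF P (C.erase m) := by
        intro x hx y hy hxy
        exact hC x (Finset.mem_of_mem_erase hx) y (Finset.mem_of_mem_erase hy) hxy
      obtain ⟨m', hm', hmax'⟩ := chain_exists_max P hCe hE
      have hm'C : m' ∈ C := Finset.mem_of_mem_erase hm'
      have hm'm : P.lt m' m := hmax m' hm'C (Finset.ne_of_mem_erase hm')
      have h1 := ih (C.erase m) (Finset.erase_ssubset hm) hCe m' hm' hmax'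
      have h2 : (f m' : ℕ) ≤ (Finset.univ.filter (fun u => P.lt u m)).sup
          (fun u => (f u : ℕ)) :=
        by
          apply Finset.le_sup (f := fun u => ((f u : ℕ)))
          exact Finset.mem_filter.mpr ⟨Finset.mem_univ m', hm'm⟩
      calc ((f m : ℕ) - _) + _ ≤ ((f m : ℕ) -
            (Finset.univ.filter (fun u => P.lt u m)).sup (fun u => (f u : ℕ)))
            + (Finset.univ.filter (fun u => P.lt u m)).sup (fun u => (f u : ℕ)) :=
          Nat.add_le_add_left (h1.trans h2) _
        _ = (f m : ℕ) := Nat.sub_add_cancel (hSle m)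
    · rw [Finset.not_nonempty_iff_eq_empty.mp hE, Finset.sum_empty, Nat.add_zero]
      exact Nat.sub_le _ _

theorem card_mono_le_card_chain (P : PartialOrder V) (t : ℕ) :
    Nat.card (MonoT P t) ≤ Nat.card (ChainT P t) := by
  letI := P
  have hSle : ∀ (f : MonoT P t) (x : V),
      (Finset.univ.filter (fun u => P.lt u x)).sup (fun u => (f.1 u : ℕ)) ≤ (f.1 x : ℕ) := by
    intro f x
    exact Finset.sup_le fun u hu => f.2 u x (Finset.mem_filter.mp hu).2
  let Φ : MonoT P t → ChainT P t := fun f =>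
    ⟨fun v => ⟨(f.1 v : ℕ) - (Finset.univ.filter (fun u => P.lt u v)).sup
        (fun u => (f.1 u : ℕ)), lt_of_le_of_lt (Nat.sub_le _ _) (f.1 v).isLt⟩, by
      intro C hC
      rcases C.eq_empty_or_nonempty with rfl | hne
      · simp
      · obtain ⟨m, hm, hmax⟩ := chain_exists_max P hC hne
        have := sum_sub_le P t f.1 f.2 C hC m hm hmax
        refine le_trans (le_of_eq ?_) (this.trans (Nat.lt_succ_iff.mp (f.1 m).isLt))
        rfl⟩
  have hinj : Function.Injective Φ := by
    intro f1 f2 h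
    have hval : ∀ v : V, ((Φ f1).1 v : ℕ) = ((Φ f2).1 v : ℕ) := by
      intro v; rw [h]
    have key : ∀ v : V, (f1.1 v : ℕ) = (f2.1 v : ℕ) := by
      have wf : WellFounded (P.lt) := (Finite.to_wellFoundedLT (α := V)).wf
      intro v
      induction v using WellFounded.induction wf with
      | _ v IH =>
        have hS : (Finset.univ.filter (fun u => P.lt u v)).sup (fun u => (f1.1 u : ℕ))
            = (Finset.univ.filter (fun u => P.lt u v)).sup (fun u => (f2.1 u : ℕ)) :=
          Finset.sup_congr rfl fun u hu => IH u (Finset.mem_filter.mp hu).2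
        have h1 := hval v
        simp only [Φ] at h1
        have e1 : (f1.1 v : ℕ) = ((f1.1 v : ℕ) - (Finset.univ.filter (fun u => P.lt u v)).sup
            (fun u => (f1.1 u : ℕ))) + (Finset.univ.filter (fun u => P.lt u v)).sup
            (fun u => (f1.1 u : ℕ)) := (Nat.sub_add_cancel (hSle f1 v)).symm
        have e2 : (f2.1 v : ℕ) = ((f2.1 v : ℕ) - (Finset.univ.filter (fun u => P.lt u v)).sup
            (fun u => (f2.1 u : ℕ))) + (Finset.univ.filter (fun u => P.lt u v)).sup
            (fun u => (f2.1 u : ℕ)) := (Nat.sub_add_cancel (hSle f2 v)).symm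
        rw [e1, e2, h1, hS]
    apply Subtype.ext
    funext v
    exact Fin.ext (key v)
  exact Nat.card_le_card_of_injective Φ hinj

theorem card_chain_le_card_mono (P : PartialOrder V) (t : ℕ) :
    Nat.card (ChainT P t) ≤ Nat.card (MonoT P t) := by
  letI := P
  -- the "inverse transfer": F g v = max over chains below v of the chain sum of g
  let cset : V → Finset (Finset V) := fun v =>
    (Finset.univ : Finset (Finset V)).filter (fun C => isChainF P C ∧ ∀ x ∈ C, P.le x v)
  let F : (V → Fin (t+1)) → V → ℕ := fun g v =>
    (cset v).sup (fun C => ∑ x ∈ C, (g x : ℕ))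
  have hmem : ∀ (v : V) (C : Finset V), C ∈ cset v ↔ (isChainF P C ∧ ∀ x ∈ C, P.le x v) := by
    intro v C
    simp [cset, Finset.mem_filter]
  have hempty : ∀ v : V, (∅ : Finset V) ∈ cset v := by
    intro v
    rw [hmem]
    exact ⟨fun x hx => absurd hx (by simp), fun x hx => absurd hx (by simp)⟩
  have hFle : ∀ (g : ChainT P t) (v : V), F g.1 v ≤ t := by
    intro g v
    exact Finset.sup_le fun C hC => g.2 C ((hmem v C).mp hC).1
  have hFmono : ∀ (g : V → Fin (t+1)) (a v : V), P.le a v → F g a ≤ F g v := by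
    intro g a v hav
    refine Finset.sup_le fun C hC => ?_
    rcases (hmem a C).mp hC with ⟨h1, h2⟩
    exact Finset.le_sup (f := fun C => ∑ x ∈ C, (g x : ℕ))
      ((hmem v C).mpr ⟨h1, fun x hx => le_trans (h2 x hx) hav⟩)
  have key : ∀ (g : V → Fin (t+1)) (v : V),
      F g v = (g v : ℕ) + (Finset.univ.filter (fun u => P.lt u v)).sup (F g) := by
    intro g v
    apply le_antisymm
    · refine Finset.sup_le fun C hC => ?_
      rcases (hmem v C).mp hC with ⟨hCch, hCle⟩
      by_cases hv : v ∈ C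
      · rw [← Finset.add_sum_erase _ _ hv]
        refine Nat.add_le_add_left ?_ _
        by_cases hE : (C.erase v).Nonempty
        · have hCe : isChainF P (C.erase v) := fun x hx y hy hxy =>
            hCch x (Finset.mem_of_mem_erase hx) y (Finset.mem_of_mem_erase hy) hxy
          obtain ⟨m', hm', hmax'⟩ := chain_exists_max P hCe hE
          have hm'v : P.lt m' v :=
            lt_of_le_of_ne (hCle m' (Finset.mem_of_mem_erase hm')) (Finset.ne_of_mem_erase hm')
          have h1 : (C.erase v) ∈ cset m' := by
            rw [hmem]
            refine ⟨hCe, fun x hx => ?_⟩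
            by_cases hxm : x = m'
            · exact hxm ▸ le_refl _
            · exact le_of_lt (hmax' x hx hxm)
          calc (∑ x ∈ C.erase v, (g x : ℕ)) ≤ F g m' :=
              Finset.le_sup (f := fun C => ∑ x ∈ C, (g x : ℕ)) h1
            _ ≤ _ := by
              apply Finset.le_sup (f := F g)
              exact Finset.mem_filter.mpr ⟨Finset.mem_univ m', hm'v⟩
        · rw [Finset.not_nonempty_iff_eq_empty.mp hE, Finset.sum_empty]
          exact Nat.zero_le _
      · rcases C.eq_empty_or_nonempty with rfl | hne
        · simp
        · obtain ⟨m, hm, hmax⟩ := chain_exists_max P hCch hne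
          have hmv : P.lt m v := lt_of_le_of_ne (hCle m hm) (fun h => hv (h ▸ hm))
          have h1 : C ∈ cset m := by
            rw [hmem]
            refine ⟨hCch, fun x hx => ?_⟩
            by_cases hxm : x = m
            · exact hxm ▸ le_refl _
            · exact le_of_lt (hmax x hx hxm)
          calc (∑ x ∈ C, (g x : ℕ)) ≤ F g m :=
              Finset.le_sup (f := fun C => ∑ x ∈ C, (g x : ℕ)) h1
            _ ≤ (Finset.univ.filter (fun u => P.lt u v)).sup (F g) := by
              apply Finset.le_sup (f := F g)
              exact Finset.mem_filter.mpr ⟨Finset.mem_univ m, hmv⟩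
            _ ≤ _ := Nat.le_add_left _ _
    · have hsingle : ({v} : Finset V) ∈ cset v := by
        rw [hmem]
        constructor
        · intro x hx y hy hxy
          rw [Finset.mem_singleton] at hx hy
          exact absurd (hx.trans hy.symm) hxy
        · intro x hx
          rw [Finset.mem_singleton] at hx
          exact hx ▸ le_refl _
      rcases (Finset.univ.filter (fun u => P.lt u v)).eq_empty_or_nonempty with he | hne
      · rw [he, Finset.sup_empty]
        have hb : ((⊥ : ℕ) = 0) := rfl
        rw [hb, Nat.add_zero]
        have := Finset.le_sup (f := fun C => ∑ x ∈ C, (g x : ℕ)) hsingle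
        simpa using this
      · obtain ⟨u0, hu0, hequ⟩ := Finset.exists_mem_eq_sup _ hne (F g)
        have hu0v : P.lt u0 v := (Finset.mem_filter.mp hu0).2
        obtain ⟨C0, hC0, heqC⟩ := Finset.exists_mem_eq_sup (cset u0) ⟨∅, hempty u0⟩
          (fun C => ∑ x ∈ C, (g x : ℕ))
        rcases (hmem u0 C0).mp hC0 with ⟨hC0ch, hC0le⟩
        have hvC0 : v ∉ C0 := by
          intro hv
          exact absurd (lt_of_le_of_lt (hC0le v hv) hu0v) (lt_irrefl v)
        have hC1 : insert v C0 ∈ cset v := by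
          rw [hmem]
          constructor
          · intro x hx y hy hxy
            rw [Finset.mem_insert] at hx hy
            rcases hx with rfl | hx
            · rcases hy with rfl | hy
              · exact absurd rfl hxy
              · exact Or.inr (le_of_lt (lt_of_le_of_lt (hC0le y hy) hu0v))
            · rcases hy with rfl | hy
              · exact Or.inl (le_of_lt (lt_of_le_of_lt (hC0le x hx) hu0v))
              · exact hC0ch x hx y hy hxy
          · intro x hx
            rw [Finset.mem_insert] at hx
            rcases hx with rfl | hx
            · exact le_refl _
            · exact le_of_lt (lt_of_le_of_lt (hC0le x hx) hu0v)
        calc (g v : ℕ) + (Finset.univ.filter (fun u => P.lt u v)).sup (F g)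
            = (g v : ℕ) + ∑ x ∈ C0, (g x : ℕ) := by
              rw [hequ]; exact congrArg (fun z => (g v : ℕ) + z) heqC
          _ = ∑ x ∈ insert v C0, (g x : ℕ) :=
              (Finset.sum_insert (f := fun x => ((g x : ℕ))) hvC0).symm
          _ ≤ F g v := Finset.le_sup (f := fun C => ∑ x ∈ C, (g x : ℕ)) hC1
  let Ψ : ChainT P t → MonoT P t := fun g =>
    ⟨fun v => ⟨F g.1 v, Nat.lt_succ_of_le (hFle g v)⟩, by
      intro a b hab
      exact hFmono g.1 a b (le_of_lt hab)⟩
  have hinj : Function.Injective Ψ := by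
    intro g1 g2 h
    have hF : ∀ v : V, F g1.1 v = F g2.1 v := by
      intro v
      have := congrArg (fun (f : MonoT P t) => (f.1 v : ℕ)) h
      exact this
    apply Subtype.ext
    funext v
    have h1 := key g1.1 v
    have h2 := key g2.1 v
    have hsup : (Finset.univ.filter (fun u => P.lt u v)).sup (F g1.1)
        = (Finset.univ.filter (fun u => P.lt u v)).sup (F g2.1) :=
      Finset.sup_congr rfl fun u _ => hF u
    have hmain : F g1.1 v = F g2.1 v := hF v
    rw [h1, h2, hsup] at hmain
    exact Fin.ext (Nat.add_right_cancel hmain)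
  exact Nat.card_le_card_of_injective Ψ hinj

theorem card_linext_mul_le (P : PartialOrder V) (t : ℕ) :
    Nat.card (LinExtT P) * (t+1).choose (Fintype.card V) ≤ Nat.card (MonoT P t) := by
  classical
  letI := P
  set n := Fintype.card V with hn
  let SubT := {s : Finset (Fin (t+1)) // s.card = n}
  let ι : LinExtT P × SubT → (V → Fin (t+1)) := fun p v =>
    ((p.2.1.orderIsoOfFin p.2.2 (p.1.1 v)) : Fin (t+1))
  have himg : ∀ p : LinExtT P × SubT, Finset.image (ι p) Finset.univ = p.2.1 := by
    intro p
    ext x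
    simp only [Finset.mem_image, Finset.mem_univ, true_and]
    constructor
    · rintro ⟨v, rfl⟩
      exact (p.2.1.orderIsoOfFin p.2.2 (p.1.1 v)).2
    · intro hx
      refine ⟨p.1.1.symm ((p.2.1.orderIsoOfFin p.2.2).symm ⟨x, hx⟩), ?_⟩
      show ((p.2.1.orderIsoOfFin p.2.2) (p.1.1 (p.1.1.symm _)) : Fin (t+1)) = x
      rw [Equiv.apply_symm_apply, OrderIso.apply_symm_apply]
  let Θ : LinExtT P × SubT → MonoT P t := fun p =>
    ⟨ι p, by
      intro a b hab
      have h1 : p.1.1 a < p.1.1 b := p.1.2 a b hab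
      have h2 := (OrderIso.lt_iff_lt (p.2.1.orderIsoOfFin p.2.2)).mpr h1
      exact le_of_lt (Subtype.coe_lt_coe.mpr h2)⟩
  have hinj : Function.Injective Θ := by
    rintro ⟨L1, s1⟩ ⟨L2, s2⟩ h
    have hfun : ι (L1, s1) = ι (L2, s2) := congrArg Subtype.val h
    have hs : s1 = s2 := by
      apply Subtype.ext
      rw [← himg (L1, s1), ← himg (L2, s2), hfun]
    subst hs
    have hL : L1 = L2 := by
      apply Subtype.ext
      apply Equiv.ext
      intro v
      have h1 : ι (L1, s1) v = ι (L2, s1) v := by rw [hfun]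
      have h2 : (s1.1.orderIsoOfFin s1.2) (L1.1 v) = (s1.1.orderIsoOfFin s1.2) (L2.1 v) :=
        Subtype.ext h1
      exact (s1.1.orderIsoOfFin s1.2).injective h2
    rw [hL]
  have hcard : Nat.card (LinExtT P × SubT) = Nat.card (LinExtT P) * (t+1).choose n := by
    rw [Nat.card_prod]
    congr 1
    rw [Nat.card_eq_fintype_card]
    rw [Fintype.card_finset_len, Fintype.card_fin]
  rw [← hcard]
  exact Nat.card_le_card_of_injective Θ hinj

theorem card_injmono_le (P : PartialOrder V) (t : ℕ) :
    Nat.card {f : V → Fin (t+1) //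
        (∀ a b : V, P.lt a b → f a ≤ f b) ∧ Function.Injective f}
      ≤ Nat.card (LinExtT P) * (t+1).choose (Fintype.card V) := by
  classical
  letI := P
  set n := Fintype.card V with hn
  let SubT := {s : Finset (Fin (t+1)) // s.card = n}
  let IM := {f : V → Fin (t+1) // (∀ a b : V, P.lt a b → f a ≤ f b) ∧ Function.Injective f}
  let sOf : IM → SubT := fun f =>
    ⟨Finset.image f.1 Finset.univ, by
      rw [Finset.card_image_of_injective _ f.2.2, Finset.card_univ]⟩
  have hmemim : ∀ (f : IM) (v : V), f.1 v ∈ (sOf f).1 :=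
    fun f v => Finset.mem_image_of_mem _ (Finset.mem_univ v)
  let Lfun : ∀ f : IM, V → Fin n := fun f v =>
    ((sOf f).1.orderIsoOfFin (sOf f).2).symm ⟨f.1 v, hmemim f v⟩
  have hLinj : ∀ f : IM, Function.Injective (Lfun f) := by
    intro f a b h
    have := congrArg (fun z => (((sOf f).1.orderIsoOfFin (sOf f).2) z : Fin (t+1))) h
    simp only [Lfun, OrderIso.apply_symm_apply] at this
    exact f.2.2 this
  have hLbij : ∀ f : IM, Function.Bijective (Lfun f) := by
    intro f
    rw [Fintype.bijective_iff_injective_and_card]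
    exact ⟨hLinj f, by simp [hn]⟩
  let Θ : IM → LinExtT P × SubT := fun f =>
    ⟨⟨Equiv.ofBijective (Lfun f) (hLbij f), by
      intro a b hab
      show Lfun f a < Lfun f b
      have h1 : f.1 a < f.1 b :=
        lt_of_le_of_ne (f.2.1 a b hab) (fun h => (ne_of_lt hab) (f.2.2 h))
      have h2 : (⟨f.1 a, hmemim f a⟩ : {x // x ∈ (sOf f).1}) < ⟨f.1 b, hmemim f b⟩ :=
        Subtype.mk_lt_mk.mpr h1
      exact (OrderIso.lt_iff_lt _).mpr h2⟩, sOf f⟩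
  have hrec : ∀ f : IM, ∀ v : V,
      f.1 v = (((sOf f).1.orderIsoOfFin (sOf f).2) (Lfun f v) : Fin (t+1)) := by
    intro f v
    simp [Lfun]
  let ι : LinExtT P × SubT → (V → Fin (t+1)) := fun p v =>
    ((p.2.1.orderIsoOfFin p.2.2 (p.1.1 v)) : Fin (t+1))
  have hrecon : ∀ f : IM, ι (Θ f) = f.1 := by
    intro f
    funext v
    exact (hrec f v).symm
  have hinj : Function.Injective Θ := by
    intro f1 f2 h
    apply Subtype.ext
    rw [← hrecon f1, ← hrecon f2, h]
  have hcard : Nat.card (LinExtT P × SubT) = Nat.card (LinExtT P) * (t+1).choose n := by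
    rw [Nat.card_prod]
    congr 1
    rw [Nat.card_eq_fintype_card, Fintype.card_finset_len, Fintype.card_fin]
  rw [← hcard]
  exact Nat.card_le_card_of_injective Θ hinj

theorem card_mono_le (P : PartialOrder V) (t : ℕ) :
    Nat.card (MonoT P t) ≤ Nat.card (LinExtT P) * (t+1).choose (Fintype.card V)
      + ((t+1) ^ (Fintype.card V) - (t+1).descFactorial (Fintype.card V)) := by
  classical
  letI := P
  set n := Fintype.card V with hn
  let IM := {f : V → Fin (t+1) // (∀ a b : V, P.lt a b → f a ≤ f b) ∧ Function.Injective f}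
  let NI := {f : V → Fin (t+1) // ¬ Function.Injective f}
  have hsplit : Nat.card (MonoT P t) ≤ Nat.card IM + Nat.card NI := by
    rw [← Nat.card_sum]
    refine Nat.card_le_card_of_injective (fun f =>
      if h : Function.Injective f.1 then Sum.inl ⟨f.1, f.2, h⟩ else Sum.inr ⟨f.1, h⟩) ?_
    intro f1 f2 h
    by_cases h1 : Function.Injective f1.1 <;> by_cases h2 : Function.Injective f2.1 <;>
      simp only [h1, h2, dif_pos, dif_neg, not_false_iff] at h
    · injection h with h'
      exact Subtype.ext (congrArg (fun z : IM => z.1) h')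
    · exact absurd h (by simp)
    · exact absurd h (by simp)
    · injection h with h'
      exact Subtype.ext (congrArg (fun z : NI => z.1) h')
  have hNI : Nat.card NI = (t+1) ^ n - (t+1).descFactorial n := by
    have hIc : Nat.card {f : V → Fin (t+1) // Function.Injective f}
        = (t+1).descFactorial n := by
      rw [Nat.card_eq_fintype_card,
        Fintype.card_congr (Equiv.subtypeInjectiveEquivEmbedding V (Fin (t+1))),
        Fintype.card_embedding_eq, Fintype.card_fin]
    rw [Nat.card_eq_fintype_card, Fintype.card_subtype_compl, ← hIc,
      Nat.card_eq_fintype_card]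
    congr 1
    rw [Fintype.card_fun, Fintype.card_fin]
  calc Nat.card (MonoT P t) ≤ Nat.card IM + Nat.card NI := hsplit
    _ ≤ _ := by
      rw [hNI]
      exact Nat.add_le_add_right (card_injmono_le P t) _

theorem card_chain_subset (P Q : PartialOrder V)
    (hsub : ∀ u v, u ≠ v → (Q.le u v ∨ Q.le v u) → (P.le u v ∨ P.le v u)) (t : ℕ) :
    Nat.card (ChainT P t) ≤ Nat.card (ChainT Q t) := by
  refine Nat.card_le_card_of_injective
    (fun g => (⟨g.1, fun C hC => g.2 C (fun x hx y hy hxy => hsub x y hxy (hC x hx y hy hxy))⟩ :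
      ChainT Q t)) ?_
  intro g1 g2 h
  have h' := congrArg (fun z : ChainT Q t => z.1) h
  exact Subtype.ext h'

theorem card_chain_subset_strict (P Q : PartialOrder V)
    (hsub : ∀ u v, u ≠ v → (Q.le u v ∨ Q.le v u) → (P.le u v ∨ P.le v u))
    {u v : V} (hne : u ≠ v) (hP : P.le u v ∨ P.le v u) (hQ : ¬ (Q.le u v ∨ Q.le v u))
    (d s t : ℕ) (hds : d + s + Fintype.card V * s ≤ t) (hgap : t ≤ 2*d + 1) :
    Nat.card (ChainT P t) + s^2 * s^(Fintype.card V - 2) ≤ Nat.card (ChainT Q t) := by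
  classical
  set n := Fintype.card V with hn
  have hst : s ≤ t := le_trans (le_trans (Nat.le_add_left s d) (Nat.le_add_right _ _)) hds
  have hdst : d + s ≤ t := le_trans (Nat.le_add_right _ _) hds
  let W := {x : V // ¬ (x = u ∨ x = v)}
  let Params := (Fin s × Fin s) × (W → Fin s)
  have hvalu : ∀ a : Fin s, d + 1 + (a : ℕ) < t + 1 := by
    intro a
    have h := a.isLt
    omega
  have hvalw : ∀ a : Fin s, (a : ℕ) < t + 1 := fun a => lt_of_lt_of_le a.isLt (by omega)
  let G : Params → (V → Fin (t+1)) := fun p x =>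
    if hxu : x = u then ⟨d + 1 + (p.1.1 : ℕ), hvalu p.1.1⟩
    else if hxv : x = v then ⟨d + 1 + (p.1.2 : ℕ), hvalu p.1.2⟩
    else ⟨(p.2 ⟨x, by tauto⟩ : ℕ), hvalw _⟩
  have hGu : ∀ p : Params, (G p u : ℕ) = d + 1 + (p.1.1 : ℕ) := by
    intro p; simp [G]
  have hGv : ∀ p : Params, (G p v : ℕ) = d + 1 + (p.1.2 : ℕ) := by
    intro p; simp [G, hne.symm]
  have hGw : ∀ (p : Params) (x : V) (hx : ¬ (x = u ∨ x = v)),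
      (G p x : ℕ) = (p.2 ⟨x, hx⟩ : ℕ) := by
    intro p x hx
    have hxu : ¬ x = u := fun h => hx (Or.inl h)
    have hxv : ¬ x = v := fun h => hx (Or.inr h)
    simp [G, hxu, hxv]
  have hGchain : ∀ p : Params, ∀ C : Finset V, isChainF Q C →
      (∑ x ∈ C, ((G p x : ℕ))) ≤ t := by
    intro p C hC
    have hnotboth : ¬ (u ∈ C ∧ v ∈ C) := by
      rintro ⟨hu, hv⟩
      exact hQ (hC u hu v hv hne)
    rw [← Finset.sum_filter_add_sum_filter_not C (fun x => x = u ∨ x = v)]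
    have h1 : (∑ x ∈ C.filter (fun x => x = u ∨ x = v), ((G p x : ℕ))) ≤ d + s := by
      by_cases hu : u ∈ C
      · have hv : v ∉ C := fun hv => hnotboth ⟨hu, hv⟩
        have hf : C.filter (fun x => x = u ∨ x = v) = {u} := by
          ext x
          simp only [Finset.mem_filter, Finset.mem_singleton]
          constructor
          · rintro ⟨hxC, rfl | rfl⟩
            · rfl
            · exact absurd hxC hv
          · rintro rfl
            exact ⟨hu, Or.inl rfl⟩
        rw [hf, Finset.sum_singleton, hGu]
        have := (p.1.1).isLt
        omega
      · by_cases hv : v ∈ C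
        · have hf : C.filter (fun x => x = u ∨ x = v) = {v} := by
            ext x
            simp only [Finset.mem_filter, Finset.mem_singleton]
            constructor
            · rintro ⟨hxC, rfl | rfl⟩
              · exact absurd hxC hu
              · rfl
            · rintro rfl
              exact ⟨hv, Or.inr rfl⟩
          rw [hf, Finset.sum_singleton, hGv]
          have := (p.1.2).isLt
          omega
        · have hf : C.filter (fun x => x = u ∨ x = v) = ∅ := by
            ext x
            simp only [Finset.mem_filter, Finset.notMem_empty, iff_false, not_and]
            rintro hxC (rfl | rfl)
            · exact hu hxC
            · exact hv hxC
          rw [hf, Finset.sum_empty]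
          exact Nat.zero_le _
    have h2 : (∑ x ∈ C.filter (fun x => ¬ (x = u ∨ x = v)), ((G p x : ℕ))) ≤ n * s := by
      calc (∑ x ∈ C.filter (fun x => ¬ (x = u ∨ x = v)), ((G p x : ℕ)))
          ≤ (C.filter (fun x => ¬ (x = u ∨ x = v))).card * s := by
            rw [← smul_eq_mul]
            refine Finset.sum_le_card_nsmul _ _ s ?_
            intro x hx
            rw [Finset.mem_filter] at hx
            rw [hGw p x hx.2]
            exact le_of_lt (p.2 ⟨x, hx.2⟩).isLt
        _ ≤ n * s := by
            refine Nat.mul_le_mul_right s ?_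
            rw [hn]
            exact le_trans (Finset.card_le_card (Finset.filter_subset _ _))
              (Finset.card_le_univ C)
    omega
  have hGgap : ∀ p : Params, t < (G p u : ℕ) + (G p v : ℕ) := by
    intro p
    rw [hGu, hGv]
    omega
  -- the combined injection
  have hPchain : isChainF P {u, v} := by
    intro x hx y hy hxy
    simp only [Finset.mem_insert, Finset.mem_singleton] at hx hy
    rcases hx with rfl | rfl <;> rcases hy with rfl | rfl
    · exact absurd rfl hxy
    · exact hP
    · exact Or.symm hP
    · exact absurd rfl hxy
  let Θ : (ChainT P t) ⊕ Params → ChainT Q t := fun z =>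
    match z with
    | Sum.inl g => ⟨g.1, fun C hC => g.2 C (fun x hx y hy hxy => hsub x y hxy (hC x hx y hy hxy))⟩
    | Sum.inr p => ⟨G p, hGchain p⟩
  have hsum_lt : ∀ g : ChainT P t, ((g.1 u : ℕ)) + ((g.1 v : ℕ)) ≤ t := by
    intro g
    have := g.2 {u, v} hPchain
    rwa [Finset.sum_pair hne] at this
  have hinj : Function.Injective Θ := by
    intro z1 z2 h
    match z1, z2 with
    | Sum.inl g1, Sum.inl g2 =>
      have h' := congrArg (fun z : ChainT Q t => z.1) h
      exact congrArg Sum.inl (Subtype.ext h')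
    | Sum.inl g1, Sum.inr p2 =>
      exfalso
      have h' := congrArg (fun z : ChainT Q t => ((z.1 u : ℕ)) + ((z.1 v : ℕ))) h
      simp only [Θ] at h'
      have := hsum_lt g1
      have := hGgap p2
      omega
    | Sum.inr p1, Sum.inl g2 =>
      exfalso
      have h' := congrArg (fun z : ChainT Q t => ((z.1 u : ℕ)) + ((z.1 v : ℕ))) h
      simp only [Θ] at h'
      have := hsum_lt g2
      have := hGgap p1
      omega
    | Sum.inr p1, Sum.inr p2 =>
      have h' : G p1 = G p2 := congrArg (fun z : ChainT Q t => z.1) h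
      have ha : p1.1.1 = p2.1.1 := by
        have := congrArg (fun f : V → Fin (t+1) => (f u : ℕ)) h'
        rw [hGu, hGu] at this
        exact Fin.ext (by omega)
      have hb : p1.1.2 = p2.1.2 := by
        have := congrArg (fun f : V → Fin (t+1) => (f v : ℕ)) h'
        rw [hGv, hGv] at this
        exact Fin.ext (by omega)
      have hw : p1.2 = p2.2 := by
        funext w
        have := congrArg (fun f : V → Fin (t+1) => (f w.1 : ℕ)) h'
        rw [hGw p1 w.1 w.2, hGw p2 w.1 w.2] at this
        simp only [Subtype.coe_eta] at this
        exact Fin.ext this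
      congr 1
      exact Prod.ext (Prod.ext ha hb) hw
  have hcard : Nat.card ((ChainT P t) ⊕ Params)
      = Nat.card (ChainT P t) + s^2 * s^(n-2) := by
    rw [Nat.card_sum]
    congr 1
    have hW : Fintype.card W = n - 2 := by
      have h2 : Fintype.card {x : V // x = u ∨ x = v} = 2 := by
        rw [Fintype.card_subtype]
        have : Finset.univ.filter (fun x : V => x = u ∨ x = v) = {u, v} := by
          ext x
          simp [Finset.mem_filter, Finset.mem_insert, Finset.mem_singleton]
        rw [this, Finset.card_pair hne]
      rw [Fintype.card_subtype_compl, h2, hn]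
    rw [Nat.card_prod, Nat.card_prod]
    simp only [Nat.card_eq_fintype_card, Fintype.card_fin, Fintype.card_fun, hW]
    ring
  rw [← hcard]
  exact Nat.card_le_card_of_injective Θ hinj

end Aux

theorem pow_le_descFactorial_add (M : ℕ) : ∀ n : ℕ, M ^ n ≤ M.descFactorial n + n*n*M^(n-1) := by
  intro n
  induction n with
  | zero => simp
  | succ k ih =>
    rcases Nat.eq_zero_or_pos k with rfl | hk
    · simp [Nat.descFactorial]
    by_cases hM : M ≤ k
    · calc M^(k+1) = M^k * M := pow_succ M k
        _ ≤ M^k * (k+1) := Nat.mul_le_mul_left _ (by omega)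
        _ ≤ M.descFactorial (k+1) + (k+1)*(k+1)*M^((k+1)-1) := by
            simp only [Nat.add_sub_cancel]
            have h1 : M^k * (k+1) ≤ (k+1)*(k+1)*M^k := by
              calc M^k * (k+1) = (k+1) * M^k := Nat.mul_comm _ _
                _ ≤ (k+1)*(k+1)*M^k := by
                    rw [Nat.mul_assoc]
                    exact Nat.le_mul_of_pos_left _ (by omega)
            omega
    · push_neg at hM
      have hd : M.descFactorial (k+1) = (M - k) * M.descFactorial k := Nat.descFactorial_succ M k
      have hMd : M * M.descFactorial k = M.descFactorial (k+1) + k * M.descFactorial k := by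
        rw [hd]
        have hmk : (M - k) + k = M := by omega
        calc M * M.descFactorial k = ((M-k) + k) * M.descFactorial k := by rw [hmk]
          _ = (M-k)*M.descFactorial k + k*M.descFactorial k := Nat.add_mul _ _ _
      have hdp : M.descFactorial k ≤ M ^ k := Nat.descFactorial_le_pow M k
      have hpow : M^(k-1) * M = M^k := by
        cases k with
        | zero => omega
        | succ j => simp [pow_succ]
      have hsq : k*M^k + k*k*M^k ≤ (k+1)*(k+1)*M^k := by
        have h1 : k + k*k ≤ (k+1)*(k+1) := by nlinarith
        calc k*M^k + k*k*M^k = (k + k*k)*M^k := by ring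
          _ ≤ (k+1)*(k+1)*M^k := Nat.mul_le_mul_right _ h1
      calc M^(k+1) = M^k * M := pow_succ M k
        _ ≤ (M.descFactorial k + k*k*M^(k-1)) * M := Nat.mul_le_mul_right M ih
        _ = M * M.descFactorial k + k*k*(M^(k-1)*M) := by ring
        _ = M.descFactorial (k+1) + k*M.descFactorial k + k*k*M^k := by
            rw [hMd, hpow]
        _ ≤ M.descFactorial (k+1) + k*M^k + k*k*M^k := by
            have := Nat.mul_le_mul_left k hdp
            omega
        _ ≤ M.descFactorial (k+1) + (k+1)*(k+1)*M^((k+1)-1) := by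
            simp only [Nat.add_sub_cancel]
            omega

theorem exists_choose_big (n : ℕ) : ∃ M : ℕ, 1 ≤ M ∧ n*n*M^(n-1) < M.choose n := by
  rcases Nat.eq_zero_or_pos n with rfl | hn
  · exact ⟨1, le_refl 1, by simp⟩
  set K := n.factorial * (n*n) * 2^n with hK
  set m := n + K + 1 with hm
  set M := 2*m with hM
  have hm1 : 1 ≤ m := by omega
  have hM1 : 1 ≤ M := by omega
  refine ⟨M, hM1, ?_⟩
  have hmn : m ≤ M + 1 - n := by omega
  have h3 : m^n ≤ (M + 1 - n)^n := Nat.pow_le_pow_left hmn n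
  have h4 : (M + 1 - n)^n ≤ M.descFactorial n := Nat.pow_sub_le_descFactorial M n
  have hdf : M.descFactorial n = n.factorial * M.choose n :=
    Nat.descFactorial_eq_factorial_mul_choose M n
  -- n! * (n*n*M^(n-1)) < m^n
  have hMpow : M^(n-1) = 2^(n-1) * m^(n-1) := by
    rw [hM, Nat.mul_pow]
  have h5 : n.factorial * (n*n*M^(n-1)) ≤ K * m^(n-1) := by
    rw [hMpow, hK]
    have h2 : (2:ℕ)^(n-1) ≤ 2^n := Nat.pow_le_pow_right (by norm_num) (by omega)
    calc n.factorial * (n*n*(2^(n-1) * m^(n-1)))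
        = (n.factorial * (n*n) * 2^(n-1)) * m^(n-1) := by ring
      _ ≤ (n.factorial * (n*n) * 2^n) * m^(n-1) := by
          exact Nat.mul_le_mul_right _ (Nat.mul_le_mul_left _ h2)
  have h6 : K * m^(n-1) < m^n := by
    have hKm : K < m := by omega
    have hmp : 1 ≤ m^(n-1) := Nat.one_le_pow _ _ hm1
    calc K * m^(n-1) < m * m^(n-1) := by
          exact Nat.mul_lt_mul_of_lt_of_le hKm (le_refl _) (by omega)
      _ = m^n := by
          rw [← pow_succ']
          congr 1
          omega
  have h7 : n.factorial * (n*n*M^(n-1)) < n.factorial * M.choose n := by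
    calc n.factorial * (n*n*M^(n-1)) ≤ K * m^(n-1) := h5
      _ < m^n := h6
      _ ≤ (M + 1 - n)^n := h3
      _ ≤ M.descFactorial n := h4
      _ = n.factorial * M.choose n := hdf
  exact Nat.lt_of_mul_lt_mul_left h7

theorem stmt_12 {V : Type*} [Fintype V] (P Q : PartialOrder V)
    (hsub : ∀ u v, u ≠ v → (Q.le u v ∨ Q.le v u) → (P.le u v ∨ P.le v u)) :
    eCount V P ≤ eCount V Q ∧
    ((∃ u v, u ≠ v ∧ (P.le u v ∨ P.le v u) ∧ ¬ (Q.le u v ∨ Q.le v u)) →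
      eCount V P < eCount V Q) := by
  classical
  have heP : eCount V P = Nat.card (LinExtT P) := rfl
  have heQ : eCount V Q = Nat.card (LinExtT Q) := rfl
  have low : ∀ t : ℕ, eCount V P * (t+1).choose (Fintype.card V) ≤ Nat.card (ChainT P t) := by
    intro t
    rw [heP]
    exact le_trans (card_linext_mul_le P t) (card_mono_le_card_chain P t)
  have high : ∀ t : ℕ, Nat.card (ChainT Q t) ≤ eCount V Q * (t+1).choose (Fintype.card V)
      + ((t+1)^(Fintype.card V) - (t+1).descFactorial (Fintype.card V)) := by
    intro t
    rw [heQ]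
    exact le_trans (card_chain_le_card_mono Q t) (card_mono_le Q t)
  have herr : ∀ t : ℕ, (t+1)^(Fintype.card V) - (t+1).descFactorial (Fintype.card V)
      ≤ (Fintype.card V)*(Fintype.card V)*(t+1)^(Fintype.card V - 1) := by
    intro t
    have := pow_le_descFactorial_add (t+1) (Fintype.card V)
    omega
  constructor
  · by_contra hcon
    push_neg at hcon
    obtain ⟨M, hM1, hbig⟩ := exists_choose_big (Fintype.card V)
    obtain ⟨t, rfl⟩ : ∃ t, M = t + 1 := ⟨M - 1, by omega⟩
    have h1 := low t
    have h2 := high t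
    have h3 := card_chain_subset P Q hsub t
    have h4 := herr t
    have h5 : (eCount V Q + 1) * (t+1).choose (Fintype.card V)
        ≤ eCount V P * (t+1).choose (Fintype.card V) :=
      Nat.mul_le_mul_right _ (by omega)
    rw [Nat.add_mul, Nat.one_mul] at h5
    omega
  · rintro ⟨u, v, hne, hPc, hQc⟩
    by_contra hcon
    push_neg at hcon
    haveI : Nontrivial V := ⟨⟨u, v, hne⟩⟩
    have hn2 : 2 ≤ Fintype.card V := Fintype.one_lt_card
    obtain ⟨N, hN⟩ : ∃ N : ℕ, N = Fintype.card V := ⟨_, rfl⟩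
    obtain ⟨R, hR⟩ : ∃ R : ℕ, R = N*N*8^N*(N+1)^N + 1 := ⟨_, rfl⟩
    have hR1 : 1 ≤ R := by omega
    have hds : 2*(N+1)*R + 2*R + (Fintype.card V) * (2*R) ≤ 4*(N+1)*R := by
      rw [← hN]
      have : 2*(N+1)*R + 2*R + N*(2*R) = 4*(N+1)*R := by ring
      omega
    have hgap : 4*(N+1)*R ≤ 2*(2*(N+1)*R) + 1 := by
      have : 2*(2*(N+1)*R) = 4*(N+1)*R := by ring
      omega
    have hstrict := card_chain_subset_strict P Q hsub hne hPc hQc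
      (2*(N+1)*R) (2*R) (4*(N+1)*R) hds hgap
    have h1 := low (4*(N+1)*R)
    have h2 := high (4*(N+1)*R)
    have h4 := herr (4*(N+1)*R)
    have h5 : eCount V Q * (4*(N+1)*R+1).choose (Fintype.card V)
        ≤ eCount V P * (4*(N+1)*R+1).choose (Fintype.card V) :=
      Nat.mul_le_mul_right _ hcon
    have hSle : (2*R)^2 * (2*R)^(Fintype.card V - 2)
        ≤ (Fintype.card V)*(Fintype.card V)*(4*(N+1)*R+1)^(Fintype.card V - 1) := by
      omega
    rw [← hN] at hSle
    -- numeric contradiction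
    have hs_eq : (2*R)^2 * (2*R)^(N - 2) = 2^N * R^N := by
      rw [← pow_add]
      have h22 : 2 + (N-2) = N := by omega
      rw [h22, Nat.mul_pow]
    have hM8 : 4*(N+1)*R + 1 ≤ 8*(N+1)*R := by
      have hA : 1 ≤ (N+1)*R := Nat.mul_pos (by omega) hR1
      have h1' : 4*(N+1)*R = 4*((N+1)*R) := by ring
      have h2' : 8*(N+1)*R = 8*((N+1)*R) := by ring
      omega
    have hbd : N*N*(4*(N+1)*R+1)^(N-1) ≤ N*N*(8^(N-1)*(N+1)^(N-1)*R^(N-1)) := by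
      refine Nat.mul_le_mul_left _ ?_
      calc (4*(N+1)*R+1)^(N-1) ≤ (8*(N+1)*R)^(N-1) := Nat.pow_le_pow_left hM8 _
        _ = 8^(N-1)*(N+1)^(N-1)*R^(N-1) := by rw [Nat.mul_pow, Nat.mul_pow]
    have hfin : N*N*(8^(N-1)*(N+1)^(N-1)*R^(N-1)) < 2^N * R^N := by
      have hB : N*N*8^(N-1)*(N+1)^(N-1) < R := by
        rw [hR]
        have e8 : (8:ℕ)^(N-1) ≤ 8^N := Nat.pow_le_pow_right (by norm_num) (by omega)
        have en : (N+1)^(N-1) ≤ (N+1)^N := Nat.pow_le_pow_right (by omega) (by omega)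
        calc N*N*8^(N-1)*(N+1)^(N-1) ≤ N*N*8^N*(N+1)^N :=
              Nat.mul_le_mul (Nat.mul_le_mul_left _ e8) en
          _ < N*N*8^N*(N+1)^N + 1 := by omega
      have hRp : 1 ≤ R^(N-1) := Nat.one_le_pow _ _ hR1
      calc N*N*(8^(N-1)*(N+1)^(N-1)*R^(N-1)) = (N*N*8^(N-1)*(N+1)^(N-1)) * R^(N-1) := by ring
        _ < R * R^(N-1) := Nat.mul_lt_mul_of_lt_of_le hB (le_refl _) (by omega)
        _ = R^N := by rw [← pow_succ']; congr 1; omega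
        _ ≤ 2^N * R^N := Nat.le_mul_of_pos_left _ (pow_pos (by norm_num) N)
    omega
end

section
/- Let G be a simple graph on n vertices with chromatic number k. Then ε(G) ≥ n!/(k^{n−k}·k!). -/
/-- The maximal number of linear extensions of a poset induced by an acyclic
orientation of `G`, denoted `ε(G)` in the paper. -/
noncomputable def maxLinExt {V : Type*} [Fintype V] (G : SimpleGraph V) : ℕ :=
  sSup {k | ∃ O : GraphOrientation G, O.Acyclic ∧ k = O.numLinExt}

lemma multinomial_bound (k : ℕ) : ∀ n (m : Fin k → ℕ), (∑ i, m i) = n →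
    n.factorial ≤ k ^ (n - k) * k.factorial * ∏ i, (m i).factorial := by
  intro n
  induction n using Nat.strong_induction_on with
  | _ n ih =>
    intro m hm
    by_cases hnk : n ≤ k
    · rw [Nat.sub_eq_zero_of_le hnk, pow_zero, one_mul]
      calc n.factorial ≤ k.factorial := Nat.factorial_le hnk
        _ ≤ _ := Nat.le_mul_of_pos_right _ (Finset.prod_pos fun i _ => Nat.factorial_pos _)
    · push_neg at hnk
      have hk0 : 0 < k := by
        rcases Nat.eq_zero_or_pos k with h | h
        · subst h; simp at hm; omega
        · exact h
      obtain ⟨j, -, hj⟩ := Finset.exists_max_image Finset.univ m ⟨⟨0, hk0⟩, Finset.mem_univ _⟩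
      have hsum_le : n ≤ k * m j := by
        calc n = ∑ i, m i := hm.symm
          _ ≤ ∑ _i : Fin k, m j := Finset.sum_le_sum fun i _ => hj i (Finset.mem_univ i)
          _ = k * m j := by simp [Finset.sum_const, Finset.card_univ, mul_comm]
      have hmj : 1 ≤ m j := by nlinarith
      set m' := Function.update m j (m j - 1) with hm'def
      have hs1 : m j + ∑ i ∈ Finset.univ.erase j, m i = n := by
        rw [Finset.add_sum_erase _ _ (Finset.mem_univ j)]; exact hm
      have hs2 : ∑ i, m' i = (m j - 1) + ∑ i ∈ Finset.univ.erase j, m i := by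
        rw [← Finset.add_sum_erase _ _ (Finset.mem_univ j)]
        congr 1
        · simp [hm'def]
        · exact Finset.sum_congr rfl fun i hi => by
            simp [hm'def, Function.update_of_ne (Finset.ne_of_mem_erase hi)]
      have hm' : ∑ i, m' i = n - 1 := by omega
      have ihn : (n-1).factorial ≤ k ^ (n - 1 - k) * k.factorial * ∏ i, (m' i).factorial :=
        ih (n-1) (by omega) m' hm'
      have hprod : ∏ i, (m i).factorial = m j * ∏ i, (m' i).factorial := by
        have h1 : ∏ i, (m i).factorial
            = (m j).factorial * ∏ i ∈ Finset.univ.erase j, (m i).factorial :=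
          (Finset.mul_prod_erase _ _ (Finset.mem_univ j)).symm
        have h2 : ∏ i, (m' i).factorial
            = (m j - 1).factorial * ∏ i ∈ Finset.univ.erase j, (m i).factorial := by
          rw [← Finset.mul_prod_erase _ _ (Finset.mem_univ j)]
          congr 1
          · simp [hm'def]
          · exact Finset.prod_congr rfl fun i hi => by
              simp [hm'def, Function.update_of_ne (Finset.ne_of_mem_erase hi)]
        have h3 : (m j).factorial = m j * (m j - 1).factorial :=
          (Nat.mul_factorial_pred (by omega)).symm
        rw [h1, h2, h3]; ring
      have hpow : k ^ (n - k) = k * k ^ (n - 1 - k) := by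
        have h4 : n - k = (n - 1 - k) + 1 := by omega
        rw [h4, pow_succ]; ring
      calc n.factorial = n * (n-1).factorial := (Nat.mul_factorial_pred (by omega)).symm
        _ ≤ n * (k ^ (n - 1 - k) * k.factorial * ∏ i, (m' i).factorial) :=
            Nat.mul_le_mul_left n ihn
        _ ≤ (k * m j) * (k ^ (n - 1 - k) * k.factorial * ∏ i, (m' i).factorial) :=
            Nat.mul_le_mul_right _ hsum_le
        _ = k ^ (n - k) * k.factorial * (m j * ∏ i, (m' i).factorial) := by rw [hpow]; ring
        _ = k ^ (n - k) * k.factorial * ∏ i, (m i).factorial := by rw [hprod]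
theorem stmt_14 {V : Type*} [Fintype V] (G : SimpleGraph V) (k : ℕ)
    (hk : G.chromaticNumber = k) :
    (Nat.factorial (Fintype.card V) : ℝ) /
        ((k : ℝ) ^ (Fintype.card V - k) * (Nat.factorial k : ℝ)) ≤ maxLinExt G := by
  classical
  set n := Fintype.card V with hn
  obtain ⟨c⟩ : G.Colorable k := SimpleGraph.chromaticNumber_le_iff_colorable.mp (le_of_eq hk)
  -- a linear order on V refining the coloring
  let e : V ≃ Fin n := Fintype.equivFin V
  letI : LinearOrder V := LinearOrder.lift' (fun v => toLex ((c v, e v) : Fin k × Fin n))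
    (fun a b h => e.injective (congrArg (fun p => (ofLex p).2) h))
  let f₀ : Fin n ≃o V := monoEquivOfFin V hn.symm
  have hmono : ∀ u v : V, c u < c v → f₀.symm u < f₀.symm v := by
    intro u v huv
    apply f₀.symm.strictMono
    show toLex ((c u, e u) : Fin k × Fin n) < toLex ((c v, e v) : Fin k × Fin n)
    exact Prod.Lex.left _ _ huv
  -- the orientation by colors
  let O : GraphOrientation G :=
    { dir := fun u v => G.Adj u v ∧ c u < c v
      dir_adj := fun u v h => h.1
      adj_dir := fun u v h => by
        rcases lt_or_gt_of_ne (c.valid h) with h' | h'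
        · exact Or.inl ⟨h, h'⟩
        · exact Or.inr ⟨h.symm, h'⟩
      asymm := fun u v h h' => absurd h'.2 (not_lt.mpr (le_of_lt h.2)) }
  have hctrans : ∀ u v, Relation.TransGen O.dir u v → c u < c v := by
    intro u v h
    induction h with
    | single h => exact h.2
    | tail _ h ih => exact ih.trans h.2
  have hacy : O.Acyclic := fun v h => lt_irrefl _ (hctrans v v h)
  haveI : Finite O.LinExt := by
    unfold GraphOrientation.LinExt
    infer_instance
  -- inject color-preserving permutations into linear extensions
  let Φ : {g : Equiv.Perm V // c ∘ g = c} → O.LinExt := fun g =>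
    ⟨g.1.trans f₀.symm.toEquiv, by
      intro u v h
      have h1 : c u < c v := hctrans u v h
      have h2 : c (g.1 u) < c (g.1 v) := by
        have hu := congrFun g.2 u
        have hv := congrFun g.2 v
        simp only [Function.comp_apply] at hu hv
        rw [hu, hv]; exact h1
      exact hmono _ _ h2⟩
  have hΦ : Function.Injective Φ := by
    intro g g' hgg
    have h1 : g.1.trans f₀.symm.toEquiv = g'.1.trans f₀.symm.toEquiv :=
      congrArg Subtype.val hgg
    apply Subtype.ext
    apply Equiv.ext
    intro v
    have h2 := Equiv.congr_fun h1 v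
    exact f₀.symm.toEquiv.injective h2
  have hcard1 : Nat.card {g : Equiv.Perm V // c ∘ g = c} ≤ Nat.card O.LinExt :=
    Nat.card_le_card_of_injective Φ hΦ
  have hcard2 : Nat.card {g : Equiv.Perm V // c ∘ g = c}
      = ∏ i, (Fintype.card {v // c v = i}).factorial := by
    rw [Nat.card_eq_fintype_card]
    exact DomMulAct.stabilizer_card c
  have hsumfib : ∑ i, Fintype.card {v // c v = i} = n := by
    rw [hn, Fintype.card_congr (Equiv.sigmaFiberEquiv (c : V → Fin k)).symm,
      Fintype.card_sigma]
  have hmain : n.factorial ≤ k ^ (n - k) * k.factorial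
      * ∏ i, (Fintype.card {v // c v = i}).factorial :=
    multinomial_bound k n _ hsumfib
  -- numLinExt ≤ maxLinExt
  have hbdd : BddAbove {m | ∃ O' : GraphOrientation G, O'.Acyclic ∧ m = O'.numLinExt} := by
    refine ⟨n.factorial, fun x hx => ?_⟩
    obtain ⟨O', -, rfl⟩ := hx
    haveI : Finite O'.LinExt := by unfold GraphOrientation.LinExt; infer_instance
    have : Nat.card O'.LinExt ≤ Nat.card (V ≃ Fin n) :=
      Nat.card_le_card_of_injective (Subtype.val) Subtype.val_injective
    simpa [GraphOrientation.numLinExt, hn, Nat.card_eq_fintype_card, Fintype.card_equiv e] using this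
  have hle : O.numLinExt ≤ maxLinExt G :=
    le_csSup hbdd ⟨O, hacy, rfl⟩
  -- put it together
  have hnat : n.factorial ≤ (maxLinExt G) * (k ^ (n - k) * k.factorial) := by
    calc n.factorial ≤ k ^ (n - k) * k.factorial
          * ∏ i, (Fintype.card {v // c v = i}).factorial := hmain
      _ ≤ k ^ (n - k) * k.factorial * maxLinExt G := by
          apply Nat.mul_le_mul_left
          rw [← hcard2]
          exact hcard1.trans hle
      _ = (maxLinExt G) * (k ^ (n - k) * k.factorial) := by ring
  have hkpos : 0 < k ^ (n - k) := by
    rcases Nat.eq_zero_or_pos k with hk0 | hk0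
    · subst hk0
      haveI : IsEmpty V := ⟨fun v => (c v).elim0⟩
      simp [hn, Fintype.card_eq_zero]
    · exact pow_pos hk0 _
  have hD : (0:ℝ) < (k : ℝ) ^ (n - k) * (Nat.factorial k : ℝ) := by
    have := Nat.mul_pos hkpos (Nat.factorial_pos k)
    exact_mod_cast this
  rw [div_le_iff₀ hD]
  exact_mod_cast hnat
end

section
/- Let G = (V,E) be a connected simple graph with at least two vertices. Then ε(G) ≤ (1/2)·∑_{v∈V} ε(G \ v), where G \ v is the induced subgraph on V \ {v}. -/
section Aux

variable {V : Type*} [Fintype V] [DecidableEq V] {G : SimpleGraph V}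

instance linExtFinite (O : GraphOrientation G) : Finite O.LinExt := by
  unfold GraphOrientation.LinExt; infer_instance

/-- The restriction of an orientation to the subgraph induced by deleting `v`. -/
def GraphOrientation.del (O : GraphOrientation G) (v : V) :
    GraphOrientation (G.induce {x : V | x ≠ v}) where
  dir a b := O.dir a.1 b.1
  dir_adj a b h := O.dir_adj _ _ h
  adj_dir a b h := O.adj_dir _ _ h
  asymm a b h := O.asymm _ _ h

lemma GraphOrientation.del_acyclic (O : GraphOrientation G) (v : V) (hO : O.Acyclic) :
    (O.del v).Acyclic := by
  intro a ha
  exact hO a.1 (ha.lift Subtype.val (fun x y h => h))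

lemma bddAbove_linext (H : SimpleGraph V) :
    BddAbove {k | ∃ O : GraphOrientation H, O.Acyclic ∧ k = O.numLinExt} := by
  refine ⟨Nat.card (V ≃ Fin (Fintype.card V)), fun k hk => ?_⟩
  obtain ⟨O, _, rfl⟩ := hk
  exact Nat.card_le_card_of_injective (fun f : O.LinExt => f.1) (fun a b h => Subtype.ext h)

lemma le_maxLinExt {H : SimpleGraph V} (O : GraphOrientation H) (hO : O.Acyclic) :
    O.numLinExt ≤ maxLinExt H :=
  le_csSup (bddAbove_linext H) ⟨O, hO, rfl⟩

/-- Deleting a vertex from an equivalence to `Fin (m+1)`. -/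
def delEquiv {m : ℕ} (e : V ≃ Fin (m + 1)) (v : V) : {x : V | x ≠ v} ≃ Fin m :=
  (Equiv.subtypeEquiv e (fun x => by
    simpa using (e.injective.ne_iff (a := x) (b := v)).symm)).trans
    (finSuccAboveEquiv (e v)).symm

lemma delEquiv_succAbove {m : ℕ} (e : V ≃ Fin (m + 1)) (v : V) (x : {x : V | x ≠ v}) :
    (e v).succAbove (delEquiv e v x) = e x.1 := by
  have h := (finSuccAboveEquiv (e v)).apply_symm_apply
    ⟨e x.1, fun hc => x.2 (e.injective hc)⟩
  have : delEquiv e v x =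
      (finSuccAboveEquiv (e v)).symm ⟨e x.1, fun hc => x.2 (e.injective hc)⟩ := rfl
  rw [this]
  exact congrArg Subtype.val h

lemma delEquiv_lt_iff {m : ℕ} (e : V ≃ Fin (m + 1)) (v : V) (x y : {x : V | x ≠ v}) :
    delEquiv e v x < delEquiv e v y ↔ e x.1 < e y.1 := by
  rw [← Fin.succAbove_lt_succAbove_iff (p := e v), delEquiv_succAbove, delEquiv_succAbove]

end Aux

section Main

variable {V : Type*} [Fintype V] [DecidableEq V] {G : SimpleGraph V}

lemma card_del (v : V) (h : 1 ≤ Fintype.card V) :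
    Fintype.card V = Fintype.card {x : V | x ≠ v} + 1 := by
  have h1 : Fintype.card {x : V | x ≠ v} = Fintype.card {x : V // ¬ x = v} :=
    Fintype.card_congr (Equiv.subtypeEquivRight fun _ => Iff.rfl)
  rw [h1, Fintype.card_subtype_compl, Fintype.card_subtype_eq]
  omega

/-- The fiber of linear extensions with a prescribed value at `v` injects into
linear extensions of the deleted orientation. -/
lemma fiber_le (O : GraphOrientation G) (v : V) (c : Fin (Fintype.card V))
    (hc : 1 ≤ Fintype.card V) :
    Nat.card {f : O.LinExt // f.1 v = c} ≤ (O.del v).numLinExt := by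
  have hk : Fintype.card V = Fintype.card {x : V | x ≠ v} + 1 := card_del v hc
  set m := Fintype.card {x : V | x ≠ v} with hm
  -- the map
  have hmap : ∀ f : O.LinExt,
      ∀ u w : {x : V | x ≠ v}, Relation.TransGen (O.del v).dir u w →
        delEquiv (f.1.trans (finCongr hk)) v u < delEquiv (f.1.trans (finCongr hk)) v w := by
    intro f u w h
    rw [delEquiv_lt_iff]
    have := f.2 u.1 w.1 (h.lift Subtype.val (fun x y hh => hh))
    simp only [Equiv.trans_apply, Fin.lt_def, finCongr_apply, Fin.coe_cast]
    exact this
  let Φ : {f : O.LinExt // f.1 v = c} → (O.del v).LinExt :=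
    fun f => ⟨delEquiv (f.1.1.trans (finCongr hk)) v, hmap f.1⟩
  have hΦ : Function.Injective Φ := by
    intro f₁ f₂ hEq
    have hE : delEquiv (f₁.1.1.trans (finCongr hk)) v = delEquiv (f₂.1.1.trans (finCongr hk)) v :=
      congrArg Subtype.val hEq
    have hv : (f₁.1.1.trans (finCongr hk)) v = (f₂.1.1.trans (finCongr hk)) v := by
      rw [Equiv.trans_apply, Equiv.trans_apply, f₁.2, f₂.2]
    apply Subtype.ext; apply Subtype.ext; apply Equiv.ext
    intro x
    by_cases hx : x = v
    · subst hx; rw [f₁.2, f₂.2]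
    · have h1 := delEquiv_succAbove (f₁.1.1.trans (finCongr hk)) v ⟨x, hx⟩
      have h2 := delEquiv_succAbove (f₂.1.1.trans (finCongr hk)) v ⟨x, hx⟩
      have : (f₁.1.1.trans (finCongr hk)) x = (f₂.1.1.trans (finCongr hk)) x := by
        rw [← h1, ← h2, hE, hv]
      have := (finCongr hk).injective (by simpa [Equiv.trans_apply] using this)
      exact this
  exact Nat.card_le_card_of_injective Φ hΦ

lemma fiber_sum (O : GraphOrientation G) (c : Fin (Fintype.card V)) :
    O.numLinExt = ∑ v : V, Nat.card {f : O.LinExt // f.1 v = c} := by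
  classical
  haveI := Fintype.ofFinite O.LinExt
  have h1 : O.numLinExt = Fintype.card O.LinExt := Nat.card_eq_fintype_card
  rw [h1, ← Fintype.card_congr (Equiv.sigmaFiberEquiv (fun f : O.LinExt => f.1.symm c)),
    Fintype.card_sigma]
  refine Finset.sum_congr rfl fun v _ => ?_
  simp only [← Nat.card_eq_fintype_card]
  exact Nat.card_congr (Equiv.subtypeEquivRight fun f => by
    rw [Equiv.symm_apply_eq, eq_comm])

lemma two_mul_le (O : GraphOrientation G) (hO : O.Acyclic) (hconn : G.Connected)
    (hcard : 2 ≤ Fintype.card V) :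
    2 * O.numLinExt ≤ ∑ v : V, maxLinExt (G.induce {x : V | x ≠ v}) := by
  have hc1 : 1 ≤ Fintype.card V := by omega
  set c0 : Fin (Fintype.card V) := ⟨0, by omega⟩ with hc0
  set c1 : Fin (Fintype.card V) := ⟨Fintype.card V - 1, by omega⟩ with hc1'
  have key : ∀ v : V,
      Nat.card {f : O.LinExt // f.1 v = c0} + Nat.card {f : O.LinExt // f.1 v = c1}
        ≤ maxLinExt (G.induce {x : V | x ≠ v}) := by
    intro v
    -- v has a neighbour
    obtain ⟨w, hw⟩ : ∃ w, G.Adj v w := by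
      obtain ⟨u, hu⟩ := Fintype.exists_ne_of_one_lt_card (by omega) v
      obtain ⟨p⟩ := hconn.preconnected v u
      cases p with
      | nil => exact absurd rfl hu
      | cons h _ => exact ⟨_, h⟩
    have hzero : Nat.card {f : O.LinExt // f.1 v = c0} = 0 ∨
        Nat.card {f : O.LinExt // f.1 v = c1} = 0 := by
      by_contra hcon
      push_neg at hcon
      obtain ⟨fa⟩ := (Nat.card_ne_zero.mp hcon.1).1
      obtain ⟨fb⟩ := (Nat.card_ne_zero.mp hcon.2).1
      have hvw : O.dir v w := by
        rcases O.adj_dir v w hw with h | h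
        · exact h
        · have := fa.1.2 w v (Relation.TransGen.single h)
          rw [fa.2] at this
          exact absurd this (by simp [hc0, Fin.lt_def])
      have := fb.1.2 v w (Relation.TransGen.single hvw)
      rw [fb.2] at this
      have hlt := (fb.1.1 w).isLt
      rw [Fin.lt_def] at this
      simp only [hc1'] at this
      omega
    have hA := (fiber_le O v c0 hc1).trans
      (le_maxLinExt (O.del v) (O.del_acyclic v hO))
    have hB := (fiber_le O v c1 hc1).trans
      (le_maxLinExt (O.del v) (O.del_acyclic v hO))
    rcases hzero with h | h <;> omega
  calc 2 * O.numLinExt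
      = (∑ v : V, Nat.card {f : O.LinExt // f.1 v = c0})
        + ∑ v : V, Nat.card {f : O.LinExt // f.1 v = c1} := by
        rw [← fiber_sum O c0, ← fiber_sum O c1]; ring
    _ = ∑ v : V, (Nat.card {f : O.LinExt // f.1 v = c0}
        + Nat.card {f : O.LinExt // f.1 v = c1}) := by rw [Finset.sum_add_distrib]
    _ ≤ ∑ v : V, maxLinExt (G.induce {x : V | x ≠ v}) := Finset.sum_le_sum fun v _ => key v

end Main

theorem stmt_15 {V : Type*} [Fintype V] [DecidableEq V] (G : SimpleGraph V)
    (hconn : G.Connected) (hcard : 2 ≤ Fintype.card V) :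
    (maxLinExt G : ℝ) ≤
      (1 / 2) * ∑ v : V, (maxLinExt (G.induce {x : V | x ≠ v}) : ℝ) := by
  set T := ∑ v : V, maxLinExt (G.induce {x : V | x ≠ v}) with hT
  have h : 2 * maxLinExt G ≤ T := by
    have hsup : maxLinExt G ≤ T / 2 := by
      refine csSup_le' fun k hk => ?_
      obtain ⟨O, hO, rfl⟩ := hk
      exact (Nat.le_div_iff_mul_le (by norm_num)).2
        (by rw [mul_comm]; exact two_mul_le O hO hconn hcard)
    calc 2 * maxLinExt G ≤ 2 * (T / 2) := by omega
      _ ≤ T := by omega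
  have h' : (2 * maxLinExt G : ℝ) ≤ (T : ℝ) := by exact_mod_cast h
  rw [hT] at h'
  push_cast at h'
  linarith
end
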